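/- arXiv:1506.04134 — 6 statements merged into one kernel-verified Lean document; each statement's English description precedes it below -/
import Mathlib

section
/- Let Φ be an Orlicz function satisfying the Δ₂-condition, let X̄ = (X₀,X₁) and Ȳ = (Y₀,Y₁) be compatible couples of Banach spaces such that Y₀ and Y₁ are intermediate spaces of X̄, and let 0 ≤ θ₀ < θ₁ ≤ 1. Assume that Yᵢ belongs to the class C_K(θᵢ, X̄) with constant Cᵢ for i = 0,1. Then there exists a constant C, depending only on Φ, θ₀, θ₁, C₀ and C₁, such that for every y ∈ Σ(Ȳ), ∫₀^∞ Φ(t⁻¹ K(t, y; X̄)) dt ≤ C ∫₀^∞ Φ(t^{−1+θ₀} K(t^{θ₁−θ₀}, y; Ȳ)) dt (the inequality holding in [0,∞]). -/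
open MeasureTheory Filter Set

/-- An Orlicz function: continuous, increasing and convex on `[0,∞)`, vanishing at `0`,
and tending to `∞` at `∞`. -/
structure IsOrliczFunction (Φ : ℝ → ℝ) : Prop where
  map_zero : Φ 0 = 0
  continuousOn : ContinuousOn Φ (Set.Ici 0)
  monotoneOn : MonotoneOn Φ (Set.Ici 0)
  convexOn : ConvexOn ℝ (Set.Ici 0) Φ
  tendsto_atTop : Filter.Tendsto Φ Filter.atTop Filter.atTop

/-- The `Δ₂`-condition: `Φ(2t) ≤ C Φ(t)` for all `t ≥ 0` and some constant `C > 0`. -/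
def Delta2 (Φ : ℝ → ℝ) : Prop :=
  ∃ C : ℝ, 0 < C ∧ ∀ t : ℝ, 0 ≤ t → Φ (2 * t) ≤ C * Φ t
section Couple

variable {E : Type*} [AddCommGroup E] [Module ℝ E] [TopologicalSpace E]
variable {X₀ X₁ Z : Type*}
variable [NormedAddCommGroup X₀] [NormedSpace ℝ X₀]
variable [NormedAddCommGroup X₁] [NormedSpace ℝ X₁]
variable [NormedAddCommGroup Z] [NormedSpace ℝ Z]

/-- `x` belongs to the sum `X₀ + X₁` of the couple (embedded in `E` via `i₀, i₁`). -/
def InSigma (i₀ : X₀ →L[ℝ] E) (i₁ : X₁ →L[ℝ] E) (x : E) : Prop :=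
  ∃ a b, x = i₀ a + i₁ b

/-- `x` belongs to the intersection `X₀ ∩ X₁` of the couple. -/
def InDelta (i₀ : X₀ →L[ℝ] E) (i₁ : X₁ →L[ℝ] E) (x : E) : Prop :=
  ∃ a b, i₀ a = x ∧ i₁ b = x

/-- The K-functional of the couple: `K(t,x) = inf {‖a‖ + t‖b‖ : x = a + b}`. -/
noncomputable def Kfun (i₀ : X₀ →L[ℝ] E) (i₁ : X₁ →L[ℝ] E) (t : ℝ) (x : E) : ℝ :=
  sInf {r : ℝ | ∃ a b, x = i₀ a + i₁ b ∧ r = ‖a‖ + t * ‖b‖}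

/-- The J-functional of the couple: `J(t,x) = max (‖x‖_{X₀}, t‖x‖_{X₁})` for `x ∈ Δ`. -/
noncomputable def Jfun (i₀ : X₀ →L[ℝ] E) (i₁ : X₁ →L[ℝ] E) (t : ℝ) (x : E) : ℝ :=
  sInf {r : ℝ | ∃ a b, i₀ a = x ∧ i₁ b = x ∧ r = max ‖a‖ (t * ‖b‖)}

/-- `Z` (embedded in `E` via `j`) is an intermediate space of the couple `(X₀, X₁)`:
the inclusions `Δ ⊆ Z ⊆ Σ` are continuous (`‖·‖_Δ = J(1,·)` and `‖·‖_Σ = K(1,·)`). -/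
def IsIntermediate (i₀ : X₀ →L[ℝ] E) (i₁ : X₁ →L[ℝ] E) (j : Z →L[ℝ] E) : Prop :=
  (∃ c : ℝ, 0 < c ∧ ∀ x : E, InDelta i₀ i₁ x →
      ∃ z : Z, j z = x ∧ ‖z‖ ≤ c * Jfun i₀ i₁ 1 x) ∧
  (∃ c : ℝ, 0 < c ∧ ∀ z : Z, InSigma i₀ i₁ (j z) ∧ Kfun i₀ i₁ 1 (j z) ≤ c * ‖z‖)

/-- `Z` belongs to the class `C_K(θ, (X₀,X₁))` with constant `C`. -/
def ClassCK (i₀ : X₀ →L[ℝ] E) (i₁ : X₁ →L[ℝ] E) (j : Z →L[ℝ] E) (θ C : ℝ) : Prop :=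
  ∀ z : Z, ∀ t : ℝ, 0 < t → Kfun i₀ i₁ t (j z) ≤ C * t ^ θ * ‖z‖

/-- `Z` belongs to the class `C_J(θ, (X₀,X₁))` with constant `C`. -/
def ClassCJ (i₀ : X₀ →L[ℝ] E) (i₁ : X₁ →L[ℝ] E) (j : Z →L[ℝ] E) (θ C : ℝ) : Prop :=
  ∀ z : Z, InDelta i₀ i₁ (j z) → ∀ t : ℝ, 0 < t →
    ‖z‖ ≤ C * t ^ (-θ) * Jfun i₀ i₁ t (j z)

end Couple

private lemma delta2_pow {Φ : ℝ → ℝ} (hmono : MonotoneOn Φ (Set.Ici 0)) {C : ℝ} (hC : 0 < C)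
    (h : ∀ t : ℝ, 0 ≤ t → Φ (2 * t) ≤ C * Φ t) :
    ∀ (k : ℕ) (u : ℝ), 0 ≤ u → Φ (2 ^ k * u) ≤ C ^ k * Φ u := by
  intro k
  induction k with
  | zero => intro u hu; simp
  | succ n ih =>
    intro u hu
    have h2 : (2:ℝ) ^ (n+1) * u = 2 * (2 ^ n * u) := by ring
    rw [h2]
    calc Φ (2 * (2 ^ n * u)) ≤ C * Φ (2 ^ n * u) := h _ (by positivity)
      _ ≤ C * (C ^ n * Φ u) := mul_le_mul_of_nonneg_left (ih u hu) hC.le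
      _ = C ^ (n+1) * Φ u := by ring

/-- Φ-moment comparison of K-functionals under `C_K` class hypotheses. -/
theorem statement0 (Φ : ℝ → ℝ) (hΦ : IsOrliczFunction Φ) (hΔ₂ : Delta2 Φ)
    (θ₀ θ₁ C₀ C₁ : ℝ) (hθ₀ : 0 ≤ θ₀) (hθ₀₁ : θ₀ < θ₁) (hθ₁ : θ₁ ≤ 1) :
    ∃ C : ℝ, 0 < C ∧
      ∀ (E : Type*) [AddCommGroup E] [Module ℝ E] [TopologicalSpace E] [T2Space E]
        (X₀ X₁ Y₀ Y₁ : Type*)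
        [NormedAddCommGroup X₀] [NormedSpace ℝ X₀] [CompleteSpace X₀]
        [NormedAddCommGroup X₁] [NormedSpace ℝ X₁] [CompleteSpace X₁]
        [NormedAddCommGroup Y₀] [NormedSpace ℝ Y₀] [CompleteSpace Y₀]
        [NormedAddCommGroup Y₁] [NormedSpace ℝ Y₁] [CompleteSpace Y₁]
        (i₀ : X₀ →L[ℝ] E) (i₁ : X₁ →L[ℝ] E) (j₀ : Y₀ →L[ℝ] E) (j₁ : Y₁ →L[ℝ] E),
        Function.Injective ⇑i₀ → Function.Injective ⇑i₁ →
        Function.Injective ⇑j₀ → Function.Injective ⇑j₁ →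
        IsIntermediate i₀ i₁ j₀ → IsIntermediate i₀ i₁ j₁ →
        ClassCK i₀ i₁ j₀ θ₀ C₀ → ClassCK i₀ i₁ j₁ θ₁ C₁ →
        ∀ y : E, InSigma j₀ j₁ y →
          (∫⁻ t in Set.Ioi (0:ℝ), ENNReal.ofReal (Φ (t⁻¹ * Kfun i₀ i₁ t y))) ≤
            ENNReal.ofReal C *
              ∫⁻ t in Set.Ioi (0:ℝ),
                ENNReal.ofReal (Φ (t ^ (θ₀ - 1) * Kfun j₀ j₁ (t ^ (θ₁ - θ₀)) y)) := by
  obtain ⟨CΔ, hCΔ, hΔ⟩ := hΔ₂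
  set M : ℝ := max (max C₀ C₁) 1 with hMdef
  have hM1 : (1:ℝ) ≤ M := le_max_right _ _
  have hM0 : (0:ℝ) < M := lt_of_lt_of_le one_pos hM1
  have hC₀M : C₀ ≤ M := le_trans (le_max_left _ _) (le_max_left _ _)
  have hC₁M : C₁ ≤ M := le_trans (le_max_right _ _) (le_max_left _ _)
  obtain ⟨k, hk⟩ : ∃ k : ℕ, M < 2 ^ k := pow_unbounded_of_one_lt M one_lt_two
  refine ⟨CΔ ^ k, pow_pos hCΔ k, ?_⟩
  intro E _ _ _ _ X₀ X₁ Y₀ Y₁ _ _ _ _ _ _ _ _ _ _ _ _ i₀ i₁ j₀ j₁ _ _ _ _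
    hInt₀ hInt₁ hCK₀ hCK₁ y hy
  have hΦnn : ∀ u : ℝ, 0 ≤ u → 0 ≤ Φ u := fun u hu => by
    have := hΦ.monotoneOn (Set.self_mem_Ici) hu hu
    rwa [hΦ.map_zero] at this
  have key : ∀ t ∈ Set.Ioi (0:ℝ),
      ENNReal.ofReal (Φ (t⁻¹ * Kfun i₀ i₁ t y)) ≤
        ENNReal.ofReal (CΔ ^ k) *
          ENNReal.ofReal (Φ (t ^ (θ₀ - 1) * Kfun j₀ j₁ (t ^ (θ₁ - θ₀)) y)) := by
    intro t ht
    rw [Set.mem_Ioi] at ht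
    set s : ℝ := t ^ (θ₁ - θ₀) with hsdef
    have hs : 0 < s := Real.rpow_pos_of_pos ht _
    have htθ₀ : (0:ℝ) < t ^ θ₀ := Real.rpow_pos_of_pos ht _
    have hKXnn : 0 ≤ Kfun i₀ i₁ t y := Real.sInf_nonneg (by
      rintro r ⟨a, b, -, rfl⟩; positivity)
    have hKYnn : 0 ≤ Kfun j₀ j₁ s y := Real.sInf_nonneg (by
      rintro r ⟨a, b, -, rfl⟩; positivity)
    -- Step 1: K_X(t,y) ≤ M t^θ₀ K_Y(s,y)
    have h1 : Kfun i₀ i₁ t y ≤ M * t ^ θ₀ * Kfun j₀ j₁ s y := by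
      obtain ⟨A, B, hyAB⟩ := hy
      have hpos : (0:ℝ) < M * t ^ θ₀ := by positivity
      rw [← div_le_iff₀' hpos]
      show Kfun i₀ i₁ t y / (M * t ^ θ₀) ≤
        sInf {r : ℝ | ∃ a b, y = j₀ a + j₁ b ∧ r = ‖a‖ + s * ‖b‖}
      have hSne : ({r : ℝ | ∃ a b, y = j₀ a + j₁ b ∧ r = ‖a‖ + s * ‖b‖} : Set ℝ).Nonempty :=
        ⟨‖A‖ + s * ‖B‖, A, B, hyAB, rfl⟩
      apply le_csInf hSne
      rintro r ⟨a, b, hy', rfl⟩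
      rw [div_le_iff₀' hpos]
      -- K_X(t,y) ≤ M t^θ₀ (‖a‖ + s‖b‖)
      apply le_of_forall_pos_le_add
      intro ε hε
      obtain ⟨c₀, -, hc₀⟩ := hInt₀.2
      obtain ⟨c₁, -, hc₁⟩ := hInt₁.2
      obtain ⟨p, q, hpq⟩ := (hc₀ a).1
      obtain ⟨p', q', hpq'⟩ := (hc₁ b).1
      have hS₀ne : {r : ℝ | ∃ u v, j₀ a = i₀ u + i₁ v ∧ r = ‖u‖ + t * ‖v‖}.Nonempty :=
        ⟨‖p‖ + t * ‖q‖, p, q, hpq, rfl⟩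
      have hS₁ne : {r : ℝ | ∃ u v, j₁ b = i₀ u + i₁ v ∧ r = ‖u‖ + t * ‖v‖}.Nonempty :=
        ⟨‖p'‖ + t * ‖q'‖, p', q', hpq', rfl⟩
      obtain ⟨r₀, ⟨a₀, a₁, hadec, rfl⟩, hr₀⟩ := Real.lt_sInf_add_pos hS₀ne (half_pos hε)
      obtain ⟨r₁, ⟨b₀, b₁, hbdec, rfl⟩, hr₁⟩ := Real.lt_sInf_add_pos hS₁ne (half_pos hε)
      have hr₀' : ‖a₀‖ + t * ‖a₁‖ < Kfun i₀ i₁ t (j₀ a) + ε / 2 := hr₀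
      have hr₁' : ‖b₀‖ + t * ‖b₁‖ < Kfun i₀ i₁ t (j₁ b) + ε / 2 := hr₁
      have hKa : Kfun i₀ i₁ t (j₀ a) ≤ C₀ * t ^ θ₀ * ‖a‖ := hCK₀ a t ht
      have hKb : Kfun i₀ i₁ t (j₁ b) ≤ C₁ * t ^ θ₁ * ‖b‖ := hCK₁ b t ht
      have hmem : Kfun i₀ i₁ t y ≤ ‖a₀ + b₀‖ + t * ‖a₁ + b₁‖ := by
        apply csInf_le ⟨0, by rintro r ⟨u, v, -, rfl⟩; positivity⟩
        exact ⟨a₀ + b₀, a₁ + b₁, by rw [hy', hadec, hbdec, map_add, map_add]; abel, rfl⟩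
      have hnorm : ‖a₀ + b₀‖ + t * ‖a₁ + b₁‖ ≤
          (‖a₀‖ + t * ‖a₁‖) + (‖b₀‖ + t * ‖b₁‖) := by
        have h₁ := norm_add_le a₀ b₀
        have h₂ := norm_add_le a₁ b₁
        nlinarith [ht.le]
      have hts : t ^ θ₁ = t ^ θ₀ * s := by
        rw [hsdef, ← Real.rpow_add ht]; ring_nf
      have hfin : C₀ * t ^ θ₀ * ‖a‖ + C₁ * t ^ θ₁ * ‖b‖ ≤
          M * t ^ θ₀ * (‖a‖ + s * ‖b‖) := by
        rw [hts]
        have hna : (0:ℝ) ≤ ‖a‖ := norm_nonneg _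
        have hnb : (0:ℝ) ≤ ‖b‖ := norm_nonneg _
        nlinarith [mul_nonneg htθ₀.le hna, mul_nonneg (mul_nonneg htθ₀.le hs.le) hnb]
      calc Kfun i₀ i₁ t y ≤ ‖a₀ + b₀‖ + t * ‖a₁ + b₁‖ := hmem
        _ ≤ (‖a₀‖ + t * ‖a₁‖) + (‖b₀‖ + t * ‖b₁‖) := hnorm
        _ ≤ (Kfun i₀ i₁ t (j₀ a) + ε / 2) + (Kfun i₀ i₁ t (j₁ b) + ε / 2) := by
            linarith [hr₀'.le, hr₁'.le]
        _ ≤ (C₀ * t ^ θ₀ * ‖a‖ + ε / 2) + (C₁ * t ^ θ₁ * ‖b‖ + ε / 2) := by linarith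
        _ ≤ M * t ^ θ₀ * (‖a‖ + s * ‖b‖) + ε := by linarith
    set u : ℝ := t ^ (θ₀ - 1) * Kfun j₀ j₁ s y with hudef
    have hu : 0 ≤ u := mul_nonneg (Real.rpow_nonneg ht.le _) hKYnn
    have h2 : t⁻¹ * Kfun i₀ i₁ t y ≤ 2 ^ k * u := by
      have htinv : (0:ℝ) ≤ t⁻¹ := inv_nonneg.2 ht.le
      have hrw : t ^ (θ₀ - 1) = t⁻¹ * t ^ θ₀ := by
        rw [Real.rpow_sub ht, Real.rpow_one, div_eq_inv_mul]
      have : t⁻¹ * Kfun i₀ i₁ t y ≤ t⁻¹ * (M * t ^ θ₀ * Kfun j₀ j₁ s y) :=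
        mul_le_mul_of_nonneg_left h1 htinv
      have hMu : t⁻¹ * (M * t ^ θ₀ * Kfun j₀ j₁ s y) = M * u := by
        rw [hudef, hrw]; ring
      rw [hMu] at this
      refine this.trans ?_
      exact mul_le_mul_of_nonneg_right hk.le hu
    have h3 : Φ (t⁻¹ * Kfun i₀ i₁ t y) ≤ CΔ ^ k * Φ u := by
      have hx0 : (0:ℝ) ≤ t⁻¹ * Kfun i₀ i₁ t y := mul_nonneg (inv_nonneg.2 ht.le) hKXnn
      have h2u : (0:ℝ) ≤ 2 ^ k * u := by positivity
      calc Φ (t⁻¹ * Kfun i₀ i₁ t y) ≤ Φ (2 ^ k * u) := hΦ.monotoneOn hx0 h2u h2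
        _ ≤ CΔ ^ k * Φ u := delta2_pow hΦ.monotoneOn hCΔ hΔ k u hu
    calc ENNReal.ofReal (Φ (t⁻¹ * Kfun i₀ i₁ t y)) ≤ ENNReal.ofReal (CΔ ^ k * Φ u) :=
          ENNReal.ofReal_le_ofReal h3
      _ = ENNReal.ofReal (CΔ ^ k) * ENNReal.ofReal (Φ u) :=
          ENNReal.ofReal_mul (by positivity)
  calc (∫⁻ t in Set.Ioi (0:ℝ), ENNReal.ofReal (Φ (t⁻¹ * Kfun i₀ i₁ t y))) ≤
      ∫⁻ t in Set.Ioi (0:ℝ), ENNReal.ofReal (CΔ ^ k) *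
        ENNReal.ofReal (Φ (t ^ (θ₀ - 1) * Kfun j₀ j₁ (t ^ (θ₁ - θ₀)) y)) :=
        setLIntegral_mono' measurableSet_Ioi key
    _ = ENNReal.ofReal (CΔ ^ k) *
        ∫⁻ t in Set.Ioi (0:ℝ),
          ENNReal.ofReal (Φ (t ^ (θ₀ - 1) * Kfun j₀ j₁ (t ^ (θ₁ - θ₀)) y)) :=
        lintegral_const_mul' _ _ ENNReal.ofReal_ne_top
end

section
/- Let X̄ = (X₀,X₁) and Ȳ = (Y₀,Y₁) be compatible couples of Banach spaces such that Y₀ and Y₁ are intermediate spaces of X̄, and let 0 ≤ θ₀ < θ₁ ≤ 1. Assume that Yᵢ belongs to the class C_K(θᵢ, X̄) with constant Cᵢ for i = 0,1. Then for every y ∈ Σ(Ȳ) and every t > 0, K(t, y; X̄) ≤ max(C₀, C₁) · t^{θ₀} · K(t^{θ₁−θ₀}, y; Ȳ). -/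
open MeasureTheory Filter Set

section Helpers

variable {E : Type*} [AddCommGroup E] [Module ℝ E] [TopologicalSpace E]
variable {X₀ X₁ : Type*}
variable [NormedAddCommGroup X₀] [NormedSpace ℝ X₀]
variable [NormedAddCommGroup X₁] [NormedSpace ℝ X₁]

lemma Kset_bddBelow (i₀ : X₀ →L[ℝ] E) (i₁ : X₁ →L[ℝ] E) {t : ℝ} (ht : 0 ≤ t) (x : E) :
    BddBelow {r : ℝ | ∃ a b, x = i₀ a + i₁ b ∧ r = ‖a‖ + t * ‖b‖} := by
  refine ⟨0, ?_⟩
  rintro r ⟨a, b, -, rfl⟩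
  positivity

lemma Kfun_le (i₀ : X₀ →L[ℝ] E) (i₁ : X₁ →L[ℝ] E) {t : ℝ} (ht : 0 ≤ t) {x : E}
    (a : X₀) (b : X₁) (h : x = i₀ a + i₁ b) :
    Kfun i₀ i₁ t x ≤ ‖a‖ + t * ‖b‖ :=
  csInf_le (Kset_bddBelow i₀ i₁ ht x) ⟨a, b, h, rfl⟩

lemma Kfun_nonneg (i₀ : X₀ →L[ℝ] E) (i₁ : X₁ →L[ℝ] E) {t : ℝ} (ht : 0 ≤ t) (x : E) :
    0 ≤ Kfun i₀ i₁ t x := by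
  apply Real.sInf_nonneg
  rintro r ⟨a, b, -, rfl⟩
  positivity

lemma Kfun_add (i₀ : X₀ →L[ℝ] E) (i₁ : X₁ →L[ℝ] E) {t : ℝ} (ht : 0 ≤ t) {u v : E}
    (hu : InSigma i₀ i₁ u) (hv : InSigma i₀ i₁ v) :
    Kfun i₀ i₁ t (u + v) ≤ Kfun i₀ i₁ t u + Kfun i₀ i₁ t v := by
  refine le_of_forall_pos_le_add fun ε hε => ?_
  obtain ⟨au, bu, hu'⟩ := hu
  obtain ⟨av, bv, hv'⟩ := hv
  obtain ⟨ru, ⟨a₀, b₀, hu₀, rfl⟩, hru⟩ :=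
    Real.lt_sInf_add_pos (s := {r : ℝ | ∃ a b, u = i₀ a + i₁ b ∧ r = ‖a‖ + t * ‖b‖})
      ⟨_, au, bu, hu', rfl⟩ (half_pos hε)
  obtain ⟨rv, ⟨a₁, b₁, hv₁, rfl⟩, hrv⟩ :=
    Real.lt_sInf_add_pos (s := {r : ℝ | ∃ a b, v = i₀ a + i₁ b ∧ r = ‖a‖ + t * ‖b‖})
      ⟨_, av, bv, hv', rfl⟩ (half_pos hε)
  have hdec : u + v = i₀ (a₀ + a₁) + i₁ (b₀ + b₁) := by
    rw [hu₀, hv₁, map_add, map_add]; abel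
  have h1 : Kfun i₀ i₁ t (u + v) ≤ ‖a₀ + a₁‖ + t * ‖b₀ + b₁‖ :=
    Kfun_le i₀ i₁ ht _ _ hdec
  have h2 : ‖a₀ + a₁‖ ≤ ‖a₀‖ + ‖a₁‖ := norm_add_le _ _
  have h3 : ‖b₀ + b₁‖ ≤ ‖b₀‖ + ‖b₁‖ := norm_add_le _ _
  have h4 : t * ‖b₀ + b₁‖ ≤ t * (‖b₀‖ + ‖b₁‖) := mul_le_mul_of_nonneg_left h3 ht
  rw [mul_add] at h4
  unfold Kfun at *
  linarith

end Helpers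

/-- if `Y₀ ∈ C_K(θ₀, X̄)` with constant `C₀` and `Y₁ ∈ C_K(θ₁, X̄)` with
constant `C₁`, then for `y ∈ Σ(Ȳ)` and `t > 0` one has
`K(t, y; X̄) ≤ max C₀ C₁ * t ^ θ₀ * K(t ^ (θ₁ - θ₀), y; Ȳ)`. -/
theorem statement1
    {E : Type*} [AddCommGroup E] [Module ℝ E] [TopologicalSpace E] [T2Space E]
    {X₀ X₁ Y₀ Y₁ : Type*}
    [NormedAddCommGroup X₀] [NormedSpace ℝ X₀] [CompleteSpace X₀]
    [NormedAddCommGroup X₁] [NormedSpace ℝ X₁] [CompleteSpace X₁]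
    [NormedAddCommGroup Y₀] [NormedSpace ℝ Y₀] [CompleteSpace Y₀]
    [NormedAddCommGroup Y₁] [NormedSpace ℝ Y₁] [CompleteSpace Y₁]
    (i₀ : X₀ →L[ℝ] E) (i₁ : X₁ →L[ℝ] E) (j₀ : Y₀ →L[ℝ] E) (j₁ : Y₁ →L[ℝ] E)
    (hi₀ : Function.Injective ⇑i₀) (hi₁ : Function.Injective ⇑i₁)
    (hj₀ : Function.Injective ⇑j₀) (hj₁ : Function.Injective ⇑j₁)
    (hY₀ : IsIntermediate i₀ i₁ j₀) (hY₁ : IsIntermediate i₀ i₁ j₁)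
    (θ₀ θ₁ C₀ C₁ : ℝ) (hθ₀ : 0 ≤ θ₀) (hθ₀₁ : θ₀ < θ₁) (hθ₁ : θ₁ ≤ 1)
    (hCK₀ : ClassCK i₀ i₁ j₀ θ₀ C₀) (hCK₁ : ClassCK i₀ i₁ j₁ θ₁ C₁)
    (y : E) (hy : InSigma j₀ j₁ y) (t : ℝ) (ht : 0 < t) :
    Kfun i₀ i₁ t y ≤ max C₀ C₁ * t ^ θ₀ * Kfun j₀ j₁ (t ^ (θ₁ - θ₀)) y := by
  set s : ℝ := t ^ (θ₁ - θ₀) with hs_def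
  have hs : 0 < s := Real.rpow_pos_of_pos ht _
  set M : ℝ := max C₀ C₁ * t ^ θ₀ with hM_def
  have htθ : (0:ℝ) < t ^ θ₀ := Real.rpow_pos_of_pos ht _
  obtain ⟨c₀, hc₀, hSig₀⟩ := hY₀.2
  obtain ⟨c₁, hc₁, hSig₁⟩ := hY₁.2
  set S : Set ℝ := {r : ℝ | ∃ a b, y = j₀ a + j₁ b ∧ r = ‖a‖ + s * ‖b‖} with hS_def
  have key : ∀ r ∈ S, Kfun i₀ i₁ t y ≤ M * r := by
    rintro r ⟨a, b, hy', rfl⟩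
    have h1 : Kfun i₀ i₁ t y ≤ Kfun i₀ i₁ t (j₀ a) + Kfun i₀ i₁ t (j₁ b) := by
      rw [hy']; exact Kfun_add i₀ i₁ ht.le (hSig₀ a).1 (hSig₁ b).1
    have h2 := hCK₀ a t ht
    have h3 := hCK₁ b t ht
    have ht₁ : t ^ θ₁ = t ^ θ₀ * s := by
      rw [hs_def, ← Real.rpow_add ht]; ring_nf
    rw [ht₁] at h3
    have h4 : C₀ * t ^ θ₀ * ‖a‖ ≤ M * ‖a‖ :=
      mul_le_mul_of_nonneg_right
        (mul_le_mul_of_nonneg_right (le_max_left _ _) htθ.le) (norm_nonneg _)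
    have h5 : C₁ * (t ^ θ₀ * s) * ‖b‖ ≤ M * (s * ‖b‖) := by
      have : C₁ * (t ^ θ₀ * s) ≤ max C₀ C₁ * (t ^ θ₀ * s) :=
        mul_le_mul_of_nonneg_right (le_max_right _ _) (by positivity)
      calc C₁ * (t ^ θ₀ * s) * ‖b‖ ≤ max C₀ C₁ * (t ^ θ₀ * s) * ‖b‖ :=
            mul_le_mul_of_nonneg_right this (norm_nonneg _)
        _ = M * (s * ‖b‖) := by rw [hM_def]; ring
    calc Kfun i₀ i₁ t y ≤ Kfun i₀ i₁ t (j₀ a) + Kfun i₀ i₁ t (j₁ b) := h1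
      _ ≤ C₀ * t ^ θ₀ * ‖a‖ + C₁ * (t ^ θ₀ * s) * ‖b‖ := add_le_add h2 h3
      _ ≤ M * ‖a‖ + M * (s * ‖b‖) := add_le_add h4 h5
      _ = M * (‖a‖ + s * ‖b‖) := by ring
  obtain ⟨a, b, hy'⟩ := hy
  have hr₀S : (‖a‖ + s * ‖b‖) ∈ S := ⟨a, b, hy', rfl⟩
  have hSne : S.Nonempty := ⟨_, hr₀S⟩
  have hSbdd : BddBelow S := by
    refine ⟨0, ?_⟩; rintro r ⟨a, b, -, rfl⟩; positivity
  have hSnn : 0 ≤ sInf S := by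
    apply Real.sInf_nonneg; rintro r ⟨a, b, -, rfl⟩; positivity
  have hK0 : 0 ≤ Kfun i₀ i₁ t y := Kfun_nonneg i₀ i₁ ht.le y
  have hgoal : Kfun j₀ j₁ s y = sInf S := rfl
  rw [hgoal]
  rcases lt_or_ge M 0 with hM | hM
  · -- M < 0 : every element of S must be 0
    have hr₀ : ‖a‖ + s * ‖b‖ = 0 := by
      have h1 := key _ hr₀S
      have h2 : 0 ≤ ‖a‖ + s * ‖b‖ := by positivity
      nlinarith
    have hS0 : sInf S ≤ 0 := by
      have := csInf_le hSbdd hr₀S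
      linarith
    have hK : Kfun i₀ i₁ t y ≤ 0 := by
      have := key _ hr₀S; rw [hr₀] at this; linarith
    nlinarith
  · rcases eq_or_lt_of_le hM with hM0 | hM0
    · have := key _ hr₀S
      rw [← hM0] at this ⊢
      simpa using this
    · by_contra hcon
      push_neg at hcon
      have hlt : sInf S < Kfun i₀ i₁ t y / M := by
        rw [lt_div_iff₀ hM0]; linarith [mul_comm M (sInf S)]
      obtain ⟨r, hrS, hr⟩ := exists_lt_of_csInf_lt hSne hlt
      have := key r hrS
      rw [lt_div_iff₀ hM0] at hr
      nlinarith
end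

section
/- Let Φ be an Orlicz function satisfying the Δ₂-condition, let X̄ = (X₀,X₁) and Ȳ = (Y₀,Y₁) be compatible couples of Banach spaces such that Y₀ and Y₁ are intermediate spaces of X̄, and let 0 ≤ θ₀ < θ₁ ≤ 1. Assume that Yᵢ belongs to the class C_J(θᵢ, X̄) with constant Cᵢ for i = 0,1. Let y ∈ Δ(Ȳ) and let u : (0,∞) → Δ(X̄) be a representation of y with respect to the couple X̄ which is also a representation of y with respect to the couple Ȳ (in particular u(t) ∈ Δ(X̄) ∩ Δ(Ȳ) for all t > 0). Then there exists a constant C, depending only on Φ, θ₀, θ₁, C₀ and C₁, such that ∫₀^∞ Φ(t^{−1+θ₀} J(t^{θ₁−θ₀}, u(t); Ȳ)) dt ≤ C ∫₀^∞ Φ(t⁻¹ J(t, u(t); X̄)) dt (the inequality holding in [0,∞]). -/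
open MeasureTheory Filter Set

/-- `u : (0,∞) → Δ(X̄)` is a representation of `y` with respect to the couple `(X₀,X₁)`:
`u` is strongly measurable with values in `Δ`, and `y = ∫₀^∞ u(t) dt/t` with the improper
integral converging in `Σ(X̄)` (whose norm is `K(1,·)`). -/
structure IsRepresentation
    {E X₀ X₁ : Type*} [AddCommGroup E] [Module ℝ E] [TopologicalSpace E]
    [NormedAddCommGroup X₀] [NormedSpace ℝ X₀]
    [NormedAddCommGroup X₁] [NormedSpace ℝ X₁]
    (i₀ : X₀ →L[ℝ] E) (i₁ : X₁ →L[ℝ] E) (y : E) (u : ℝ → E) : Prop where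
  mem_delta : ∀ t : ℝ, 0 < t → InDelta i₀ i₁ (u t)
  meas₁ : ∃ u₁ : ℝ → X₁, (∀ t : ℝ, 0 < t → i₁ (u₁ t) = u t) ∧
    MeasureTheory.AEStronglyMeasurable u₁ (MeasureTheory.volume.restrict (Set.Ioi 0))
  repr₀ : ∃ u₀ : ℝ → X₀,
    (∀ t : ℝ, 0 < t → i₀ (u₀ t) = u t) ∧
    MeasureTheory.AEStronglyMeasurable u₀ (MeasureTheory.volume.restrict (Set.Ioi 0)) ∧
    (∀ a b : ℝ, 0 < a → IntervalIntegrable (fun t => t⁻¹ • u₀ t) MeasureTheory.volume a b) ∧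
    (∀ a b : ℝ, 0 < a → InSigma i₀ i₁ (y - i₀ (∫ t in a..b, t⁻¹ • u₀ t))) ∧
    Filter.Tendsto
      (fun ab : ℝ × ℝ => Kfun i₀ i₁ 1 (y - i₀ (∫ t in ab.1..ab.2, t⁻¹ • u₀ t)))
      ((nhdsWithin (0:ℝ) (Set.Ioi 0)) ×ˢ (Filter.atTop : Filter ℝ)) (nhds 0)

lemma Jfun_eq_of_inj {E Y₀ Y₁ : Type*} [AddCommGroup E] [Module ℝ E] [TopologicalSpace E]
    [NormedAddCommGroup Y₀] [NormedSpace ℝ Y₀] [NormedAddCommGroup Y₁] [NormedSpace ℝ Y₁]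
    (j₀ : Y₀ →L[ℝ] E) (j₁ : Y₁ →L[ℝ] E) (h₀ : Function.Injective ⇑j₀)
    (h₁ : Function.Injective ⇑j₁) {x : E} {a : Y₀} {b : Y₁}
    (ha : j₀ a = x) (hb : j₁ b = x) (s : ℝ) :
    Jfun j₀ j₁ s x = max ‖a‖ (s * ‖b‖) := by
  unfold Jfun
  have hset : {r : ℝ | ∃ a' b', j₀ a' = x ∧ j₁ b' = x ∧ r = max ‖a'‖ (s * ‖b'‖)} =
      {max ‖a‖ (s * ‖b‖)} := by
    ext r
    constructor
    · rintro ⟨a', b', ha', hb', rfl⟩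
      have e1 : a' = a := h₀ (ha'.trans ha.symm)
      have e2 : b' = b := h₁ (hb'.trans hb.symm)
      simp [e1, e2]
    · rintro rfl
      exact ⟨a, b, ha, hb, rfl⟩
  rw [hset, csInf_singleton]

lemma orlicz_pow_two {Φ : ℝ → ℝ} (hΦ : IsOrliczFunction Φ) {Cd : ℝ} (hCd : 0 < Cd)
    (h : ∀ t : ℝ, 0 ≤ t → Φ (2 * t) ≤ Cd * Φ t) (k : ℕ) :
    ∀ s : ℝ, 0 ≤ s → Φ ((2 : ℝ) ^ k * s) ≤ Cd ^ k * Φ s := by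
  induction k with
  | zero => intro s hs; simp
  | succ k ih =>
    intro s hs
    have h2 : (2 : ℝ) ^ (k + 1) * s = 2 * ((2 : ℝ) ^ k * s) := by ring
    have hk : 0 ≤ (2 : ℝ) ^ k * s := by positivity
    calc Φ ((2 : ℝ) ^ (k + 1) * s) = Φ (2 * ((2 : ℝ) ^ k * s)) := by rw [h2]
      _ ≤ Cd * Φ ((2 : ℝ) ^ k * s) := h _ hk
      _ ≤ Cd * (Cd ^ k * Φ s) := by
          exact mul_le_mul_of_nonneg_left (ih s hs) hCd.le
      _ = Cd ^ (k + 1) * Φ s := by ring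

lemma orlicz_nonneg {Φ : ℝ → ℝ} (hΦ : IsOrliczFunction Φ) {s : ℝ} (hs : 0 ≤ s) :
    0 ≤ Φ s := by
  have := hΦ.monotoneOn (Set.mem_Ici.2 (le_refl (0:ℝ))) (Set.mem_Ici.2 hs) hs
  rwa [hΦ.map_zero] at this

/-- Φ-moment comparison of J-functionals under `C_J` class hypotheses,
along a common representation `u` of `y ∈ Δ(Ȳ)` for both couples. -/
theorem statement2 (Φ : ℝ → ℝ) (hΦ : IsOrliczFunction Φ) (hΔ₂ : Delta2 Φ)
    (θ₀ θ₁ C₀ C₁ : ℝ) (hθ₀ : 0 ≤ θ₀) (hθ₀₁ : θ₀ < θ₁) (hθ₁ : θ₁ ≤ 1) :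
    ∃ C : ℝ, 0 < C ∧
      ∀ (E : Type*) [AddCommGroup E] [Module ℝ E] [TopologicalSpace E] [T2Space E]
        (X₀ X₁ Y₀ Y₁ : Type*)
        [NormedAddCommGroup X₀] [NormedSpace ℝ X₀] [CompleteSpace X₀]
        [NormedAddCommGroup X₁] [NormedSpace ℝ X₁] [CompleteSpace X₁]
        [NormedAddCommGroup Y₀] [NormedSpace ℝ Y₀] [CompleteSpace Y₀]
        [NormedAddCommGroup Y₁] [NormedSpace ℝ Y₁] [CompleteSpace Y₁]
        (i₀ : X₀ →L[ℝ] E) (i₁ : X₁ →L[ℝ] E) (j₀ : Y₀ →L[ℝ] E) (j₁ : Y₁ →L[ℝ] E),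
        Function.Injective ⇑i₀ → Function.Injective ⇑i₁ →
        Function.Injective ⇑j₀ → Function.Injective ⇑j₁ →
        IsIntermediate i₀ i₁ j₀ → IsIntermediate i₀ i₁ j₁ →
        ClassCJ i₀ i₁ j₀ θ₀ C₀ → ClassCJ i₀ i₁ j₁ θ₁ C₁ →
        ∀ (y : E) (u : ℝ → E), InDelta j₀ j₁ y →
          IsRepresentation i₀ i₁ y u → IsRepresentation j₀ j₁ y u →
          (∫⁻ t in Set.Ioi (0:ℝ),
              ENNReal.ofReal (Φ (t ^ (θ₀ - 1) * Jfun j₀ j₁ (t ^ (θ₁ - θ₀)) (u t)))) ≤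
            ENNReal.ofReal C *
              ∫⁻ t in Set.Ioi (0:ℝ), ENNReal.ofReal (Φ (t⁻¹ * Jfun i₀ i₁ t (u t))) := by
  obtain ⟨Cd, hCd, hCd2⟩ := hΔ₂
  set M : ℝ := max (max C₀ C₁) 1 with hM
  have hM1 : (1 : ℝ) ≤ M := le_max_right _ _
  have hMC₀ : C₀ ≤ M := le_trans (le_max_left _ _) (le_max_left _ _)
  have hMC₁ : C₁ ≤ M := le_trans (le_max_right _ _) (le_max_left _ _)
  obtain ⟨k, hk⟩ : ∃ k : ℕ, M ≤ (2 : ℝ) ^ k := by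
    obtain ⟨k, hk⟩ := pow_unbounded_of_one_lt M (one_lt_two (α := ℝ))
    exact ⟨k, hk.le⟩
  refine ⟨Cd ^ k, pow_pos hCd k, ?_⟩
  intro E _ _ _ _ X₀ X₁ Y₀ Y₁ _ _ _ _ _ _ _ _ _ _ _ _ i₀ i₁ j₀ j₁ hi₀ hi₁ hj₀ hj₁
    _ _ hCJ₀ hCJ₁ y u hy hrepX hrepY
  have claim : ∀ t ∈ Set.Ioi (0:ℝ),
      ENNReal.ofReal (Φ (t ^ (θ₀ - 1) * Jfun j₀ j₁ (t ^ (θ₁ - θ₀)) (u t))) ≤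
      ENNReal.ofReal (Cd ^ k) * ENNReal.ofReal (Φ (t⁻¹ * Jfun i₀ i₁ t (u t))) := by
    intro t ht
    have ht : (0:ℝ) < t := ht
    obtain ⟨a, b, ha, hb⟩ := hrepX.mem_delta t ht
    obtain ⟨z₀, z₁, hz₀, hz₁⟩ := hrepY.mem_delta t ht
    have hJX : Jfun i₀ i₁ t (u t) = max ‖a‖ (t * ‖b‖) :=
      Jfun_eq_of_inj i₀ i₁ hi₀ hi₁ ha hb t
    have hJXnn : 0 ≤ Jfun i₀ i₁ t (u t) := by
      rw [hJX]; exact le_trans (norm_nonneg a) (le_max_left _ _)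
    have hJY : Jfun j₀ j₁ (t ^ (θ₁ - θ₀)) (u t) = max ‖z₀‖ (t ^ (θ₁ - θ₀) * ‖z₁‖) :=
      Jfun_eq_of_inj j₀ j₁ hj₀ hj₁ hz₀ hz₁ _
    have hd₀ : InDelta i₀ i₁ (j₀ z₀) := by rw [hz₀]; exact hrepX.mem_delta t ht
    have hd₁ : InDelta i₀ i₁ (j₁ z₁) := by rw [hz₁]; exact hrepX.mem_delta t ht
    have h0 : ‖z₀‖ ≤ C₀ * t ^ (-θ₀) * Jfun i₀ i₁ t (u t) := by
      have := hCJ₀ z₀ hd₀ t ht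
      rwa [hz₀] at this
    have h1 : ‖z₁‖ ≤ C₁ * t ^ (-θ₁) * Jfun i₀ i₁ t (u t) := by
      have := hCJ₁ z₁ hd₁ t ht
      rwa [hz₁] at this
    have htpos : ∀ r : ℝ, 0 < t ^ r := fun r => Real.rpow_pos_of_pos ht r
    -- bound on the max
    have hb0 : ‖z₀‖ ≤ M * t ^ (-θ₀) * Jfun i₀ i₁ t (u t) := by
      refine h0.trans ?_
      exact mul_le_mul_of_nonneg_right
        (mul_le_mul_of_nonneg_right hMC₀ (htpos _).le) hJXnn
    have hb1 : t ^ (θ₁ - θ₀) * ‖z₁‖ ≤ M * t ^ (-θ₀) * Jfun i₀ i₁ t (u t) := by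
      have step : t ^ (θ₁ - θ₀) * ‖z₁‖ ≤
          t ^ (θ₁ - θ₀) * (C₁ * t ^ (-θ₁) * Jfun i₀ i₁ t (u t)) :=
        mul_le_mul_of_nonneg_left h1 (htpos _).le
      have hexp : t ^ (θ₁ - θ₀) * t ^ (-θ₁) = t ^ (-θ₀) := by
        rw [← Real.rpow_add ht]; ring_nf
      calc t ^ (θ₁ - θ₀) * ‖z₁‖
          ≤ t ^ (θ₁ - θ₀) * (C₁ * t ^ (-θ₁) * Jfun i₀ i₁ t (u t)) := step
        _ = C₁ * (t ^ (θ₁ - θ₀) * t ^ (-θ₁)) * Jfun i₀ i₁ t (u t) := by ring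
        _ = C₁ * t ^ (-θ₀) * Jfun i₀ i₁ t (u t) := by rw [hexp]
        _ ≤ M * t ^ (-θ₀) * Jfun i₀ i₁ t (u t) :=
            mul_le_mul_of_nonneg_right
              (mul_le_mul_of_nonneg_right hMC₁ (htpos _).le) hJXnn
    have hmax : Jfun j₀ j₁ (t ^ (θ₁ - θ₀)) (u t) ≤ M * t ^ (-θ₀) * Jfun i₀ i₁ t (u t) := by
      rw [hJY]; exact max_le hb0 hb1
    have hJYnn : 0 ≤ Jfun j₀ j₁ (t ^ (θ₁ - θ₀)) (u t) := by
      rw [hJY]; exact le_trans (norm_nonneg z₀) (le_max_left _ _)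
    have hsnn : 0 ≤ t⁻¹ * Jfun i₀ i₁ t (u t) := by positivity
    have key : t ^ (θ₀ - 1) * Jfun j₀ j₁ (t ^ (θ₁ - θ₀)) (u t) ≤
        (2 : ℝ) ^ k * (t⁻¹ * Jfun i₀ i₁ t (u t)) := by
      have hexp2 : t ^ (θ₀ - 1) * t ^ (-θ₀) = t⁻¹ := by
        rw [← Real.rpow_add ht]
        have : θ₀ - 1 + -θ₀ = -1 := by ring
        rw [this, Real.rpow_neg_one]
      calc t ^ (θ₀ - 1) * Jfun j₀ j₁ (t ^ (θ₁ - θ₀)) (u t)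
          ≤ t ^ (θ₀ - 1) * (M * t ^ (-θ₀) * Jfun i₀ i₁ t (u t)) :=
            mul_le_mul_of_nonneg_left hmax (htpos _).le
        _ = M * ((t ^ (θ₀ - 1) * t ^ (-θ₀)) * Jfun i₀ i₁ t (u t)) := by ring
        _ = M * (t⁻¹ * Jfun i₀ i₁ t (u t)) := by rw [hexp2]
        _ ≤ (2 : ℝ) ^ k * (t⁻¹ * Jfun i₀ i₁ t (u t)) :=
            mul_le_mul_of_nonneg_right hk hsnn
    have hLHSnn : 0 ≤ t ^ (θ₀ - 1) * Jfun j₀ j₁ (t ^ (θ₁ - θ₀)) (u t) :=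
      mul_nonneg (htpos _).le hJYnn
    have hRHSnn : 0 ≤ (2 : ℝ) ^ k * (t⁻¹ * Jfun i₀ i₁ t (u t)) := by positivity
    have hmono : Φ (t ^ (θ₀ - 1) * Jfun j₀ j₁ (t ^ (θ₁ - θ₀)) (u t)) ≤
        Φ ((2 : ℝ) ^ k * (t⁻¹ * Jfun i₀ i₁ t (u t))) :=
      hΦ.monotoneOn (Set.mem_Ici.2 hLHSnn) (Set.mem_Ici.2 hRHSnn) key
    have hdelta : Φ ((2 : ℝ) ^ k * (t⁻¹ * Jfun i₀ i₁ t (u t))) ≤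
        Cd ^ k * Φ (t⁻¹ * Jfun i₀ i₁ t (u t)) :=
      orlicz_pow_two hΦ hCd hCd2 k _ hsnn
    calc ENNReal.ofReal (Φ (t ^ (θ₀ - 1) * Jfun j₀ j₁ (t ^ (θ₁ - θ₀)) (u t)))
        ≤ ENNReal.ofReal (Cd ^ k * Φ (t⁻¹ * Jfun i₀ i₁ t (u t))) :=
          ENNReal.ofReal_le_ofReal (hmono.trans hdelta)
      _ = ENNReal.ofReal (Cd ^ k) * ENNReal.ofReal (Φ (t⁻¹ * Jfun i₀ i₁ t (u t))) :=
          ENNReal.ofReal_mul (pow_pos hCd k).le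
  calc (∫⁻ t in Set.Ioi (0:ℝ),
        ENNReal.ofReal (Φ (t ^ (θ₀ - 1) * Jfun j₀ j₁ (t ^ (θ₁ - θ₀)) (u t))))
      ≤ ∫⁻ t in Set.Ioi (0:ℝ),
          ENNReal.ofReal (Cd ^ k) * ENNReal.ofReal (Φ (t⁻¹ * Jfun i₀ i₁ t (u t))) := by
        refine lintegral_mono_ae ?_
        exact (ae_restrict_iff' measurableSet_Ioi).2 (Filter.Eventually.of_forall claim)
    _ = ENNReal.ofReal (Cd ^ k) *
          ∫⁻ t in Set.Ioi (0:ℝ), ENNReal.ofReal (Φ (t⁻¹ * Jfun i₀ i₁ t (u t))) :=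
        lintegral_const_mul' _ _ ENNReal.ofReal_ne_top
end

section
/- Let Φ be an Orlicz function whose Matuzewska–Orlicz indices satisfy 1 ≤ p < p_Φ ≤ q_Φ < ∞ for some real p. Then there exists a constant C, depending only on Φ and p, such that for every measurable function f on (0,∞) with ∫₀^∞ Φ(|f(t)|) dt < ∞, one has ∫₀^∞ Φ(|S_{p,∞}f(t)|) dt ≤ C ∫₀^∞ Φ(|f(t)|) dt. -/
open MeasureTheory Filter Set

/-- `M(t,Φ) = sup_{s>0} Φ(ts)/Φ(s)`. -/
noncomputable def orliczM (Φ : ℝ → ℝ) (t : ℝ) : ℝ :=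
  sSup {r : ℝ | ∃ s : ℝ, 0 < s ∧ r = Φ (t * s) / Φ s}

/-- `p` and `q` are the Matuzewska–Orlicz indices of `Φ`:
`p = lim_{t→0⁺} log M(t,Φ)/log t` and `q = lim_{t→∞} log M(t,Φ)/log t`. -/
def HasMatuzewskaOrliczIndices (Φ : ℝ → ℝ) (p q : ℝ) : Prop :=
  Filter.Tendsto (fun t : ℝ => Real.log (orliczM Φ t) / Real.log t)
      (nhdsWithin 0 (Set.Ioi 0)) (nhds p) ∧
  Filter.Tendsto (fun t : ℝ => Real.log (orliczM Φ t) / Real.log t)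
      Filter.atTop (nhds q)

/-- The Calderón operator `S_{p,∞} f(t) = t^{-1/p} ∫₀^t s^{1/p} f(s) ds/s`. -/
noncomputable def Spinf (p : ℝ) (f : ℝ → ℝ) (t : ℝ) : ℝ :=
  t ^ (-(1/p)) * ∫ s in (0:ℝ)..t, s ^ (1/p) * f s / s

namespace IsOrliczFunction

variable {Φ : ℝ → ℝ}

lemma nonneg (hΦ : IsOrliczFunction Φ) {s : ℝ} (hs : 0 ≤ s) : 0 ≤ Φ s :=
  hΦ.map_zero ▸ hΦ.monotoneOn (self_mem_Ici) hs hs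

lemma mul_le (hΦ : IsOrliczFunction Φ) {t s : ℝ} (ht0 : 0 ≤ t) (ht1 : t ≤ 1) (hs : 0 ≤ s) :
    Φ (t * s) ≤ t * Φ s := by
  have h := hΦ.convexOn.2 (mem_Ici.2 hs) (self_mem_Ici (α := ℝ)) ht0
      (sub_nonneg.2 ht1) (by ring)
  simpa [hΦ.map_zero, smul_eq_mul] using h

/-- abs composed with Φ is continuous -/
lemma continuous_comp_abs (hΦ : IsOrliczFunction Φ) : Continuous (fun x : ℝ => Φ |x|) :=
  hΦ.continuousOn.comp_continuous continuous_abs (fun x => abs_nonneg x)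

end IsOrliczFunction

namespace IsOrliczFunction

lemma pos_of_index (hΦ : IsOrliczFunction Φ) {q : ℝ}
    (hq : Tendsto (fun t : ℝ => Real.log (orliczM Φ t) / Real.log t) atTop (nhds q))
    (hq0 : q ≠ 0) {s : ℝ} (hs : 0 < s) : 0 < Φ s := by
  by_contra hcon
  have hΦs : Φ s = 0 := le_antisymm (not_lt.1 hcon) (hΦ.nonneg hs.le)
  obtain ⟨s₁, hs₁1, hs₁0⟩ := ((hΦ.tendsto_atTop.eventually_ge_atTop 1).and
    (eventually_ge_atTop (0:ℝ))).exists
  set A : Set ℝ := {x | 0 ≤ x ∧ Φ x = 0} with hA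
  have hAne : A.Nonempty := ⟨s, hs.le, hΦs⟩
  have hAbdd : BddAbove A := by
    refine ⟨s₁, fun a ha => ?_⟩
    by_contra hle
    push_neg at hle
    have := hΦ.monotoneOn hs₁0 (hs₁0.trans hle.le) hle.le
    rw [ha.2] at this; linarith
  set b := sSup A with hb
  have hbs : s ≤ b := le_csSup hAbdd ⟨hs.le, hΦs⟩
  have hb0 : 0 < b := lt_of_lt_of_le hs hbs
  have hAclosed : IsClosed A := by
    have hAeq : A = Ici 0 ∩ Φ ⁻¹' {0} := by ext x; simp [hA, mem_Ici, and_comm]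
    rw [hAeq]
    exact hΦ.continuousOn.preimage_isClosed_of_isClosed isClosed_Ici isClosed_singleton
  have hbA : b ∈ A := hAclosed.closure_subset (csSup_mem_closure hAne hAbdd)
  have hΦb : Φ b = 0 := hbA.2
  have hposgt : ∀ x, b < x → 0 < Φ x := by
    intro x hx
    rcases (hΦ.nonneg (hb0.le.trans hx.le)).lt_or_eq with h | h
    · exact h
    · exact absurd (le_csSup hAbdd ⟨(hb0.trans hx).le, h.symm⟩) (not_le.2 hx)
  have hm : 0 < Φ (2 * b) := hposgt _ (by linarith)
  have htd : Tendsto Φ (nhdsWithin b (Ioi b)) (nhds 0) := by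
    have h1 : ContinuousWithinAt Φ (Ici 0) b := hΦ.continuousOn b (mem_Ici.2 hb0.le)
    rw [ContinuousWithinAt, hΦb] at h1
    exact h1.mono_left (nhdsWithin_mono b (fun x hx => le_of_lt (hb0.trans hx)))
  have hnotbdd : ∀ t : ℝ, 2 ≤ t →
      ¬ BddAbove {r : ℝ | ∃ s : ℝ, 0 < s ∧ r = Φ (t * s) / Φ s} := by
    rintro t ht ⟨R, hR⟩
    have hK : (0:ℝ) < max R 0 + 1 := by positivity
    have hε : 0 < Φ (2*b) / (max R 0 + 1) := div_pos hm hK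
    obtain ⟨x, hxlt, hxb⟩ := ((htd.eventually (gt_mem_nhds hε)).and
      (self_mem_nhdsWithin (s := Ioi b))).exists
    have hx0 : 0 < x := hb0.trans hxb
    have hΦx : 0 < Φ x := hposgt x hxb
    have hmem : Φ (t*x)/Φ x ≤ R := hR ⟨x, hx0, rfl⟩
    have h2b : Φ (2*b) ≤ Φ (t*x) := by
      apply hΦ.monotoneOn (by simp [hb0.le] : (2*b : ℝ) ∈ Ici 0)
        (mem_Ici.2 (by positivity))
      nlinarith
    have hlt : R < Φ (t*x)/Φ x := by
      rw [lt_div_iff₀ hΦx]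
      have h1 : (max R 0 + 1) * Φ x < Φ (2*b) := by
        rw [← lt_div_iff₀' hK]; exact hxlt
      nlinarith [le_max_left R 0, hΦx]
    linarith
  have heq : (fun t : ℝ => Real.log (orliczM Φ t) / Real.log t) =ᶠ[atTop]
      (fun _ => (0:ℝ)) := by
    filter_upwards [eventually_ge_atTop (2:ℝ)] with t ht
    rw [orliczM, Real.sSup_of_not_bddAbove (hnotbdd t ht), Real.log_zero, zero_div]
  exact hq0 (tendsto_nhds_unique hq (tendsto_const_nhds.congr' heq.symm))

lemma bddAbove_ratio (hΦ : IsOrliczFunction Φ) {q : ℝ}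
    (hq : Tendsto (fun t : ℝ => Real.log (orliczM Φ t) / Real.log t) atTop (nhds q))
    (hq0 : q ≠ 0) {t : ℝ} (ht : 0 < t) :
    BddAbove {r : ℝ | ∃ s : ℝ, 0 < s ∧ r = Φ (t * s) / Φ s} := by
  by_contra hnb
  have hmono : ∀ t' : ℝ, t ≤ t' →
      ¬ BddAbove {r : ℝ | ∃ s : ℝ, 0 < s ∧ r = Φ (t' * s) / Φ s} := by
    rintro t' ht' ⟨R, hR⟩
    apply hnb
    refine ⟨R, ?_⟩
    rintro r ⟨s, hs, rfl⟩
    have h1 : Φ (t*s) ≤ Φ (t'*s) := hΦ.monotoneOn (mem_Ici.2 (by positivity))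
      (mem_Ici.2 (by nlinarith)) (by nlinarith)
    calc Φ (t*s)/Φ s ≤ Φ (t'*s)/Φ s := by
          rcases (hΦ.nonneg hs.le).eq_or_lt with h | h
          · simp [← h]
          · gcongr
      _ ≤ R := hR ⟨s, hs, rfl⟩
  have heq : (fun t : ℝ => Real.log (orliczM Φ t) / Real.log t) =ᶠ[atTop]
      (fun _ => (0:ℝ)) := by
    filter_upwards [eventually_ge_atTop t] with t' ht'
    rw [orliczM, Real.sSup_of_not_bddAbove (hmono t' ht'), Real.log_zero, zero_div]
  exact hq0 (tendsto_nhds_unique hq (tendsto_const_nhds.congr' heq.symm))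

end IsOrliczFunction

namespace IsOrliczFunction

lemma le_M (hΦ : IsOrliczFunction Φ) {q : ℝ}
    (hq : Tendsto (fun t : ℝ => Real.log (orliczM Φ t) / Real.log t) atTop (nhds q))
    (hq0 : q ≠ 0) {t s : ℝ} (ht : 0 < t) (hs : 0 < s) :
    Φ (t * s) ≤ orliczM Φ t * Φ s := by
  have h := le_csSup (hΦ.bddAbove_ratio hq hq0 ht)
    (show Φ (t*s)/Φ s ∈ {r : ℝ | ∃ s : ℝ, 0 < s ∧ r = Φ (t * s) / Φ s} from ⟨s, hs, rfl⟩)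
  exact (div_le_iff₀ (hΦ.pos_of_index hq hq0 hs)).1 h

lemma M_nonneg (hΦ : IsOrliczFunction Φ) {q : ℝ}
    (hq : Tendsto (fun t : ℝ => Real.log (orliczM Φ t) / Real.log t) atTop (nhds q))
    (hq0 : q ≠ 0) {t : ℝ} (ht : 0 < t) : 0 ≤ orliczM Φ t := by
  have h := le_csSup (hΦ.bddAbove_ratio hq hq0 ht)
    (show Φ (t*1)/Φ 1 ∈ {r : ℝ | ∃ s : ℝ, 0 < s ∧ r = Φ (t * s) / Φ s} from ⟨1, one_pos, rfl⟩)
  exact le_trans (div_nonneg (hΦ.nonneg (by positivity)) (hΦ.nonneg zero_le_one)) h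

lemma M_mono (hΦ : IsOrliczFunction Φ) {q : ℝ}
    (hq : Tendsto (fun t : ℝ => Real.log (orliczM Φ t) / Real.log t) atTop (nhds q))
    (hq0 : q ≠ 0) {t t' : ℝ} (ht : 0 < t) (htt' : t ≤ t') :
    orliczM Φ t ≤ orliczM Φ t' := by
  have hne : {r : ℝ | ∃ s : ℝ, 0 < s ∧ r = Φ (t * s) / Φ s}.Nonempty :=
    ⟨Φ (t*1)/Φ 1, ⟨1, one_pos, rfl⟩⟩
  apply csSup_le hne
  rintro r ⟨s, hs, rfl⟩
  have h1 : Φ (t*s) ≤ Φ (t'*s) := hΦ.monotoneOn (mem_Ici.2 (by positivity))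
    (mem_Ici.2 (by nlinarith)) (by nlinarith)
  calc Φ (t*s)/Φ s ≤ Φ (t'*s)/Φ s := by
        rcases (hΦ.nonneg hs.le).eq_or_lt with h | h
        · simp [← h]
        · gcongr
    _ ≤ orliczM Φ t' := le_csSup (hΦ.bddAbove_ratio hq hq0 (ht.trans_le htt')) ⟨s, hs, rfl⟩

/-- Master estimate: `Φ(ts) ≤ K t^{r₂} Φ(s)` for `0 < t ≤ c`. -/
lemma master (hΦ : IsOrliczFunction Φ) {pΦ qΦ : ℝ}
    (hp : Tendsto (fun t : ℝ => Real.log (orliczM Φ t) / Real.log t)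
      (nhdsWithin 0 (Set.Ioi 0)) (nhds pΦ))
    (hq : Tendsto (fun t : ℝ => Real.log (orliczM Φ t) / Real.log t) atTop (nhds qΦ))
    (hq0 : qΦ ≠ 0) {r₂ c : ℝ} (hr₂1 : 1 ≤ r₂) (hr₂ : r₂ < pΦ) (hc : 1 ≤ c) :
    ∃ K : ℝ, 0 < K ∧ ∀ t s : ℝ, 0 < t → t ≤ c → 0 ≤ s →
      Φ (t * s) ≤ K * t ^ r₂ * Φ s := by
  have hev : ∀ᶠ t in nhdsWithin (0:ℝ) (Set.Ioi 0),
      r₂ < Real.log (orliczM Φ t) / Real.log t ∧ t < 1 ∧ 0 < t := by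
    refine ((hp.eventually (eventually_gt_nhds hr₂)).and ?_).mono (fun t h => ⟨h.1, h.2⟩)
    exact ((eventually_lt_nhds one_pos).filter_mono nhdsWithin_le_nhds).and
      (eventually_mem_nhdsWithin)
  obtain ⟨t₀, ht₀pos, ht₀⟩ : ∃ t₀ : ℝ, 0 < t₀ ∧ ∀ t, t ∈ Ioc 0 t₀ →
      r₂ < Real.log (orliczM Φ t) / Real.log t ∧ t < 1 ∧ 0 < t := by
    rw [eventually_nhdsWithin_iff] at hev
    obtain ⟨ε, hε, hball⟩ := Metric.eventually_nhds_iff.1 hev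
    exact ⟨ε/2, by positivity, fun t ht => hball
      (by rw [Real.dist_eq, sub_zero, abs_of_pos ht.1]; linarith [ht.2] : dist t 0 < ε) ht.1⟩
  have ht₀1 : t₀ < 1 := (ht₀ t₀ ⟨ht₀pos, le_refl _⟩).2.1
  have hMsmall : ∀ t, t ∈ Ioc 0 t₀ → orliczM Φ t ≤ t ^ r₂ := by
    intro t ht
    obtain ⟨hlog, ht1, htpos⟩ := ht₀ t ht
    have hlt : Real.log t < 0 := Real.log_neg htpos ht1
    have h2 : Real.log (orliczM Φ t) < r₂ * Real.log t := by
      rw [lt_div_iff_of_neg hlt] at hlog; linarith [hlog]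
    rcases (hΦ.M_nonneg hq hq0 htpos).eq_or_lt with h | h
    · rw [← h]; positivity
    · have := Real.exp_lt_exp.2 h2
      rw [Real.exp_log h, mul_comm, ← Real.rpow_def_of_pos htpos] at this
      exact this.le
  refine ⟨max 1 (max (t₀ ^ (1 - r₂)) (orliczM Φ c)), lt_of_lt_of_le one_pos (le_max_left _ _),
    ?_⟩
  intro t s htpos htc hs
  set K := max 1 (max (t₀ ^ (1 - r₂)) (orliczM Φ c)) with hK
  have hK1 : 1 ≤ K := le_max_left _ _
  have htr₂ : (0:ℝ) < t ^ r₂ := Real.rpow_pos_of_pos htpos _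
  rcases hs.eq_or_lt with h | hspos
  · rw [← h, mul_zero, hΦ.map_zero, mul_zero]
  rcases le_or_gt t t₀ with h1 | h1
  · calc Φ (t*s) ≤ orliczM Φ t * Φ s := hΦ.le_M hq hq0 htpos hspos
      _ ≤ t ^ r₂ * Φ s := by
          apply mul_le_mul_of_nonneg_right (hMsmall t ⟨htpos, h1⟩) (hΦ.nonneg hs)
      _ ≤ K * t ^ r₂ * Φ s := by
          nlinarith [hΦ.nonneg hs, mul_nonneg htr₂.le (hΦ.nonneg hs), hK1]
  rcases le_or_gt t 1 with h2 | h2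
  · have hbase : Φ (t*s) ≤ t * Φ s := hΦ.mul_le htpos.le h2 hs
    have ht1r : t ^ (1 - r₂) ≤ t₀ ^ (1 - r₂) := by
      apply Real.rpow_le_rpow_of_nonpos ht₀pos h1.le (by linarith)
    have htsplit : t = t ^ r₂ * t ^ (1 - r₂) := by
      rw [← Real.rpow_add htpos, add_sub_cancel, Real.rpow_one]
    calc Φ (t*s) ≤ t * Φ s := hbase
      _ = t ^ r₂ * t ^ (1-r₂) * Φ s := by rw [← htsplit]
      _ ≤ t ^ r₂ * t₀ ^ (1-r₂) * Φ s := by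
          have h4 := hΦ.nonneg hs
          gcongr
      _ ≤ K * t ^ r₂ * Φ s := by
          have h3 : t₀ ^ (1-r₂) ≤ K := le_trans (le_max_left _ _) (le_max_right _ _)
          have h4 := hΦ.nonneg hs
          rw [mul_comm K]
          gcongr
  · have h1r : (1:ℝ) ≤ t ^ r₂ := Real.one_le_rpow h2.le (by linarith)
    have hMc : orliczM Φ c ≤ K := le_trans (le_max_right _ _) (le_max_right _ _)
    calc Φ (t*s) ≤ orliczM Φ t * Φ s := hΦ.le_M hq hq0 htpos hspos
      _ ≤ orliczM Φ c * Φ s := by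
          apply mul_le_mul_of_nonneg_right (hΦ.M_mono hq hq0 htpos htc) (hΦ.nonneg hs)
      _ ≤ K * Φ s := mul_le_mul_of_nonneg_right hMc (hΦ.nonneg hs)
      _ ≤ K * t ^ r₂ * Φ s := by
          nlinarith [mul_nonneg (mul_nonneg (zero_le_one.trans hK1)
            (sub_nonneg.2 h1r)) (hΦ.nonneg hs)]

end IsOrliczFunction

namespace IsOrliczFunction

/-- Superlinearity: `x ≤ 1 + (K/Φ(1)) Φ(x)` for `x ≥ 0`. -/
lemma superlinear (hΦ : IsOrliczFunction Φ) {K r₂ : ℝ} (hK : 0 < K) (hr₂1 : 1 ≤ r₂)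
    (hΦ1 : 0 < Φ 1)
    (hmaster : ∀ t s : ℝ, 0 < t → t ≤ 1 → 0 ≤ s → Φ (t * s) ≤ K * t ^ r₂ * Φ s)
    {x : ℝ} (hx : 0 ≤ x) : x ≤ 1 + (K / Φ 1) * Φ x := by
  have hΦx := hΦ.nonneg hx
  rcases le_or_gt x 1 with h | h
  · have : 0 ≤ (K / Φ 1) * Φ x := by positivity
    linarith
  · have hx0 : 0 < x := by linarith
    have h1 := hmaster x⁻¹ x (by positivity) (by rw [inv_le_one_iff₀]; right; exact h.le) hx
    rw [inv_mul_cancel₀ hx0.ne', Real.inv_rpow hx0.le] at h1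
    have hxr : 0 < x ^ r₂ := Real.rpow_pos_of_pos hx0 _
    have h2 : Φ 1 * x ^ r₂ ≤ K * Φ x := by
      have hh := mul_le_mul_of_nonneg_right h1 hxr.le
      have heq : K * (x ^ r₂)⁻¹ * Φ x * x ^ r₂ = K * Φ x := by
        field_simp
      rwa [heq] at hh
    have h3 : x ≤ x ^ r₂ := by
      calc x = x ^ (1:ℝ) := (Real.rpow_one x).symm
        _ ≤ x ^ r₂ := Real.rpow_le_rpow_of_exponent_le h.le hr₂1
    have h4 : Φ 1 * x ≤ K * Φ x := le_trans (by nlinarith) h2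
    have h5 : x ≤ (K / Φ 1) * Φ x := by
      rw [div_mul_eq_mul_div, le_div_iff₀ hΦ1]; nlinarith
    linarith
end IsOrliczFunction

/-- Scaling of the Lebesgue integral on `(0,∞)` under `t ↦ t u`. -/
lemma lintegral_scale_Ioi {g : ℝ → ENNReal} (hg : Measurable g) {u : ℝ} (hu : 0 < u) :
    ∫⁻ t in Ioi (0:ℝ), g (t * u) = ENNReal.ofReal u⁻¹ * ∫⁻ s in Ioi (0:ℝ), g s := by
  have hφ : Measurable fun t : ℝ => t * u := measurable_mul_const u
  have hpre : (fun t : ℝ => t * u) ⁻¹' (Ioi 0) = Ioi 0 := by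
    ext x; simp [mem_Ioi, mul_pos_iff_of_pos_right hu]
  calc ∫⁻ t in Ioi (0:ℝ), g (t*u)
      = ∫⁻ t in (fun t : ℝ => t * u) ⁻¹' (Ioi 0), g (t*u) := by rw [hpre]
    _ = ∫⁻ y, g y ∂(Measure.map (fun t : ℝ => t*u) volume).restrict (Ioi 0) := by
        rw [Measure.restrict_map hφ measurableSet_Ioi, lintegral_map hg hφ]
    _ = ENNReal.ofReal u⁻¹ * ∫⁻ s in Ioi (0:ℝ), g s := by
        rw [Real.map_volume_mul_right hu.ne', abs_of_pos (inv_pos.2 hu),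
          Measure.restrict_smul, lintegral_smul_measure, smul_eq_mul]

/-- total mass of the density `α u^(α-1)` on `(0,1]` is 1. -/
lemma lint_density_one {α : ℝ} (hα : 0 < α) :
    ∫⁻ u in Ioc (0:ℝ) 1, ENNReal.ofReal (α * u ^ (α-1)) = 1 := by
  have hint : IntegrableOn (fun u : ℝ => α * u ^ (α-1)) (Ioc 0 1) := by
    have h := (intervalIntegral.intervalIntegrable_rpow' (a:=0) (b:=1)
      (by linarith : (-1:ℝ) < α - 1)).const_mul α
    rwa [intervalIntegrable_iff_integrableOn_Ioc_of_le zero_le_one] at h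
  have hnn : 0 ≤ᵐ[volume.restrict (Ioc (0:ℝ) 1)] fun u : ℝ => α * u ^ (α-1) := by
    filter_upwards [ae_restrict_mem measurableSet_Ioc] with u hu
    have := hu.1
    positivity
  rw [← ofReal_integral_eq_lintegral_ofReal hint hnn,
    ← intervalIntegral.integral_of_le zero_le_one, intervalIntegral.integral_const_mul,
    integral_rpow (Or.inl (by linarith))]
  have hα' : α - 1 + 1 = α := by ring
  rw [hα', Real.one_rpow, Real.zero_rpow hα.ne']
  rw [show α * ((1 - 0)/α) = 1 by field_simp; norm_num]
  exact ENNReal.ofReal_one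

lemma spinf_repr {p : ℝ} (hp : 0 < p) (f : ℝ → ℝ) {t : ℝ} (ht : 0 < t) :
    Spinf p f t = ∫ x in (0:ℝ)..1, x ^ (1/p - 1) * f (t * x) := by
  have h0 : t • (∫ x in (0:ℝ)..1, (t*x) ^ (1/p) * f (t*x) / (t*x))
      = ∫ s in (0:ℝ)..t, s ^ (1/p) * f s / s := by
    have hF := intervalIntegral.integral_comp_mul_left
      (fun s => s ^ (1/p) * f s / s) ht.ne' (a := (0:ℝ)) (b := 1)
    rw [hF, smul_smul, mul_inv_cancel₀ ht.ne', one_smul, mul_zero, mul_one]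
  have hcongr : (∫ x in (0:ℝ)..1, (t*x) ^ (1/p) * f (t*x) / (t*x))
      = ∫ x in (0:ℝ)..1, t ^ (1/p - 1) * (x ^ (1/p - 1) * f (t * x)) := by
    apply intervalIntegral.integral_congr_ae
    filter_upwards with x hx
    rw [Set.uIoc_of_le zero_le_one] at hx
    have hx0 : 0 < x := hx.1
    rw [Real.mul_rpow ht.le hx0.le, Real.rpow_sub_one ht.ne', Real.rpow_sub_one hx0.ne']
    field_simp
  simp only [Spinf]
  rw [← h0, smul_eq_mul, hcongr, intervalIntegral.integral_const_mul]
  set I := ∫ x in (0:ℝ)..1, x ^ (1/p - 1) * f (t * x) with hI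
  have key : t ^ (-(1/p)) * (t * t ^ (1/p - 1)) = 1 := by
    have h1 : t * t ^ (1/p - 1) = t ^ (1/p) := by
      nth_rewrite 1 [← Real.rpow_one t]
      rw [← Real.rpow_add ht]; norm_num
    rw [h1, ← Real.rpow_add ht, neg_add_cancel, Real.rpow_zero]
  calc t ^ (-(1/p)) * (t * (t ^ (1/p - 1) * I))
      = t ^ (-(1/p)) * (t * t ^ (1/p - 1)) * I := by ring
    _ = I := by rw [key, one_mul]

lemma measurable_rpow_const' (c : ℝ) : Measurable fun x : ℝ => x ^ c := by fun_prop

/-- Φ-moment boundedness of the Calderón operator `S_{p,∞}`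
when `1 ≤ p < p_Φ ≤ q_Φ < ∞`. -/
theorem statement4 (Φ : ℝ → ℝ) (hΦ : IsOrliczFunction Φ) (pΦ qΦ : ℝ)
    (hMO : HasMatuzewskaOrliczIndices Φ pΦ qΦ) (p : ℝ)
    (hp : 1 ≤ p) (hppΦ : p < pΦ) (hpΦqΦ : pΦ ≤ qΦ) :
    ∃ C : ℝ, 0 < C ∧ ∀ f : ℝ → ℝ, Measurable f →
      (∫⁻ t in Set.Ioi (0:ℝ), ENNReal.ofReal (Φ |f t|)) < ⊤ →
      (∫⁻ t in Set.Ioi (0:ℝ), ENNReal.ofReal (Φ |Spinf p f t|)) ≤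
        ENNReal.ofReal C * ∫⁻ t in Set.Ioi (0:ℝ), ENNReal.ofReal (Φ |f t|) := by
  classical
  obtain ⟨hp0, hq0⟩ := hMO
  set r : ℝ := (p + pΦ)/2 with hrdef
  set r₂ : ℝ := (r + pΦ)/2 with hr₂def
  have hp_pos : 0 < p := lt_of_lt_of_le one_pos hp
  have hrp : p < r := by rw [hrdef]; linarith
  have hr_pos : 0 < r := hp_pos.trans hrp
  have hrpΦ : r < pΦ := by rw [hrdef]; linarith
  have hrr₂ : r < r₂ := by rw [hr₂def]; linarith
  have hr₂pΦ : r₂ < pΦ := by rw [hr₂def]; linarith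
  have hr₂1 : 1 ≤ r₂ := by linarith
  set α : ℝ := 1/p - 1/r with hαdef
  have hα_pos : 0 < α := by
    rw [hαdef]
    have := one_div_lt_one_div_of_lt hp_pos hrp
    linarith
  have hα1 : α ≤ 1 := by
    rw [hαdef]
    have h1p : 1/p ≤ 1 := by rw [div_le_one hp_pos]; exact hp
    have : (0:ℝ) < 1/r := by positivity
    linarith
  have hc1 : 1 ≤ α⁻¹ := (one_le_inv₀ hα_pos).2 hα1
  have hqΦ0 : qΦ ≠ 0 := by
    have : (0:ℝ) < qΦ := by linarith
    exact this.ne'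
  obtain ⟨K, hK, hmaster⟩ := hΦ.master hp0 hq0 hqΦ0 hr₂1 hr₂pΦ hc1
  have hΦ1 : 0 < Φ 1 := hΦ.pos_of_index hq0 hqΦ0 one_pos
  set c₂ : ℝ := K / Φ 1 with hc₂def
  set c₁ : ℝ := K * α * (α⁻¹) ^ r₂ with hc₁def
  have hc₁pos : 0 < c₁ := by
    rw [hc₁def]
    have := Real.rpow_pos_of_pos (inv_pos.2 hα_pos) r₂
    positivity
  set β : ℝ := α - 1 + (1/r) * r₂ with hβdef
  have hβα : α < β := by
    rw [hβdef]
    have h1 : (1:ℝ) < (1/r) * r₂ := by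
      rw [div_mul_eq_mul_div, lt_div_iff₀ hr_pos, one_mul]; linarith
    linarith
  have hβpos : 0 < β := hα_pos.trans hβα
  set C : ℝ := c₁ / β with hCdef
  have hCpos : 0 < C := by positivity
  refine ⟨C, hCpos, ?_⟩
  intro f hf hfin
  set I := ∫⁻ t in Ioi (0:ℝ), ENNReal.ofReal (Φ |f t|) with hIdef
  set W : ℝ → ℝ := fun u => α * u ^ (α - 1) with hWdef
  have hWmeas : Measurable W := (measurable_rpow_const' (α-1)).const_mul α
  set μ : Measure ℝ :=
    (volume.restrict (Ioc 0 1)).withDensity (fun u => ENNReal.ofReal (W u)) with hμdef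
  have hμprob : IsProbabilityMeasure μ := by
    constructor
    rw [hμdef, withDensity_apply _ MeasurableSet.univ, Measure.restrict_univ]
    exact lint_density_one hα_pos
  haveI := hμprob
  set G : ℝ → ℝ → ℝ := fun t u => (α⁻¹ * |u| ^ (1/r)) * |f (t * u)| with hGdef
  have hGnn : ∀ t u, 0 ≤ G t u := by
    intro t u
    simp only [hGdef]
    positivity
  have hΦabs : Continuous fun x : ℝ => Φ |x| := hΦ.continuous_comp_abs
  -- pointwise master bound
  have hptwise : ∀ t : ℝ, ∀ u ∈ Ioc (0:ℝ) 1,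
      W u * Φ (G t u) ≤ c₁ * u ^ β * Φ |f (t*u)| := by
    intro t u hu
    have hu0 : 0 < u := hu.1
    have hur : u ^ (1/r) ≤ 1 := Real.rpow_le_one hu0.le hu.2 (by positivity)
    have hmul_pos : 0 < α⁻¹ * u ^ (1/r) := by positivity
    have hle : α⁻¹ * u ^ (1/r) ≤ α⁻¹ := by
      nth_rewrite 2 [← mul_one α⁻¹]
      exact mul_le_mul_of_nonneg_left hur (by positivity)
    have h1 := hmaster (α⁻¹ * u ^ (1/r)) (|f (t*u)|) hmul_pos hle (abs_nonneg _)
    have hGu : G t u = (α⁻¹ * u ^ (1/r)) * |f (t * u)| := by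
      simp only [hGdef]; rw [abs_of_pos hu0]
    have hexp : (α⁻¹ * u ^ (1/r)) ^ r₂ = (α⁻¹) ^ r₂ * u ^ ((1/r) * r₂) := by
      rw [Real.mul_rpow (by positivity) (by positivity), ← Real.rpow_mul hu0.le]
    have hWnn : 0 ≤ W u := mul_nonneg hα_pos.le (Real.rpow_nonneg hu0.le _)
    have h2 : u ^ (α-1) * u ^ ((1/r)*r₂) = u ^ β := by
      rw [← Real.rpow_add hu0, hβdef]
    rw [hGu]
    calc W u * Φ ((α⁻¹ * u ^ (1/r)) * |f (t*u)|)
        ≤ W u * (K * (α⁻¹ * u ^ (1/r)) ^ r₂ * Φ |f (t*u)|) :=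
          mul_le_mul_of_nonneg_left h1 hWnn
      _ = (K * α * (α⁻¹) ^ r₂) * (u ^ (α-1) * u ^ ((1/r)*r₂)) * Φ |f (t*u)| := by
          rw [hexp]; simp only [hWdef]; ring
      _ = c₁ * u ^ β * Φ |f (t*u)| := by rw [h2, hc₁def]
  -- the majorant J
  set J : ℝ → ENNReal := fun t => ∫⁻ u in Ioc (0:ℝ) 1,
    ENNReal.ofReal (c₁ * u ^ β * Φ |f (t*u)|) with hJdef
  have hFmeas : Measurable fun q : ℝ × ℝ =>
      ENNReal.ofReal (c₁ * q.2 ^ β * Φ |f (q.1 * q.2)|) := by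
    apply ENNReal.measurable_ofReal.comp
    apply Measurable.mul
    · exact ((measurable_rpow_const' β).comp measurable_snd).const_mul c₁
    · exact hΦabs.measurable.comp (hf.comp (measurable_fst.mul measurable_snd))
  have hJmeas : Measurable J := by
    rw [hJdef]
    exact Measurable.lintegral_prod_right (f := fun t u =>
      ENNReal.ofReal (c₁ * u ^ β * Φ |f (t*u)|)) hFmeas
  -- the total: ∫ J = C * I
  have hS1 : ∫⁻ t in Ioi (0:ℝ), J t = ENNReal.ofReal C * I := by
    rw [hJdef]
    rw [lintegral_lintegral_swap (hFmeas.aemeasurable)]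
    have hinner : ∀ u ∈ Ioc (0:ℝ) 1,
        (∫⁻ t in Ioi (0:ℝ), ENNReal.ofReal (c₁ * u ^ β * Φ |f (t*u)|))
        = ENNReal.ofReal (c₁ * u ^ (β-1)) * I := by
      intro u hu
      have hu0 : 0 < u := hu.1
      have hpt : ∀ t : ℝ, ENNReal.ofReal (c₁ * u ^ β * Φ |f (t*u)|)
          = ENNReal.ofReal (c₁ * u ^ β) * ENNReal.ofReal (Φ |f (t*u)|) := by
        intro t
        rw [← ENNReal.ofReal_mul (by positivity)]
      simp only [hpt]
      rw [lintegral_const_mul _ (show Measurable fun t : ℝ => ENNReal.ofReal (Φ |f (t*u)|) from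
        ENNReal.measurable_ofReal.comp (hΦabs.measurable.comp (hf.comp (measurable_mul_const u))))]
      rw [lintegral_scale_Ioi (g := fun s => ENNReal.ofReal (Φ |f s|))
        (show Measurable fun s : ℝ => ENNReal.ofReal (Φ |f s|) from
          ENNReal.measurable_ofReal.comp (hΦabs.measurable.comp hf)) hu0]
      rw [← mul_assoc, ← ENNReal.ofReal_mul (by positivity), ← hIdef]
      congr 2
      rw [mul_assoc, ← Real.rpow_neg_one u, ← Real.rpow_add hu0,
        show β + -1 = β - 1 from by ring]
    rw [setLIntegral_congr_fun measurableSet_Ioc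
      hinner]
    rw [lintegral_mul_const _ (by
      exact ENNReal.measurable_ofReal.comp ((measurable_rpow_const' (β-1)).const_mul c₁))]
    congr 1
    have hpt2 : ∀ u ∈ Ioc (0:ℝ) 1, ENNReal.ofReal (c₁ * u ^ (β-1))
        = ENNReal.ofReal C * ENNReal.ofReal (β * u ^ (β-1)) := by
      intro u hu
      rw [← ENNReal.ofReal_mul hCpos.le]
      congr 1
      rw [hCdef]
      field_simp
    rw [setLIntegral_congr_fun measurableSet_Ioc hpt2]
    rw [lintegral_const_mul _ (show Measurable fun u : ℝ => ENNReal.ofReal (β * u ^ (β-1)) from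
      ENNReal.measurable_ofReal.comp ((measurable_rpow_const' (β-1)).const_mul β))]
    rw [lint_density_one hβpos, mul_one]
  have hIne : I ≠ ⊤ := hfin.ne
  have hS1fin : (∫⁻ t in Ioi (0:ℝ), J t) < ⊤ := by
    rw [hS1]
    exact ENNReal.mul_lt_top ENNReal.ofReal_lt_top hfin
  have hJfin : ∀ᵐ t ∂(volume.restrict (Ioi (0:ℝ))), J t < ⊤ :=
    ae_lt_top hJmeas hS1fin.ne
  -- per-t estimate
  have hS3 : ∀ᵐ t ∂(volume.restrict (Ioi (0:ℝ))),
      ENNReal.ofReal (Φ |Spinf p f t|) ≤ J t := by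
    filter_upwards [hJfin, ae_restrict_mem measurableSet_Ioi] with t hJt ht
    have ht0 : 0 < t := ht
    have hGmeas : Measurable (G t) := by
      simp only [hGdef]
      exact (((measurable_rpow_const' (1/r)).comp measurable_abs).const_mul α⁻¹).mul
        ((hf.comp (measurable_const_mul t)).abs)
    -- lintegral over μ equals weighted set lintegral
    have hΦGmeas : Measurable fun u : ℝ => Φ (G t u) := by
      have h : (fun u : ℝ => Φ (G t u)) = fun u => Φ |G t u| :=
        funext fun u => by rw [abs_of_nonneg (hGnn t u)]
      rw [h]; exact hΦabs.measurable.comp hGmeas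
    have hwd : ∫⁻ u, ENNReal.ofReal (Φ (G t u)) ∂μ
        = ∫⁻ u in Ioc (0:ℝ) 1,
            ENNReal.ofReal (W u) * ENNReal.ofReal (Φ (G t u)) := by
      rw [hμdef]
      rw [lintegral_withDensity_eq_lintegral_mul _
        (show Measurable fun u : ℝ => ENNReal.ofReal (W u) from
          ENNReal.measurable_ofReal.comp hWmeas)
        (show Measurable fun u : ℝ => ENNReal.ofReal (Φ (G t u)) from
          ENNReal.measurable_ofReal.comp hΦGmeas)]
      simp only [Pi.mul_apply]
    have hwd_le : ∫⁻ u, ENNReal.ofReal (Φ (G t u)) ∂μ ≤ J t := by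
      rw [hwd, hJdef]
      apply setLIntegral_mono_ae
        ((show Measurable fun x : ℝ => ENNReal.ofReal (c₁ * x ^ β * Φ |f (t * x)|) from
          ENNReal.measurable_ofReal.comp (((measurable_rpow_const' β).const_mul c₁).mul
          (hΦabs.measurable.comp (hf.comp (measurable_const_mul t))))).aemeasurable)
        (Filter.Eventually.of_forall ?_)
      intro u hu
      rw [← ENNReal.ofReal_mul (mul_nonneg hα_pos.le (Real.rpow_nonneg hu.1.le _))]
      exact ENNReal.ofReal_le_ofReal (hptwise t u hu)
    have hfinΦG : (∫⁻ u, ENNReal.ofReal (Φ (G t u)) ∂μ) < ⊤ := lt_of_le_of_lt hwd_le hJt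
    -- integrability of Φ ∘ G t
    have hΦGasm : AEStronglyMeasurable (fun u => Φ (G t u)) μ :=
      hΦGmeas.aestronglyMeasurable
    have hΦGnn : 0 ≤ᵐ[μ] fun u => Φ (G t u) :=
      Filter.Eventually.of_forall fun u => hΦ.nonneg (hGnn t u)
    have hΦGint : Integrable (fun u => Φ (G t u)) μ := by
      refine ⟨hΦGasm, ?_⟩
      rw [hasFiniteIntegral_iff_ofReal hΦGnn]
      exact hfinΦG
    -- integrability of G t
    have hGint : Integrable (G t) μ := by
      apply Integrable.mono' ((integrable_const (1:ℝ)).add (hΦGint.const_mul c₂))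
        hGmeas.aestronglyMeasurable
      apply Filter.Eventually.of_forall
      intro u
      rw [Real.norm_eq_abs, abs_of_nonneg (hGnn t u)]
      exact hΦ.superlinear hK hr₂1 hΦ1
        (fun a s ha ha1 hs => hmaster a s ha (ha1.trans hc1) hs) (hGnn t u)
    -- Jensen
    have hjen : Φ (∫ u, G t u ∂μ) ≤ ∫ u, Φ (G t u) ∂μ :=
      hΦ.convexOn.map_integral_le hΦ.continuousOn isClosed_Ici
        (Filter.Eventually.of_forall fun u => mem_Ici.2 (hGnn t u)) hGint hΦGint
    -- |Spinf| ≤ ∫ G dμ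
    have hSle : |Spinf p f t| ≤ ∫ u, G t u ∂μ := by
      rw [spinf_repr hp_pos f ht0]
      have habs : |∫ x in (0:ℝ)..1, x ^ (1/p - 1) * f (t * x)|
          ≤ ∫ x in (0:ℝ)..1, |x ^ (1/p - 1) * f (t * x)| :=
        intervalIntegral.abs_integral_le_integral_abs zero_le_one
      have heq1 : (∫ x in (0:ℝ)..1, |x ^ (1/p - 1) * f (t * x)|)
          = ∫ x in Ioc (0:ℝ) 1, |x ^ (1/p - 1) * f (t * x)| :=
        intervalIntegral.integral_of_le zero_le_one
      have heq2 : (∫ u, G t u ∂μ)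
          = ∫ x in Ioc (0:ℝ) 1, |x ^ (1/p - 1) * f (t * x)| := by
        rw [hμdef]
        rw [show (fun u => ENNReal.ofReal (W u))
            = fun u => (((W u).toNNReal : NNReal) : ENNReal) from rfl]
        rw [integral_withDensity_eq_integral_smul hWmeas.real_toNNReal (G t)]
        apply setIntegral_congr_ae measurableSet_Ioc
        apply Filter.Eventually.of_forall
        intro u hu
        have hu0 : 0 < u := hu.1
        have hWnn : 0 ≤ W u := mul_nonneg hα_pos.le (Real.rpow_nonneg hu0.le _)
        rw [NNReal.smul_def, smul_eq_mul, Real.coe_toNNReal _ hWnn]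
        rw [abs_mul, abs_of_nonneg (Real.rpow_nonneg hu0.le _)]
        simp only [hWdef, hGdef]
        rw [abs_of_pos hu0]
        have hcomb : α * u ^ (α-1) * (α⁻¹ * u ^ (1/r)) = u ^ (1/p - 1) := by
          have h3 : u ^ (α-1) * u ^ (1/r) = u ^ (1/p - 1) := by
            rw [← Real.rpow_add hu0]
            congr 1
            rw [hαdef]; ring
          calc α * u ^ (α-1) * (α⁻¹ * u ^ (1/r))
              = (α * α⁻¹) * (u ^ (α-1) * u ^ (1/r)) := by ring
            _ = u ^ (1/p - 1) := by rw [mul_inv_cancel₀ hα_pos.ne', one_mul, h3]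
        rw [← mul_assoc, hcomb]
      rw [heq2]
      exact le_trans habs (le_of_eq heq1)
    -- conclude
    have h1 : Φ |Spinf p f t| ≤ Φ (∫ u, G t u ∂μ) := by
      apply hΦ.monotoneOn (mem_Ici.2 (abs_nonneg _))
        (mem_Ici.2 (le_trans (abs_nonneg _) hSle)) hSle
    calc ENNReal.ofReal (Φ |Spinf p f t|) ≤ ENNReal.ofReal (∫ u, Φ (G t u) ∂μ) :=
          ENNReal.ofReal_le_ofReal (le_trans h1 hjen)
      _ = ∫⁻ u, ENNReal.ofReal (Φ (G t u)) ∂μ :=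
          ofReal_integral_eq_lintegral_ofReal hΦGint hΦGnn
      _ ≤ J t := hwd_le
  calc ∫⁻ t in Ioi (0:ℝ), ENNReal.ofReal (Φ |Spinf p f t|)
      ≤ ∫⁻ t in Ioi (0:ℝ), J t := lintegral_mono_ae hS3
    _ = ENNReal.ofReal C * I := hS1
end

section
/- Let Φ be an Orlicz function satisfying the Δ₂-condition, let 1 < p < q < ∞ and set θ = 1/p − 1/q. Let Ȳ = (Y₀,Y₁) be a compatible couple of Banach spaces, y ∈ Σ(Ȳ), and let u be a representation of y with respect to Ȳ such that u is Bochner integrable in Δ(Ȳ) with respect to dt/t over each interval [2^ν, 2^{ν+1}]. For ν ∈ ℤ set u_ν = ∫_{2^ν}^{2^{ν+1}} u(t) dt/t. Then y = Σ_{ν∈ℤ} u_ν is a discrete representation of y with respect to Ȳ, and there is a constant C depending only on Φ, p and q such that Σ_{ν∈ℤ} 2^{ν/θ} Φ(2^{−ν/(θp)} J(2^ν, u_ν; Ȳ)) ≤ C ∫₀^∞ Φ(t^{−1/p} J(t^{1/p−1/q}, u(t^{1/p−1/q}); Ȳ)) dt (the inequality holding in [0,∞]). -/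
open MeasureTheory Filter Set

/-- `y = Σ_{ν∈ℤ} v ν` is a discrete representation of `y` with respect to the couple
`(Y₀,Y₁)`: each `v ν ∈ Δ(Ȳ)` and the bilateral partial sums converge to `y` in `Σ(Ȳ)`
(whose norm is `K(1,·)`). -/
def IsDiscreteRepresentation
    {E Y₀ Y₁ : Type*} [AddCommGroup E] [Module ℝ E] [TopologicalSpace E]
    [NormedAddCommGroup Y₀] [NormedSpace ℝ Y₀]
    [NormedAddCommGroup Y₁] [NormedSpace ℝ Y₁]
    (j₀ : Y₀ →L[ℝ] E) (j₁ : Y₁ →L[ℝ] E) (y : E) (v : ℤ → E) : Prop :=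
  (∀ ν : ℤ, InDelta j₀ j₁ (v ν)) ∧
  (∀ N M : ℕ, InSigma j₀ j₁ (y - ∑ ν ∈ Finset.Icc (-(N:ℤ)) (M:ℤ), v ν)) ∧
  Filter.Tendsto
    (fun NM : ℕ × ℕ => Kfun j₀ j₁ 1 (y - ∑ ν ∈ Finset.Icc (-(NM.1:ℤ)) (NM.2:ℤ), v ν))
    Filter.atTop (nhds 0)


open scoped ENNReal

namespace Hlp

lemma orlicz_nonneg {Φ : ℝ → ℝ} (hΦ : IsOrliczFunction Φ) {x : ℝ} (hx : 0 ≤ x) : 0 ≤ Φ x := by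
  have := hΦ.monotoneOn (Set.self_mem_Ici) (Set.mem_Ici.2 hx) hx
  simpa [hΦ.map_zero] using this

lemma orlicz_slope {Φ : ℝ → ℝ} (hΦ : IsOrliczFunction Φ) {c x : ℝ} (hc : 0 < c) (hx : 0 ≤ x) :
    Φ c / c * x - Φ c ≤ Φ x := by
  have hΦc : 0 ≤ Φ c := orlicz_nonneg hΦ hc.le
  rcases le_or_gt x c with h | h
  · have h1 : Φ c / c * x ≤ Φ c := by
      calc Φ c / c * x ≤ Φ c / c * c := by
            apply mul_le_mul_of_nonneg_left h (div_nonneg hΦc hc.le)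
        _ = Φ c := by field_simp
    have := orlicz_nonneg hΦ hx
    linarith
  · have hx0 : 0 < x := hc.trans h
    have hcx : Φ c ≤ c / x * Φ x := by
      have ha : (0:ℝ) ≤ 1 - c / x := by
        have : c / x ≤ 1 := by rw [div_le_one hx0]; exact h.le
        linarith
      have hb : (0:ℝ) ≤ c / x := by positivity
      have hab : (1 - c / x) + c / x = 1 := by ring
      have h2 := hΦ.convexOn.2 (Set.self_mem_Ici (a := (0:ℝ))) (Set.mem_Ici.2 hx) ha hb hab
      simpa [hΦ.map_zero, smul_eq_mul, div_mul_cancel₀ _ hx0.ne'] using h2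
    have : Φ c / c * x ≤ Φ x := by
      rw [div_mul_eq_mul_div, div_le_iff₀ hc]
      calc Φ c * x ≤ (c / x * Φ x) * x := by
            exact mul_le_mul_of_nonneg_right hcx hx
        _ = Φ x * c := by field_simp
    linarith

lemma orlicz_delta2_iter {Φ : ℝ → ℝ} (hΦ : IsOrliczFunction Φ) {C : ℝ} (hC1 : 1 ≤ C)
    (h : ∀ t, 0 ≤ t → Φ (2 * t) ≤ C * Φ t) :
    ∀ k : ℕ, ∀ t, 0 ≤ t → Φ (2 ^ k * t) ≤ C ^ k * Φ t := by
  intro k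
  induction k with
  | zero => intro t ht; simp
  | succ n ih =>
    intro t ht
    have h1 : Φ (2 ^ (n + 1) * t) = Φ (2 ^ n * (2 * t)) := by ring_nf
    rw [h1]
    calc Φ (2 ^ n * (2 * t)) ≤ C ^ n * Φ (2 * t) := ih _ (by positivity)
      _ ≤ C ^ n * (C * Φ t) := by
          apply mul_le_mul_of_nonneg_left (h t ht) (by positivity)
      _ = C ^ (n + 1) * Φ t := by ring

lemma orlicz_scale {Φ : ℝ → ℝ} (hΦ : IsOrliczFunction Φ) {C : ℝ} (hC1 : 1 ≤ C)
    (h : ∀ t, 0 ≤ t → Φ (2 * t) ≤ C * Φ t) {k : ℕ} {lam x : ℝ}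
    (hl0 : 0 ≤ lam) (hl : lam ≤ 2 ^ k) (hx : 0 ≤ x) :
    Φ (lam * x) ≤ C ^ k * Φ x := by
  have h1 : Φ (lam * x) ≤ Φ (2 ^ k * x) := by
    apply hΦ.monotoneOn (Set.mem_Ici.2 (by positivity)) (Set.mem_Ici.2 (by positivity))
    exact mul_le_mul_of_nonneg_right hl hx
  exact h1.trans (orlicz_delta2_iter hΦ hC1 h k x hx)

/-- The core averaging inequality avoiding Jensen. -/
lemma orlicz_core {Φ : ℝ → ℝ} (hΦ : IsOrliczFunction Φ) {I : Set ℝ} (hI : MeasurableSet I)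
    {L m : ℝ} (hL : volume I = ENNReal.ofReal L) (hL0 : 0 < L) {g : ℝ → ℝ}
    (hg0 : ∀ t ∈ I, 0 ≤ g t) (hgi : IntegrableOn g I) (hm0 : 0 ≤ m)
    (hm : m * L ≤ ∫ t in I, g t) :
    ENNReal.ofReal (L * Φ (m / 2)) ≤ ∫⁻ t in I, ENNReal.ofReal (Φ (g t)) := by
  rcases eq_or_lt_of_le hm0 with rfl | hmpos
  · simp [hΦ.map_zero]
  obtain ⟨c, hc⟩ : ∃ c : ℝ, c = m / 2 := ⟨_, rfl⟩
  rw [← hc]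
  have hc0 : 0 < c := by rw [hc]; positivity
  obtain ⟨s, hs⟩ : ∃ s : ℝ, s = Φ c / c := ⟨_, rfl⟩
  have hs0 : 0 ≤ s := hs ▸ div_nonneg (orlicz_nonneg hΦ hc0.le) hc0.le
  have hΦc : 0 ≤ Φ c := orlicz_nonneg hΦ hc0.le
  have hIfin : volume I < ⊤ := by rw [hL]; exact ENNReal.ofReal_lt_top
  have hconst : IntegrableOn (fun _ : ℝ => Φ c) I := integrableOn_const hIfin.ne
  have hzero : IntegrableOn (fun _ : ℝ => (0:ℝ)) I := integrableOn_const hIfin.ne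
  have hsub : IntegrableOn (fun t => s * g t - Φ c) I := (hgi.const_mul s).sub hconst
  set F : ℝ → ℝ := fun t => max (s * g t - Φ c) 0 with hF
  have hFi : IntegrableOn F I := by
    have h5 : IntegrableOn ((fun t => s * g t - Φ c) ⊔ (fun _ : ℝ => (0:ℝ))) I := hsub.sup hzero
    have h6 : ((fun t => s * g t - Φ c) ⊔ (fun _ : ℝ => (0:ℝ))) = F := by
      funext t; simp [hF, Pi.sup_apply]
    rwa [h6] at h5
  have hFnn : 0 ≤ᵐ[volume.restrict I] F := Filter.Eventually.of_forall fun t => le_max_right _ _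
  have key : ENNReal.ofReal (∫ t in I, F t) ≤ ∫⁻ t in I, ENNReal.ofReal (Φ (g t)) := by
    rw [ofReal_integral_eq_lintegral_ofReal hFi hFnn]
    refine lintegral_mono_ae ?_
    filter_upwards [ae_restrict_mem hI] with t ht
    apply ENNReal.ofReal_le_ofReal
    apply max_le _ (orlicz_nonneg hΦ (hg0 t ht))
    rw [hs]
    exact orlicz_slope hΦ hc0 (hg0 t ht)
  refine le_trans ?_ key
  apply ENNReal.ofReal_le_ofReal
  have h1 : ∫ t in I, (s * g t - Φ c) ≤ ∫ t in I, F t := by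
    apply setIntegral_mono_on hsub hFi hI
    intro t _; exact le_max_left _ _
  refine le_trans ?_ h1
  have h2 : ∫ t in I, (s * g t - Φ c) = s * (∫ t in I, g t) - L * Φ c := by
    have hmul : ∫ t in I, (s * g t) = s * ∫ t in I, g t := by
      simpa [smul_eq_mul] using integral_smul (μ := volume.restrict I) s g
    rw [integral_sub (hgi.const_mul s) hconst, hmul, setIntegral_const, measureReal_def,
      hL, ENNReal.toReal_ofReal hL0.le, smul_eq_mul]
  rw [h2]
  have h3 : s * (m * L) ≤ s * ∫ t in I, g t := mul_le_mul_of_nonneg_left hm hs0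
  have h4 : s * (m * L) = 2 * Φ c * L := by
    rw [hs, hc]; field_simp
  have h5 : 2 * Φ c * L ≤ s * ∫ t in I, g t := h4 ▸ h3
  linarith [h5]

end Hlp

section CoupleHlp

variable {E : Type*} [AddCommGroup E] [Module ℝ E] [TopologicalSpace E]
variable {X₀ X₁ : Type*}
variable [NormedAddCommGroup X₀] [NormedSpace ℝ X₀]
variable [NormedAddCommGroup X₁] [NormedSpace ℝ X₁]

namespace Hlp

lemma Jfun_eq_max {i₀ : X₀ →L[ℝ] E} {i₁ : X₁ →L[ℝ] E}
    (h₀ : Function.Injective ⇑i₀) (h₁ : Function.Injective ⇑i₁) {x : E} {a : X₀} {b : X₁}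
    (ha : i₀ a = x) (hb : i₁ b = x) (t : ℝ) :
    Jfun i₀ i₁ t x = max ‖a‖ (t * ‖b‖) := by
  unfold Jfun
  have : {r : ℝ | ∃ a' b', i₀ a' = x ∧ i₁ b' = x ∧ r = max ‖a'‖ (t * ‖b'‖)}
      = {max ‖a‖ (t * ‖b‖)} := by
    ext r
    constructor
    · rintro ⟨a', b', ha', hb', rfl⟩
      have e1 : a' = a := h₀ (ha'.trans ha.symm)
      have e2 : b' = b := h₁ (hb'.trans hb.symm)
      simp [e1, e2]
    · rintro rfl
      exact ⟨a, b, ha, hb, rfl⟩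
  rw [this, csInf_singleton]

/-- If two interval-integrable functions are compatible through `j₀, j₁`, so are their
integrals. -/
lemma integral_compat [T2Space E] [CompleteSpace X₀] [CompleteSpace X₁]
    (j₀ : X₀ →L[ℝ] E) (j₁ : X₁ →L[ℝ] E) {f₀ : ℝ → X₀} {f₁ : ℝ → X₁} {a b : ℝ}
    (h₀ : IntervalIntegrable f₀ volume a b) (h₁ : IntervalIntegrable f₁ volume a b)
    (heq : ∀ t ∈ Set.uIcc a b, j₀ (f₀ t) = j₁ (f₁ t)) :
    j₀ (∫ t in a..b, f₀ t) = j₁ (∫ t in a..b, f₁ t) := by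
  classical
  set S : Submodule ℝ (X₀ × X₁) :=
    { carrier := {z | j₀ z.1 = j₁ z.2}
      add_mem' := by
        intro x y hx hy
        simp only [Set.mem_setOf_eq] at *
        simp [map_add, hx, hy]
      zero_mem' := by simp
      smul_mem' := by
        intro r x hx
        simp only [Set.mem_setOf_eq] at *
        simp [_root_.map_smul, hx] } with hS
  haveI hclosed : IsClosed (S : Set (X₀ × X₁)) := by
    have : (S : Set (X₀ × X₁)) =
        (fun z : X₀ × X₁ => (j₀ z.1, j₁ z.2)) ⁻¹' (Set.diagonal E) := by
      ext z; simp [hS, Set.diagonal, eq_comm]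
    rw [this]
    exact (isClosed_diagonal (X := E)).preimage
      ((j₀.continuous.comp continuous_fst).prodMk (j₁.continuous.comp continuous_snd))
  let π : (X₀ × X₁) →L[ℝ] ((X₀ × X₁) ⧸ S) :=
    LinearMap.mkContinuous S.mkQ 1 (fun z => by
      simpa using Submodule.Quotient.norm_mk_le (S := S) z)
  set w : ℝ → X₀ × X₁ := fun t => (f₀ t, f₁ t) with hw
  have hwint : IntervalIntegrable w volume a b :=
    ⟨Integrable.prodMk h₀.1 h₁.1, Integrable.prodMk h₀.2 h₁.2⟩
  have hπw : ∀ t ∈ Set.uIcc a b, π (w t) = 0 := by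
    intro t ht
    have : w t ∈ S := heq t ht
    simpa [π, Submodule.mkQ_apply] using (Submodule.Quotient.mk_eq_zero S).2 this
  have hint0 : ∫ t in a..b, π (w t) = 0 := by
    rw [intervalIntegral.integral_congr (g := fun _ => (0 : (X₀ × X₁) ⧸ S)) hπw]
    simp
  have hmem : (∫ t in a..b, w t) ∈ S := by
    have := π.intervalIntegral_comp_comm hwint
    rw [hint0] at this
    have h0 : S.mkQ (∫ t in a..b, w t) = 0 := by
      simpa [π, Submodule.mkQ_apply] using this.symm
    exact (Submodule.Quotient.mk_eq_zero S).1 h0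
  have hfst : (∫ t in a..b, w t).1 = ∫ t in a..b, f₀ t := by
    have := (ContinuousLinearMap.fst ℝ X₀ X₁).intervalIntegral_comp_comm hwint
    simpa [hw] using this.symm
  have hsnd : (∫ t in a..b, w t).2 = ∫ t in a..b, f₁ t := by
    have := (ContinuousLinearMap.snd ℝ X₀ X₁).intervalIntegral_comp_comm hwint
    simpa [hw] using this.symm
  have : j₀ (∫ t in a..b, w t).1 = j₁ (∫ t in a..b, w t).2 := hmem
  rwa [hfst, hsnd] at this

end Hlp

end CoupleHlp

namespace Hlp

/-- 1-D change of variables for the Lebesgue lower integral under `s ↦ s ^ θ`. -/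
lemma lintegral_rpow_image {θ : ℝ} (hθ : 0 < θ) {b b' : ℝ} (hb : 0 < b)
    (G : ℝ → ℝ≥0∞) :
    ∫⁻ t in (fun s : ℝ => s ^ θ) '' (Set.Ioc b b'), G t
      = ∫⁻ s in Set.Ioc b b', ENNReal.ofReal (θ * s ^ (θ - 1)) * G (s ^ θ) := by
  have hderiv : ∀ s ∈ Set.Ioc b b', HasFDerivWithinAt (fun s : ℝ => s ^ θ)
      ((1 : ℝ →L[ℝ] ℝ).smulRight (θ * s ^ (θ - 1))) (Set.Ioc b b') s := by
    intro s hs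
    have hs0 : s ≠ 0 := (hb.trans_le hs.1.le).ne'
    exact ((Real.hasDerivAt_rpow_const (Or.inl hs0)).hasFDerivAt).hasFDerivWithinAt
  have hinj : Set.InjOn (fun s : ℝ => s ^ θ) (Set.Ioc b b') := by
    intro x hx y hy hxy
    have hx0 : 0 < x := hb.trans_le hx.1.le
    have hy0 : 0 < y := hb.trans_le hy.1.le
    rcases lt_trichotomy x y with h | h | h
    · exact absurd hxy (ne_of_lt (Real.rpow_lt_rpow hx0.le h hθ))
    · exact h
    · exact absurd hxy.symm (ne_of_lt (Real.rpow_lt_rpow hy0.le h hθ))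
  have := lintegral_image_eq_lintegral_abs_det_fderiv_mul volume measurableSet_Ioc hderiv hinj G
  rw [this]
  refine setLIntegral_congr_fun measurableSet_Ioc ?_
  intro s hs
  have hs0 : 0 < s := hb.trans_le hs.1.le
  beta_reduce
  rw [show (1 : ℝ →L[ℝ] ℝ).smulRight (θ * s ^ (θ - 1)) = ContinuousLinearMap.toSpanSingleton ℝ (θ * s ^ (θ - 1)) by ext; simp,
    ContinuousLinearMap.det_toSpanSingleton, abs_of_nonneg (by positivity)]

lemma rpow_image_Ioc {θ : ℝ} (hθ : 0 < θ) {b b' : ℝ} (hb : 0 < b) (hbb' : b ≤ b') :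
    (fun s : ℝ => s ^ θ) '' (Set.Ioc b b') = Set.Ioc (b ^ θ) (b' ^ θ) := by
  ext t
  constructor
  · rintro ⟨s, ⟨hs1, hs2⟩, rfl⟩
    exact ⟨Real.rpow_lt_rpow hb.le hs1 hθ, Real.rpow_le_rpow (hb.trans hs1).le hs2 hθ.le⟩
  · rintro ⟨ht1, ht2⟩
    have hbθ : (0:ℝ) < b ^ θ := Real.rpow_pos_of_pos hb θ
    have ht0 : 0 < t := hbθ.trans ht1
    refine ⟨t ^ θ⁻¹, ⟨?_, ?_⟩, ?_⟩
    · have hbeq : ((b ^ θ) ^ θ⁻¹ : ℝ) = b := by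
        rw [← Real.rpow_mul hb.le, mul_inv_cancel₀ hθ.ne', Real.rpow_one]
      rw [← hbeq]
      exact Real.rpow_lt_rpow hbθ.le ht1 (by positivity)
    · have hbeq : ((b' ^ θ) ^ θ⁻¹ : ℝ) = b' := by
        rw [← Real.rpow_mul (hb.trans_le hbb').le, mul_inv_cancel₀ hθ.ne', Real.rpow_one]
      rw [← hbeq]
      exact Real.rpow_le_rpow ht0.le ht2 (by positivity)
    · show (t ^ θ⁻¹) ^ θ = t
      rw [← Real.rpow_mul ht0.le, inv_mul_cancel₀ hθ.ne', Real.rpow_one]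

lemma iUnion_Ioc_zpow_rpow {y : ℝ} (hy : 1 < y) :
    (⋃ ν : ℤ, Set.Ioc (y ^ ν) (y ^ (ν + 1))) = Set.Ioi (0:ℝ) := by
  have hy0 : (0:ℝ) < y := lt_trans one_pos hy
  ext x
  simp only [Set.mem_iUnion, Set.mem_Ioi]
  constructor
  · rintro ⟨ν, h1, _⟩
    exact lt_trans (zpow_pos hy0 ν) h1
  · intro hx
    obtain ⟨n, hn⟩ := exists_mem_Ioc_zpow hx hy
    exact ⟨n, hn.1, hn.2⟩

lemma pairwise_disjoint_Ioc_zpow {y : ℝ} (hy : 1 < y) :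
    Pairwise (Function.onFun Disjoint fun ν : ℤ => Set.Ioc (y ^ ν) (y ^ (ν + 1))) := by
  have hy1 : (1:ℝ) ≤ y := hy.le
  have key : ∀ m n : ℤ, m < n →
      Disjoint (Set.Ioc (y ^ m) (y ^ (m + 1))) (Set.Ioc (y ^ n) (y ^ (n + 1))) := by
    intro m n hmn
    rw [Set.Ioc_disjoint_Ioc]
    refine le_trans (min_le_left _ _) (le_trans ?_ (le_max_right _ _))
    exact zpow_le_zpow_right₀ hy1 (by omega)
  intro m n hmn
  rcases lt_or_gt_of_ne hmn with h | h
  · exact key m n h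
  · exact (key n m h).symm

end Hlp

namespace Hlp

lemma sum_Icc_integral {Y : Type*} [NormedAddCommGroup Y] [NormedSpace ℝ Y] [CompleteSpace Y]
    {f : ℝ → Y} (hf : ∀ ν : ℤ, IntervalIntegrable f volume ((2:ℝ)^ν) ((2:ℝ)^(ν+1)))
    (N M : ℕ) :
    ∑ ν ∈ Finset.Icc (-(N:ℤ)) (M:ℤ), (∫ t in ((2:ℝ)^ν)..((2:ℝ)^(ν+1)), f t) =
      ∫ t in ((2:ℝ)^(-(N:ℤ)))..((2:ℝ)^((M:ℤ)+1)), f t := by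
  have hint : ∀ k : ℕ, k < N+M+1 → IntervalIntegrable f volume
      ((fun k : ℕ => (2:ℝ)^(-(N:ℤ)+(k:ℤ))) k) ((fun k : ℕ => (2:ℝ)^(-(N:ℤ)+(k:ℤ))) (k+1)) := by
    intro k hk
    simp only []
    have e : -(N:ℤ) + ((k+1:ℕ):ℤ) = (-(N:ℤ)+(k:ℤ))+1 := by push_cast; ring
    rw [e]
    exact hf _
  have key := intervalIntegral.sum_integral_adjacent_intervals
    (μ := volume) (a := fun k : ℕ => (2:ℝ)^(-(N:ℤ)+(k:ℤ))) (n := N+M+1) hint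
  · have e0 : -(N:ℤ) + ((0:ℕ):ℤ) = -(N:ℤ) := by push_cast; ring
    have e1 : -(N:ℤ) + ((N+M+1:ℕ):ℤ) = (M:ℤ)+1 := by push_cast; ring
    rw [e0, e1] at key
    rw [← key]
    refine Finset.sum_nbij' (i := fun ν : ℤ => (ν + (N:ℤ)).toNat)
      (j := fun k : ℕ => -(N:ℤ) + (k:ℤ)) ?_ ?_ ?_ ?_ ?_
    · intro ν hν
      simp only [Finset.mem_Icc] at hν
      simp only [Finset.mem_range]
      omega
    · intro k hk
      simp only [Finset.mem_range] at hk
      simp only [Finset.mem_Icc]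
      omega
    · intro ν hν
      simp only [Finset.mem_Icc] at hν
      omega
    · intro k hk
      simp only [Finset.mem_range] at hk
      omega
    · intro ν hν
      simp only [Finset.mem_Icc] at hν
      have e2 : -(N:ℤ) + (((ν + (N:ℤ)).toNat : ℕ) : ℤ) = ν := by omega
      rw [e2]
      have e3 : -(N:ℤ) + ((((ν + (N:ℤ)).toNat + 1 : ℕ)) : ℤ) = ν + 1 := by omega
      rw [e3]

lemma tendsto_two_zpow_neg :
    Tendsto (fun N : ℕ => (2:ℝ)^(-(N:ℤ))) atTop (nhdsWithin 0 (Set.Ioi 0)) := by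
  rw [tendsto_nhdsWithin_iff]
  constructor
  · have h : (fun N : ℕ => (2:ℝ)^(-(N:ℤ))) = fun N : ℕ => ((1:ℝ)/2)^N := by
      funext N
      rw [zpow_neg, ← zpow_natCast]
      simp
    rw [h]
    exact tendsto_pow_atTop_nhds_zero_of_lt_one (by norm_num) (by norm_num)
  · exact Filter.Eventually.of_forall fun N => zpow_pos (by norm_num : (0:ℝ) < 2) _

lemma tendsto_two_zpow_add_one :
    Tendsto (fun M : ℕ => (2:ℝ)^((M:ℤ)+1)) atTop atTop := by
  have h : (fun M : ℕ => (2:ℝ)^((M:ℤ)+1)) = (fun n : ℕ => (2:ℝ)^n) ∘ (fun M => M + 1) := by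
    funext M
    simp only [Function.comp_apply]
    rw [show ((M:ℤ)+1) = ((M+1:ℕ):ℤ) by push_cast; ring, zpow_natCast]
  rw [h]
  exact (tendsto_pow_atTop_atTop_of_one_lt (by norm_num : (1:ℝ) < 2)).comp
    (tendsto_add_atTop_nat 1)

end Hlp

namespace Hlp
lemma setint_const_mul {f : ℝ → ℝ} {I : Set ℝ} (a : ℝ) :
    ∫ t in I, a * f t = a * ∫ t in I, f t := by
  simpa [smul_eq_mul] using integral_smul (μ := MeasureTheory.volume.restrict I) a f
end Hlp

/-- discretization of a representation `u` of `y`: the pieces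
`u_ν = ∫_{2^ν}^{2^{ν+1}} u(t) dt/t` form a discrete representation of `y`, and the
discrete weighted Φ-moment sum of their J-functionals is dominated by the continuous
one, with `θ = 1/p − 1/q`. -/
theorem statement10 (Φ : ℝ → ℝ) (hΦ : IsOrliczFunction Φ) (hΔ₂ : Delta2 Φ)
    (p q θ : ℝ) (hp : 1 < p) (hpq : p < q) (hθ : θ = 1/p - 1/q) :
    ∃ C : ℝ, 0 < C ∧
      ∀ (E : Type*) [AddCommGroup E] [Module ℝ E] [TopologicalSpace E] [T2Space E]
        (Y₀ Y₁ : Type*)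
        [NormedAddCommGroup Y₀] [NormedSpace ℝ Y₀] [CompleteSpace Y₀]
        [NormedAddCommGroup Y₁] [NormedSpace ℝ Y₁] [CompleteSpace Y₁]
        (j₀ : Y₀ →L[ℝ] E) (j₁ : Y₁ →L[ℝ] E),
        Function.Injective ⇑j₀ → Function.Injective ⇑j₁ →
        ∀ (y : E) (u : ℝ → E) (u₀ : ℝ → Y₀) (u₁ : ℝ → Y₁),
          InSigma j₀ j₁ y → IsRepresentation j₀ j₁ y u →
          (∀ t : ℝ, 0 < t → j₀ (u₀ t) = u t) →
          (∀ t : ℝ, 0 < t → j₁ (u₁ t) = u t) →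
          (∀ ν : ℤ, IntervalIntegrable (fun t => t⁻¹ • u₀ t) volume
            ((2:ℝ) ^ ν) ((2:ℝ) ^ (ν+1))) →
          (∀ ν : ℤ, IntervalIntegrable (fun t => t⁻¹ • u₁ t) volume
            ((2:ℝ) ^ ν) ((2:ℝ) ^ (ν+1))) →
          IsDiscreteRepresentation j₀ j₁ y
            (fun ν : ℤ => j₀ (∫ t in ((2:ℝ) ^ ν)..((2:ℝ) ^ (ν+1)), t⁻¹ • u₀ t)) ∧
          (∑' ν : ℤ, ENNReal.ofReal ((2:ℝ) ^ ((ν:ℝ)/θ) *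
              Φ ((2:ℝ) ^ (-(ν:ℝ)/(θ*p)) *
                Jfun j₀ j₁ ((2:ℝ) ^ ν)
                  (j₀ (∫ t in ((2:ℝ) ^ ν)..((2:ℝ) ^ (ν+1)), t⁻¹ • u₀ t))))) ≤
            ENNReal.ofReal C *
              ∫⁻ t in Set.Ioi (0:ℝ),
                ENNReal.ofReal
                  (Φ (t ^ (-(1/p)) * Jfun j₀ j₁ (t ^ θ) (u (t ^ θ)))) := by
  classical
  -- constants
  obtain ⟨C₀, hC₀pos, hC₀⟩ := hΔ₂
  obtain ⟨D, hDdef⟩ : ∃ D : ℝ, D = max C₀ 1 := ⟨_, rfl⟩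
  have hD1 : 1 ≤ D := hDdef ▸ le_max_right _ _
  have hD : ∀ t, 0 ≤ t → Φ (2 * t) ≤ D * Φ t := by
    intro t ht
    refine (hC₀ t ht).trans ?_
    exact mul_le_mul_of_nonneg_right (hDdef ▸ le_max_left _ _) (Hlp.orlicz_nonneg hΦ ht)
  have hp0 : (0:ℝ) < p := lt_trans one_pos hp
  have hq0 : (0:ℝ) < q := lt_trans hp0 hpq
  have hθ0 : 0 < θ := by
    rw [hθ]
    have : 1/q < 1/p := one_div_lt_one_div_of_lt hp0 hpq
    linarith
  have hθ1 : θ < 1 := by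
    rw [hθ]
    have h1 : 1/p < 1 := by rw [div_lt_one hp0]; exact hp
    have h2 : 0 < 1/q := by positivity
    linarith
  have hθp0 : 0 < θ * p := mul_pos hθ0 hp0
  obtain ⟨k, hk⟩ : ∃ k : ℕ, 1/(θ*p) ≤ (k:ℝ) := ⟨⌈1/(θ*p)⌉₊, Nat.le_ceil _⟩
  refine ⟨D^(k+1) * θ, by positivity, ?_⟩
  intro E _ _ _ _ Y₀ Y₁ _ _ _ _ _ _ j₀ j₁ inj₀ inj₁ y u u₀ u₁ hySigma hrep hu₀ hu₁ hi₀ hi₁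
  -- the discrete pieces
  have hle2 : ∀ ν : ℤ, (2:ℝ)^ν ≤ (2:ℝ)^(ν+1) :=
    fun ν => zpow_le_zpow_right₀ one_le_two (by omega)
  have hpos2 : ∀ ν : ℤ, (0:ℝ) < (2:ℝ)^ν := fun ν => zpow_pos two_pos ν
  have hcompat : ∀ ν : ℤ,
      j₀ (∫ t in ((2:ℝ)^ν)..((2:ℝ)^(ν+1)), t⁻¹ • u₀ t)
        = j₁ (∫ t in ((2:ℝ)^ν)..((2:ℝ)^(ν+1)), t⁻¹ • u₁ t) := by
    intro ν
    refine Hlp.integral_compat j₀ j₁ (hi₀ ν) (hi₁ ν) ?_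
    intro t ht
    rw [Set.uIcc_of_le (hle2 ν)] at ht
    have ht0 : 0 < t := lt_of_lt_of_le (hpos2 ν) ht.1
    simp only [ContinuousLinearMap.map_smul, hu₀ t ht0, hu₁ t ht0]
  -- the structure representation data
  obtain ⟨w₀, hw₀, hw₀m, hw₀i, hw₀s, hw₀t⟩ := hrep.repr₀
  have hw₀eq : ∀ t : ℝ, 0 < t → w₀ t = u₀ t := by
    intro t ht
    exact inj₀ (by rw [hw₀ t ht, hu₀ t ht])
  have bigEq : ∀ N M : ℕ,
      (∑ ν ∈ Finset.Icc (-(N:ℤ)) (M:ℤ), j₀ (∫ t in ((2:ℝ)^ν)..((2:ℝ)^(ν+1)), t⁻¹ • u₀ t))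
        = j₀ (∫ t in ((2:ℝ)^(-(N:ℤ)))..((2:ℝ)^((M:ℤ)+1)), t⁻¹ • w₀ t) := by
    intro N M
    rw [← map_sum, Hlp.sum_Icc_integral hi₀ N M]
    congr 1
    apply intervalIntegral.integral_congr
    intro t ht
    have hle : (2:ℝ)^(-(N:ℤ)) ≤ (2:ℝ)^((M:ℤ)+1) :=
      zpow_le_zpow_right₀ one_le_two (by omega)
    rw [Set.uIcc_of_le hle] at ht
    have ht0 : 0 < t := lt_of_lt_of_le (hpos2 _) ht.1
    simp only []
    rw [hw₀eq t ht0]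
  refine ⟨⟨?_, ?_, ?_⟩, ?_⟩
  · -- InDelta
    intro ν
    exact ⟨_, _, rfl, (hcompat ν).symm⟩
  · -- InSigma of partial remainders
    intro N M
    rw [bigEq N M]
    exact hw₀s _ _ (zpow_pos two_pos _)
  · -- convergence of partial sums
    have hφ : Tendsto (fun NM : ℕ × ℕ => ((2:ℝ)^(-(NM.1:ℤ)), (2:ℝ)^((NM.2:ℤ)+1)))
        atTop ((nhdsWithin (0:ℝ) (Set.Ioi 0)) ×ˢ (atTop : Filter ℝ)) := by
      rw [← prod_atTop_atTop_eq]
      exact Hlp.tendsto_two_zpow_neg.prodMap Hlp.tendsto_two_zpow_add_one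
    have hcomp := hw₀t.comp hφ
    refine Tendsto.congr ?_ hcomp
    intro NM
    simp only [Function.comp_apply]
    rw [bigEq NM.1 NM.2]
  -- Part 2 : the quantitative estimate
  -- notation
  · set J : ℝ → ℝ := fun t => max ‖u₀ t‖ (t * ‖u₁ t‖) with hJdef
    have hJf : ∀ t : ℝ, 0 < t → Jfun j₀ j₁ t (u t) = J t := fun t ht =>
      Hlp.Jfun_eq_max inj₀ inj₁ (hu₀ t ht) (hu₁ t ht) t
    have hJ0 : ∀ t, 0 ≤ J t := fun t => le_trans (norm_nonneg _) (le_max_left _ _)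
    obtain ⟨Y, hYdef⟩ : ∃ Y : ℝ, Y = (2:ℝ)^(1/θ) := ⟨_, rfl⟩
    have hY1 : 1 < Y := by
      rw [hYdef, Real.one_lt_rpow_iff_of_pos two_pos]
      exact Or.inl ⟨one_lt_two, by positivity⟩
    have hform : ∀ ν : ℤ, (2:ℝ)^((ν:ℝ)/θ) = Y ^ ν := by
      intro ν
      rw [← Real.rpow_intCast Y ν, hYdef, ← Real.rpow_mul (by norm_num : (0:ℝ) ≤ 2)]
      congr 1
      field_simp
    have hform' : ∀ ν : ℤ, (2:ℝ)^(((ν:ℝ)+1)/θ) = Y ^ (ν+1) := by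
      intro ν
      have : ((ν:ℝ)+1) = (((ν+1:ℤ)):ℝ) := by push_cast; ring
      rw [this, hform (ν+1)]
    -- main per-ν estimate
    have main : ∀ ν : ℤ,
        ENNReal.ofReal ((2:ℝ) ^ ((ν:ℝ)/θ) *
            Φ ((2:ℝ) ^ (-(ν:ℝ)/(θ*p)) *
              Jfun j₀ j₁ ((2:ℝ) ^ ν)
                (j₀ (∫ t in ((2:ℝ) ^ ν)..((2:ℝ) ^ (ν+1)), t⁻¹ • u₀ t)))) ≤
          ENNReal.ofReal (D^(k+1) * θ) *
            ∫⁻ s in Set.Ioc (Y ^ ν) (Y ^ (ν+1)),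
              ENNReal.ofReal (Φ (s ^ (-(1/p)) * Jfun j₀ j₁ (s ^ θ) (u (s ^ θ)))) := by
      intro ν
      obtain ⟨a, hadef⟩ : ∃ a : ℝ, a = (2:ℝ)^ν := ⟨_, rfl⟩
      have ha : 0 < a := hadef ▸ hpos2 ν
      have h2a : (2:ℝ)^(ν+1) = 2*a := by
        rw [hadef, zpow_add_one₀ (two_ne_zero)]; ring
      obtain ⟨b, hbdef⟩ : ∃ b : ℝ, b = (2:ℝ)^((ν:ℝ)/θ) := ⟨_, rfl⟩
      obtain ⟨b', hb'def⟩ : ∃ b' : ℝ, b' = (2:ℝ)^(((ν:ℝ)+1)/θ) := ⟨_, rfl⟩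
      have hb : 0 < b := hbdef ▸ Real.rpow_pos_of_pos two_pos _
      have hb' : 0 < b' := hb'def ▸ Real.rpow_pos_of_pos two_pos _
      have hbb' : b ≤ b' := by
        rw [hbdef, hb'def]
        apply Real.rpow_le_rpow_of_exponent_le one_le_two
        exact (div_le_div_iff_of_pos_right hθ0).2 (by linarith)
      have hbθa : b ^ θ = a := by
        rw [hbdef, ← Real.rpow_mul (by norm_num : (0:ℝ) ≤ 2),
          div_mul_cancel₀ _ hθ0.ne', Real.rpow_intCast, hadef]
      have hb'θa : b' ^ θ = 2*a := by
        rw [hb'def, ← Real.rpow_mul (by norm_num : (0:ℝ) ≤ 2),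
          div_mul_cancel₀ _ hθ0.ne']
        rw [show ((ν:ℝ)+1) = (((ν+1:ℤ)):ℝ) by push_cast; ring, Real.rpow_intCast, h2a]
      obtain ⟨cc, hccdef⟩ : ∃ cc : ℝ, cc = (2:ℝ)^(-(ν:ℝ)/(θ*p)) := ⟨_, rfl⟩
      have hcc : 0 < cc := hccdef ▸ Real.rpow_pos_of_pos two_pos _
      have hle' : a ≤ 2*a := by linarith
      -- integrability data on I := Ioc a (2a)
      have hii₀ : IntervalIntegrable (fun t => t⁻¹ • u₀ t) volume a (2*a) := by
        rw [← h2a, hadef]; exact hi₀ ν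
      have hii₁ : IntervalIntegrable (fun t => t⁻¹ • u₁ t) volume a (2*a) := by
        rw [← h2a, hadef]; exact hi₁ ν
      have hIOn₀ : IntegrableOn (fun t => t⁻¹ • u₀ t) (Set.Ioc a (2*a)) :=
        (intervalIntegrable_iff_integrableOn_Ioc_of_le hle').1 hii₀
      have hIOn₁ : IntegrableOn (fun t => t⁻¹ • u₁ t) (Set.Ioc a (2*a)) :=
        (intervalIntegrable_iff_integrableOn_Ioc_of_le hle').1 hii₁
      have hn₀ : IntegrableOn (fun t => ‖t⁻¹ • u₀ t‖) (Set.Ioc a (2*a)) := hIOn₀.norm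
      have hn₁ : IntegrableOn (fun t => ‖t⁻¹ • u₁ t‖) (Set.Ioc a (2*a)) := hIOn₁.norm
      -- integrability of t⁻¹ * J t and J on I
      have htmul : IntegrableOn (fun t => t * ‖t⁻¹ • u₁ t‖) (Set.Ioc a (2*a)) := by
        apply (intervalIntegrable_iff_integrableOn_Ioc_of_le hle').1
        exact hii₁.norm.continuousOn_mul continuousOn_id
      have htJ : IntegrableOn (fun t => t⁻¹ * J t) (Set.Ioc a (2*a)) := by
        have hsup : IntegrableOn
            ((fun t => ‖t⁻¹ • u₀ t‖) ⊔ (fun t => t * ‖t⁻¹ • u₁ t‖)) (Set.Ioc a (2*a)) :=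
          hn₀.sup htmul
        apply hsup.congr_fun ?_ measurableSet_Ioc
        intro t ht
        have ht0 : 0 < t := ha.trans ht.1
        simp only [Pi.sup_apply, hJdef]
        rw [norm_smul, norm_smul, Real.norm_eq_abs, abs_of_pos (inv_pos.2 ht0),
          mul_max_of_nonneg _ _ (inv_pos.2 ht0).le]
        congr 1
        · ring
      have htJi : IntervalIntegrable (fun t => t⁻¹ * J t) volume a (2*a) :=
        (intervalIntegrable_iff_integrableOn_Ioc_of_le hle').2 htJ
      have hJI : IntegrableOn J (Set.Ioc a (2*a)) := by
        have := (intervalIntegrable_iff_integrableOn_Ioc_of_le hle').1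
          (htJi.continuousOn_mul continuousOn_id)
        apply this.congr_fun ?_ measurableSet_Ioc
        intro t ht
        have ht0 : 0 < t := ha.trans ht.1
        simp only []
        field_simp
        rfl
      -- bound the J-functional of the piece
      have hJν : Jfun j₀ j₁ ((2:ℝ)^ν)
          (j₀ (∫ t in ((2:ℝ) ^ ν)..((2:ℝ) ^ (ν+1)), t⁻¹ • u₀ t))
          = max ‖∫ t in ((2:ℝ) ^ ν)..((2:ℝ) ^ (ν+1)), t⁻¹ • u₀ t‖
              ((2:ℝ)^ν * ‖∫ t in ((2:ℝ) ^ ν)..((2:ℝ) ^ (ν+1)), t⁻¹ • u₁ t‖) :=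
        Hlp.Jfun_eq_max inj₀ inj₁ rfl (hcompat ν).symm _
      have hA : ‖∫ t in ((2:ℝ) ^ ν)..((2:ℝ) ^ (ν+1)), t⁻¹ • u₀ t‖
          ≤ ∫ t in Set.Ioc a (2*a), t⁻¹ * J t := by
        rw [hadef.symm, h2a]
        refine le_trans (intervalIntegral.norm_integral_le_integral_norm hle') ?_
        rw [intervalIntegral.integral_of_le hle']
        apply setIntegral_mono_on hn₀ htJ measurableSet_Ioc
        intro t ht
        have ht0 : 0 < t := ha.trans ht.1
        rw [norm_smul, Real.norm_eq_abs, abs_of_pos (inv_pos.2 ht0)]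
        apply mul_le_mul_of_nonneg_left _ (inv_pos.2 ht0).le
        exact le_max_left _ _
      have hB : (2:ℝ)^ν * ‖∫ t in ((2:ℝ) ^ ν)..((2:ℝ) ^ (ν+1)), t⁻¹ • u₁ t‖
          ≤ ∫ t in Set.Ioc a (2*a), t⁻¹ * J t := by
        rw [hadef.symm, h2a]
        have h1 : ‖∫ t in a..(2*a), t⁻¹ • u₁ t‖ ≤ ∫ t in Set.Ioc a (2*a), ‖t⁻¹ • u₁ t‖ := by
          refine le_trans (intervalIntegral.norm_integral_le_integral_norm hle') ?_
          rw [intervalIntegral.integral_of_le hle']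
        calc a * ‖∫ t in a..(2*a), t⁻¹ • u₁ t‖
            ≤ a * ∫ t in Set.Ioc a (2*a), ‖t⁻¹ • u₁ t‖ :=
              mul_le_mul_of_nonneg_left h1 ha.le
          _ = ∫ t in Set.Ioc a (2*a), a * ‖t⁻¹ • u₁ t‖ := (Hlp.setint_const_mul a).symm
          _ ≤ ∫ t in Set.Ioc a (2*a), t⁻¹ * J t := by
              apply setIntegral_mono_on (hn₁.const_mul a) htJ measurableSet_Ioc
              intro t ht
              have ht0 : 0 < t := ha.trans ht.1
              rw [norm_smul, Real.norm_eq_abs, abs_of_pos (inv_pos.2 ht0)]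
              have h2 : a * (t⁻¹ * ‖u₁ t‖) ≤ t⁻¹ * (t * ‖u₁ t‖) := by
                rw [show t⁻¹ * (t * ‖u₁ t‖) = (t⁻¹ * t) * ‖u₁ t‖ by ring,
                  inv_mul_cancel₀ ht0.ne', one_mul]
                calc a * (t⁻¹ * ‖u₁ t‖) ≤ t * (t⁻¹ * ‖u₁ t‖) := by
                      apply mul_le_mul_of_nonneg_right ht.1.le (by positivity)
                  _ = ‖u₁ t‖ := by field_simp
              refine h2.trans ?_
              apply mul_le_mul_of_nonneg_left _ (inv_pos.2 ht0).le
              exact le_max_right _ _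
      have hJνnn : 0 ≤ Jfun j₀ j₁ ((2:ℝ)^ν)
          (j₀ (∫ t in ((2:ℝ) ^ ν)..((2:ℝ) ^ (ν+1)), t⁻¹ • u₀ t)) := by
        rw [hJν]; exact le_trans (norm_nonneg _) (le_max_left _ _)
      have hJνle : Jfun j₀ j₁ ((2:ℝ)^ν)
          (j₀ (∫ t in ((2:ℝ) ^ ν)..((2:ℝ) ^ (ν+1)), t⁻¹ • u₀ t))
          ≤ ∫ t in Set.Ioc a (2*a), t⁻¹ * J t := by
        rw [hJν]; exact max_le hA hB
      obtain ⟨Jν, hJνdef⟩ : ∃ x : ℝ, x = Jfun j₀ j₁ ((2:ℝ)^ν)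
          (j₀ (∫ t in ((2:ℝ) ^ ν)..((2:ℝ) ^ (ν+1)), t⁻¹ • u₀ t)) := ⟨_, rfl⟩
      rw [← hJνdef] at hJνnn hJνle ⊢
      have hstep : a * Jν ≤ ∫ t in Set.Ioc a (2*a), J t := by
        calc a * Jν ≤ a * ∫ t in Set.Ioc a (2*a), t⁻¹ * J t :=
              mul_le_mul_of_nonneg_left hJνle ha.le
          _ = ∫ t in Set.Ioc a (2*a), a * (t⁻¹ * J t) := (Hlp.setint_const_mul a).symm
          _ ≤ ∫ t in Set.Ioc a (2*a), J t := by
              apply setIntegral_mono_on (htJ.const_mul a) hJI measurableSet_Ioc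
              intro t ht
              have ht0 : 0 < t := ha.trans ht.1
              calc a * (t⁻¹ * J t) ≤ t * (t⁻¹ * J t) := by
                    apply mul_le_mul_of_nonneg_right ht.1.le
                    positivity
                _ = J t := by field_simp
      -- apply the core lemma
      have hvol : volume (Set.Ioc a (2*a)) = ENNReal.ofReal a := by
        rw [Real.volume_Ioc]; congr 1; ring
      have hgI : IntegrableOn (fun t => cc * J t) (Set.Ioc a (2*a)) := hJI.const_mul cc
      have hm0 : 0 ≤ cc * Jν := mul_nonneg hcc.le hJνnn
      have hmm : (cc * Jν) * a ≤ ∫ t in Set.Ioc a (2*a), cc * J t := by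
        calc (cc * Jν) * a = cc * (a * Jν) := by ring
          _ ≤ cc * ∫ t in Set.Ioc a (2*a), J t := mul_le_mul_of_nonneg_left hstep hcc.le
          _ = ∫ t in Set.Ioc a (2*a), cc * J t := (Hlp.setint_const_mul cc).symm
      have hcore := Hlp.orlicz_core hΦ measurableSet_Ioc hvol ha
        (fun t _ => mul_nonneg hcc.le (hJ0 t)) hgI hm0 hmm
      have hΦm : Φ (cc * Jν) ≤ D * Φ ((cc * Jν)/2) := by
        have := hD ((cc * Jν)/2) (by positivity)
        rw [show 2*((cc * Jν)/2) = cc * Jν by ring] at this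
        exact this
      -- change of variables
      have himg : (fun s : ℝ => s ^ θ) '' (Set.Ioc b b') = Set.Ioc a (2*a) := by
        rw [Hlp.rpow_image_Ioc hθ0 hb hbb', hbθa, hb'θa]
      have hchg := Hlp.lintegral_rpow_image hθ0 (b' := b') hb
        (G := fun t => ENNReal.ofReal (Φ (cc * J t)))
      rw [himg] at hchg
      -- pointwise comparison on (b, b']
      have hpt : ∀ s ∈ Set.Ioc b b',
          ENNReal.ofReal (θ * s^(θ-1)) * ENNReal.ofReal (Φ (cc * J (s^θ)))
            ≤ ENNReal.ofReal (θ * (a/b) * D^k) *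
                ENNReal.ofReal (Φ (s ^ (-(1/p)) * Jfun j₀ j₁ (s ^ θ) (u (s ^ θ)))) := by
        intro s hs
        have hs0 : 0 < s := hb.trans hs.1
        have hsθ : 0 < s ^ θ := Real.rpow_pos_of_pos hs0 θ
        have hf1 : θ * s^(θ-1) ≤ θ * (a/b) := by
          apply mul_le_mul_of_nonneg_left _ hθ0.le
          have h1 : s^(θ-1) ≤ b^(θ-1) :=
            Real.rpow_le_rpow_of_nonpos hb hs.1.le (by linarith)
          refine h1.trans_eq ?_
          rw [Real.rpow_sub hb, Real.rpow_one, hbθa]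
        have hJt : J (s^θ) = Jfun j₀ j₁ (s ^ θ) (u (s ^ θ)) := (hJf _ hsθ).symm
        have hJtnn : 0 ≤ Jfun j₀ j₁ (s ^ θ) (u (s ^ θ)) := hJt ▸ hJ0 (s^θ)
        have hf2 : Φ (cc * J (s^θ)) ≤ D^k * Φ (s ^ (-(1/p)) * Jfun j₀ j₁ (s ^ θ) (u (s ^ θ))) := by
          have hrfl : s^(1/p) * s^(-(1/p)) = 1 := by
            rw [← Real.rpow_add hs0]; norm_num
          have harg : cc * J (s^θ)
              = (cc * s^(1/p)) * (s ^ (-(1/p)) * Jfun j₀ j₁ (s ^ θ) (u (s ^ θ))) := by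
            rw [hJt, show (cc * s^(1/p)) * (s ^ (-(1/p)) * Jfun j₀ j₁ (s ^ θ) (u (s ^ θ)))
              = cc * ((s^(1/p) * s^(-(1/p))) * Jfun j₀ j₁ (s ^ θ) (u (s ^ θ))) from by ring,
              hrfl, one_mul]
          rw [harg]
          apply Hlp.orlicz_scale hΦ hD1 hD (by positivity)
          · -- cc * s^(1/p) ≤ 2^k
            have h1 : s^(1/p) ≤ b'^(1/p) :=
              Real.rpow_le_rpow hs0.le hs.2 (by positivity)
            have h2 : cc * b'^(1/p) = (2:ℝ)^(1/(θ*p)) := by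
              rw [hccdef, hb'def, ← Real.rpow_mul (by norm_num : (0:ℝ) ≤ 2),
                ← Real.rpow_add two_pos]
              congr 1
              field_simp
              ring
            calc cc * s^(1/p) ≤ cc * b'^(1/p) := mul_le_mul_of_nonneg_left h1 hcc.le
              _ = (2:ℝ)^(1/(θ*p)) := h2
              _ ≤ (2:ℝ)^((k:ℝ)) := Real.rpow_le_rpow_of_exponent_le one_le_two hk
              _ = (2:ℝ)^k := by rw [Real.rpow_natCast]
          · exact mul_nonneg (Real.rpow_nonneg hs0.le _) hJtnn
        calc ENNReal.ofReal (θ * s^(θ-1)) * ENNReal.ofReal (Φ (cc * J (s^θ)))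
            ≤ ENNReal.ofReal (θ * (a/b)) *
                ENNReal.ofReal (D^k * Φ (s ^ (-(1/p)) * Jfun j₀ j₁ (s ^ θ) (u (s ^ θ)))) := by
              exact mul_le_mul' (ENNReal.ofReal_le_ofReal hf1) (ENNReal.ofReal_le_ofReal hf2)
          _ = ENNReal.ofReal (θ * (a/b) * D^k) *
                ENNReal.ofReal (Φ (s ^ (-(1/p)) * Jfun j₀ j₁ (s ^ θ) (u (s ^ θ)))) := by
              rw [ENNReal.ofReal_mul (by positivity : (0:ℝ) ≤ D^k),
                ENNReal.ofReal_mul (by positivity : (0:ℝ) ≤ θ * (a/b))]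
              ring
      have hEν : (∫⁻ t in Set.Ioc a (2*a), ENNReal.ofReal (Φ (cc * J t)))
          ≤ ENNReal.ofReal (θ * (a/b) * D^k) *
            ∫⁻ s in Set.Ioc b b',
              ENNReal.ofReal (Φ (s ^ (-(1/p)) * Jfun j₀ j₁ (s ^ θ) (u (s ^ θ)))) := by
        rw [hchg]
        calc (∫⁻ s in Set.Ioc b b',
              ENNReal.ofReal (θ * s^(θ-1)) * ENNReal.ofReal (Φ (cc * J (s^θ))))
            ≤ ∫⁻ s in Set.Ioc b b', ENNReal.ofReal (θ * (a/b) * D^k) *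
                ENNReal.ofReal (Φ (s ^ (-(1/p)) * Jfun j₀ j₁ (s ^ θ) (u (s ^ θ)))) := by
              refine lintegral_mono_ae ?_
              filter_upwards [ae_restrict_mem measurableSet_Ioc] with s hs
              exact hpt s hs
          _ = ENNReal.ofReal (θ * (a/b) * D^k) *
              ∫⁻ s in Set.Ioc b b',
                ENNReal.ofReal (Φ (s ^ (-(1/p)) * Jfun j₀ j₁ (s ^ θ) (u (s ^ θ)))) :=
              lintegral_const_mul' _ _ ENNReal.ofReal_ne_top
      -- assemble
      rw [← hform ν, ← hform' ν, ← hbdef, ← hb'def, ← hccdef]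
      calc ENNReal.ofReal (b * Φ (cc * Jν))
          ≤ ENNReal.ofReal (b * (D * Φ ((cc * Jν)/2))) := by
            apply ENNReal.ofReal_le_ofReal
            exact mul_le_mul_of_nonneg_left hΦm hb.le
        _ = ENNReal.ofReal (b * D / a) * ENNReal.ofReal (a * Φ ((cc * Jν)/2)) := by
            rw [← ENNReal.ofReal_mul (by positivity : (0:ℝ) ≤ b * D / a)]
            congr 1
            field_simp
        _ ≤ ENNReal.ofReal (b * D / a) *
              ∫⁻ t in Set.Ioc a (2*a), ENNReal.ofReal (Φ (cc * J t)) :=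
            mul_le_mul_right hcore _
        _ ≤ ENNReal.ofReal (b * D / a) * (ENNReal.ofReal (θ * (a/b) * D^k) *
              ∫⁻ s in Set.Ioc b b',
                ENNReal.ofReal (Φ (s ^ (-(1/p)) * Jfun j₀ j₁ (s ^ θ) (u (s ^ θ))))) :=
            mul_le_mul_right hEν _
        _ = ENNReal.ofReal (D^(k+1) * θ) *
              ∫⁻ s in Set.Ioc b b',
                ENNReal.ofReal (Φ (s ^ (-(1/p)) * Jfun j₀ j₁ (s ^ θ) (u (s ^ θ)))) := by
            rw [← mul_assoc, ← ENNReal.ofReal_mul (by positivity : (0:ℝ) ≤ b * D / a)]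
            congr 2
            field_simp
            ring
    -- sum over ν
    calc (∑' ν : ℤ, ENNReal.ofReal ((2:ℝ) ^ ((ν:ℝ)/θ) *
            Φ ((2:ℝ) ^ (-(ν:ℝ)/(θ*p)) *
              Jfun j₀ j₁ ((2:ℝ) ^ ν)
                (j₀ (∫ t in ((2:ℝ) ^ ν)..((2:ℝ) ^ (ν+1)), t⁻¹ • u₀ t)))))
        ≤ ∑' ν : ℤ, ENNReal.ofReal (D^(k+1) * θ) *
            ∫⁻ s in Set.Ioc (Y ^ ν) (Y ^ (ν+1)),
              ENNReal.ofReal (Φ (s ^ (-(1/p)) * Jfun j₀ j₁ (s ^ θ) (u (s ^ θ)))) :=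
          ENNReal.tsum_le_tsum main
      _ = ENNReal.ofReal (D^(k+1) * θ) * ∑' ν : ℤ,
            ∫⁻ s in Set.Ioc (Y ^ ν) (Y ^ (ν+1)),
              ENNReal.ofReal (Φ (s ^ (-(1/p)) * Jfun j₀ j₁ (s ^ θ) (u (s ^ θ)))) :=
          ENNReal.tsum_mul_left
      _ = ENNReal.ofReal (D^(k+1) * θ) *
            ∫⁻ t in Set.Ioi (0:ℝ),
              ENNReal.ofReal (Φ (t ^ (-(1/p)) * Jfun j₀ j₁ (t ^ θ) (u (t ^ θ)))) := by
          congr 1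
          rw [← Hlp.iUnion_Ioc_zpow_rpow hY1,
            lintegral_iUnion (fun _ => measurableSet_Ioc)
              (Hlp.pairwise_disjoint_Ioc_zpow hY1) _]
end

section
/- Let Φ be an Orlicz function with Matuzewska–Orlicz indices satisfying 1 < p_Φ ≤ q_Φ < ∞. Then there exists a constant C, depending only on Φ, such that for every nonincreasing function g : (0,∞) → [0,∞), ∫₀^∞ Φ(g(t)) dt ≤ ∫₀^∞ Φ(t⁻¹ ∫₀^t g(s) ds) dt ≤ C ∫₀^∞ Φ(g(t)) dt (the inequalities holding in [0,∞]). -/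
open MeasureTheory Filter Set ENNReal

/-- Extension of an Orlicz function to `[0,∞]`, sending `∞` to `∞`. -/
noncomputable def orliczExt (Φ : ℝ → ℝ) (x : ℝ≥0∞) : ℝ≥0∞ :=
  if x = ⊤ then ⊤ else ENNReal.ofReal (Φ x.toReal)

/-- The averaging (Hardy) operator `t ↦ t⁻¹ ∫₀^t g(s) ds`, with values in `[0,∞]`. -/
noncomputable def hardyAvg (g : ℝ → ℝ) (t : ℝ) : ℝ≥0∞ :=
  (ENNReal.ofReal t)⁻¹ * ∫⁻ s in Set.Ioc (0:ℝ) t, ENNReal.ofReal (g s)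

variable {Φ : ℝ → ℝ}

lemma IsOrliczFunction.nonneg_s14 (hΦ : IsOrliczFunction Φ) {x : ℝ} (hx : 0 ≤ x) : 0 ≤ Φ x := by
  simpa [hΦ.map_zero] using hΦ.monotoneOn (le_refl (0:ℝ)) hx hx

lemma IsOrliczFunction.scale_le (hΦ : IsOrliczFunction Φ) {l x : ℝ} (hl0 : 0 ≤ l) (hl1 : l ≤ 1)
    (hx : 0 ≤ x) : Φ (l * x) ≤ l * Φ x := by
  have h := hΦ.convexOn.2 (mem_Ici.2 hx) (mem_Ici.2 (le_refl (0:ℝ))) hl0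
    (by linarith : (0:ℝ) ≤ 1 - l) (by ring)
  simpa [hΦ.map_zero, smul_eq_mul] using h

/-- If `Φ` vanishes at some positive point, then `orliczM Φ t = 0` (Lean convention) for `t > 1`. -/
lemma orliczM_eq_zero (hΦ : IsOrliczFunction Φ) {a : ℝ} (ha : 0 < a) (hΦa : Φ a = 0)
    {t : ℝ} (ht : 1 < t) : orliczM Φ t = 0 := by
  -- the supremum of the zero set
  set Z : Set ℝ := {x | 0 < x ∧ Φ x = 0} with hZ
  have haZ : a ∈ Z := ⟨ha, hΦa⟩
  obtain ⟨X, hX⟩ := (hΦ.tendsto_atTop.eventually_ge_atTop 1).exists_forall_of_atTop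
  have hbdd : BddAbove Z := by
    refine ⟨max X 0, fun x hx => ?_⟩
    by_contra hc
    push_neg at hc
    have h1 : (1:ℝ) ≤ Φ x := hX x (le_of_lt (lt_of_le_of_lt (le_max_left _ _) hc))
    rw [hx.2] at h1; linarith
  set c := sSup Z with hc
  have hca : a ≤ c := le_csSup hbdd haZ
  have hc0 : 0 < c := lt_of_lt_of_le ha hca
  -- Φ vanishes on [0, c)
  have hzero : ∀ y, 0 ≤ y → y < c → Φ y = 0 := by
    intro y hy0 hyc
    obtain ⟨z, hzZ, hyz⟩ := exists_lt_of_lt_csSup ⟨a, haZ⟩ hyc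
    have := hΦ.monotoneOn (mem_Ici.2 hy0) (mem_Ici.2 (le_of_lt hzZ.1)) (le_of_lt hyz)
    have h0 := hΦ.nonneg_s14 hy0
    rw [hzZ.2] at this; linarith
  -- Φ is positive beyond c
  have hposc : ∀ y, c < y → 0 < Φ y := by
    intro y hcy
    rcases lt_or_eq_of_le (hΦ.nonneg_s14 (le_of_lt (lt_trans hc0 hcy))) with h | h
    · exact h
    · exact absurd (le_csSup hbdd ⟨lt_trans hc0 hcy, h.symm⟩) (not_le.2 hcy)
  -- Φ c = 0 by continuity from the left
  have hΦc : Φ c = 0 := by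
    have hseq : Tendsto (fun n : ℕ => c - c / (n + 2)) atTop (nhds c) := by
      have : Tendsto (fun n : ℕ => c / (n + 2)) atTop (nhds 0) := by
        apply Tendsto.div_atTop tendsto_const_nhds
        exact tendsto_atTop_add_const_right _ 2 (tendsto_natCast_atTop_atTop)
      simpa using tendsto_const_nhds.sub this
    have hmem : ∀ n : ℕ, (fun n : ℕ => c - c / (n + 2)) n ∈ Set.Ici (0:ℝ) := by
      intro n
      have h2 : (0:ℝ) < (n:ℝ) + 2 := by positivity
      have : c / (n + 2) ≤ c / 1 := by
        apply div_le_div_of_nonneg_left (le_of_lt hc0) one_pos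
        linarith
      simp only [mem_Ici]
      rw [div_one] at this
      linarith [div_nonneg (le_of_lt hc0) (le_of_lt h2)]
    have htendsto : Tendsto (fun n : ℕ => Φ (c - c / (n + 2))) atTop (nhds (Φ c)) :=
      ((hΦ.continuousOn c (mem_Ici.2 (le_of_lt hc0))).tendsto).comp
        (tendsto_nhdsWithin_of_tendsto_nhds_of_eventually_within _ hseq
          (Eventually.of_forall hmem))
    have hval : ∀ n : ℕ, Φ (c - c / (n + 2)) = 0 := by
      intro n
      have h2 : (0:ℝ) < (n:ℝ) + 2 := by positivity
      apply hzero _ (hmem n)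
      have : 0 < c / (n + 2) := div_pos hc0 h2
      linarith
    have : Tendsto (fun _ : ℕ => (0:ℝ)) atTop (nhds (Φ c)) := by
      simpa [hval] using htendsto
    exact tendsto_nhds_unique this tendsto_const_nhds
  -- the set is unbounded
  have hnb : ¬ BddAbove {r : ℝ | ∃ s : ℝ, 0 < s ∧ r = Φ (t * s) / Φ s} := by
    intro ⟨B, hB⟩
    -- choose s slightly above c
    have hΦtc : 0 < Φ (t * c) := hposc _ (by nlinarith)
    -- sequence s_n = c + c/(n+2)
    have hseq : Tendsto (fun n : ℕ => c + c / (n + 2)) atTop (nhds c) := by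
      have : Tendsto (fun n : ℕ => c / (n + 2)) atTop (nhds 0) := by
        apply Tendsto.div_atTop tendsto_const_nhds
        exact tendsto_atTop_add_const_right _ 2 (tendsto_natCast_atTop_atTop)
      simpa using tendsto_const_nhds.add this
    have hsn : ∀ n : ℕ, c < c + c / (n + 2) := by
      intro n
      have h2 : (0:ℝ) < (n:ℝ) + 2 := by positivity
      have : 0 < c / (n + 2) := div_pos hc0 h2
      linarith
    have hΦsn : Tendsto (fun n : ℕ => Φ (c + c / (n + 2))) atTop (nhds 0) := by
      rw [← hΦc]
      exact ((hΦ.continuousOn c (mem_Ici.2 (le_of_lt hc0))).tendsto).comp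
        (tendsto_nhdsWithin_of_tendsto_nhds_of_eventually_within _ hseq
          (Eventually.of_forall fun n => mem_Ici.2 (by linarith [hsn n, hc0])))
    -- Φ(s_n) → 0 with Φ(s_n) > 0, so ratios blow up
    have hΦsnpos : ∀ n : ℕ, 0 < Φ (c + c / (n + 2)) := fun n => hposc _ (hsn n)
    have hinv : Tendsto (fun n : ℕ => (Φ (c + c / (n + 2)))⁻¹) atTop atTop := by
      apply tendsto_inv_nhdsGT_zero.comp
      exact tendsto_nhdsWithin_of_tendsto_nhds_of_eventually_within _ hΦsn
        (Eventually.of_forall fun n => hΦsnpos n)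
    have hlarge : Tendsto (fun n : ℕ => Φ (t * c) / Φ (c + c / (n + 2))) atTop atTop := by
      simp only [div_eq_mul_inv]
      exact hinv.const_mul_atTop hΦtc
    obtain ⟨n, hn⟩ := (hlarge.eventually_gt_atTop B).exists
    set s := c + c / (n + 2) with hs
    have hcs : c < s := hsn n
    have hs0 : 0 < s := lt_trans hc0 hcs
    have hnum : Φ (t * c) ≤ Φ (t * s) := by
      apply hΦ.monotoneOn (mem_Ici.2 (by positivity)) (mem_Ici.2 (by positivity))
      nlinarith
    have hmem : Φ (t * s) / Φ s ∈ {r : ℝ | ∃ s : ℝ, 0 < s ∧ r = Φ (t * s) / Φ s} :=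
      ⟨s, hs0, rfl⟩
    have : B < Φ (t * s) / Φ s := by
      refine lt_of_lt_of_le hn ?_
      exact (div_le_div_iff_of_pos_right (hΦsnpos n)).mpr hnum
    exact absurd (hB hmem) (not_le.2 this)
  rw [orliczM, Real.sSup_of_not_bddAbove hnb]

/-- Under the index hypotheses, `Φ` is positive on `(0,∞)`. -/
lemma orlicz_pos (hΦ : IsOrliczFunction Φ) {pΦ qΦ : ℝ}
    (hMO : HasMatuzewskaOrliczIndices Φ pΦ qΦ) (h1 : 1 < pΦ) (hpq : pΦ ≤ qΦ) :
    ∀ x : ℝ, 0 < x → 0 < Φ x := by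
  by_contra hc
  push_neg at hc
  obtain ⟨a, ha, hΦa⟩ := hc
  have hΦa0 : Φ a = 0 := le_antisymm hΦa (hΦ.nonneg_s14 (le_of_lt ha))
  have hz : ∀ t : ℝ, 1 < t → orliczM Φ t = 0 := fun t ht => orliczM_eq_zero hΦ ha hΦa0 ht
  have heq : (fun t : ℝ => Real.log (orliczM Φ t) / Real.log t) =ᶠ[atTop] (fun _ => (0:ℝ)) := by
    filter_upwards [eventually_gt_atTop (1:ℝ)] with t ht
    simp [hz t ht, Real.log_zero]
  have h0 : Filter.Tendsto (fun t : ℝ => Real.log (orliczM Φ t) / Real.log t) atTop (nhds 0) :=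
    Tendsto.congr' heq.symm tendsto_const_nhds
  have : qΦ = 0 := tendsto_nhds_unique hMO.2 h0
  linarith

/-- Elements of the `orliczM` set give scaling bounds. -/
lemma scale_of_M (hΦ : IsOrliczFunction Φ) (hpos : ∀ x : ℝ, 0 < x → 0 < Φ x)
    {t : ℝ} (ht : 0 < t) (hbdd : BddAbove {r : ℝ | ∃ s : ℝ, 0 < s ∧ r = Φ (t * s) / Φ s}) :
    ∀ s : ℝ, 0 < s → Φ (t * s) ≤ orliczM Φ t * Φ s := by
  intro s hs
  have hmem : Φ (t * s) / Φ s ∈ {r : ℝ | ∃ s : ℝ, 0 < s ∧ r = Φ (t * s) / Φ s} := ⟨s, hs, rfl⟩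
  have := le_csSup hbdd hmem
  rw [div_le_iff₀ (hpos s hs)] at this
  simpa [orliczM] using this

lemma M_bddAbove_of_le_one (hΦ : IsOrliczFunction Φ)
    {t : ℝ} (ht0 : 0 < t) (ht1 : t ≤ 1) :
    BddAbove {r : ℝ | ∃ s : ℝ, 0 < s ∧ r = Φ (t * s) / Φ s} := by
  refine ⟨1, fun x hx => ?_⟩
  obtain ⟨s, hs, rfl⟩ := hx
  rcases eq_or_lt_of_le (hΦ.nonneg_s14 (le_of_lt hs)) with h | h
  · simp [← h]
  · rw [div_le_one h]
    exact hΦ.monotoneOn (mem_Ici.2 (by positivity)) (mem_Ici.2 (le_of_lt hs))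
      (by nlinarith)

lemma M_pos (hΦ : IsOrliczFunction Φ) (hpos : ∀ x : ℝ, 0 < x → 0 < Φ x)
    {t : ℝ} (ht0 : 0 < t) (hbdd : BddAbove {r : ℝ | ∃ s : ℝ, 0 < s ∧ r = Φ (t * s) / Φ s}) :
    0 < orliczM Φ t := by
  have hmem : Φ (t * 1) / Φ 1 ∈ {r : ℝ | ∃ s : ℝ, 0 < s ∧ r = Φ (t * s) / Φ s} := ⟨1, one_pos, rfl⟩
  have h := le_csSup hbdd hmem
  have : 0 < Φ (t * 1) / Φ 1 := div_pos (hpos _ (by simpa using ht0)) (hpos 1 one_pos)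
  exact lt_of_lt_of_le this h

/-- Scaling bound from the lower index: `Φ(l x) ≤ l^p Φ(x)` for small `l`. -/
lemma exists_p (hΦ : IsOrliczFunction Φ) {pΦ qΦ : ℝ}
    (hMO : HasMatuzewskaOrliczIndices Φ pΦ qΦ) (h1 : 1 < pΦ) (hpq : pΦ ≤ qΦ) :
    ∃ p : ℝ, 1 < p ∧ ∃ ε : ℝ, 0 < ε ∧ ε ≤ 1/2 ∧
      ∀ l : ℝ, 0 < l → l ≤ ε → ∀ x : ℝ, 0 ≤ x → Φ (l * x) ≤ l ^ p * Φ x := by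
  have hpos := orlicz_pos hΦ hMO h1 hpq
  set p := (1 + pΦ) / 2 with hp
  have hp1 : 1 < p := by rw [hp]; linarith
  have hppΦ : p < pΦ := by rw [hp]; linarith
  have hev : ∀ᶠ t in nhdsWithin (0:ℝ) (Set.Ioi 0),
      p < Real.log (orliczM Φ t) / Real.log t := hMO.1.eventually_const_lt hppΦ
  obtain ⟨u, hu, hδ⟩ := eventually_nhdsWithin_iff.1 hev |>.exists_mem
  obtain ⟨δ, hδ0, hball⟩ := Metric.mem_nhds_iff.1 hu
  refine ⟨p, hp1, min (δ/2) (1/2), by positivity, min_le_right _ _, ?_⟩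
  intro l hl0 hlε x hx
  have hl1 : l ≤ 1/2 := le_trans hlε (min_le_right _ _)
  have hlδ : l < δ := lt_of_le_of_lt (le_trans hlε (min_le_left _ _)) (by linarith)
  have hkey : p < Real.log (orliczM Φ l) / Real.log l := by
    apply hδ l (hball ?_) (mem_Ioi.2 hl0)
    rw [Metric.mem_ball, Real.dist_eq, sub_zero, abs_of_pos hl0]; exact hlδ
  have hbdd := M_bddAbove_of_le_one hΦ hl0 (by linarith)
  have hM0 : 0 < orliczM Φ l := M_pos hΦ hpos hl0 hbdd
  have hlogl : Real.log l < 0 := Real.log_neg hl0 (by linarith)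
  have hlog : Real.log (orliczM Φ l) < p * Real.log l := by
    rw [lt_div_iff_of_neg hlogl] at hkey
    linarith
  have hMlp : orliczM Φ l < l ^ p := by
    have h2 : Real.log (l ^ p) = p * Real.log l := Real.log_rpow hl0 p
    have := hlog.trans_eq h2.symm
    exact (Real.log_lt_log_iff hM0 (Real.rpow_pos_of_pos hl0 p)).1 this
  rcases eq_or_lt_of_le hx with h | h
  · simp [← h, hΦ.map_zero]
  · calc Φ (l * x) ≤ orliczM Φ l * Φ x := scale_of_M hΦ hpos hl0 hbdd x h
      _ ≤ l ^ p * Φ x := by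
          apply mul_le_mul_of_nonneg_right (le_of_lt hMlp) (hΦ.nonneg_s14 (le_of_lt h))

/-- Doubling bound from the upper index. -/
lemma exists_D (hΦ : IsOrliczFunction Φ) {pΦ qΦ : ℝ}
    (hMO : HasMatuzewskaOrliczIndices Φ pΦ qΦ) (h1 : 1 < pΦ) (hpq : pΦ ≤ qΦ) :
    ∃ D : ℝ, 1 ≤ D ∧ ∀ x : ℝ, 0 ≤ x → Φ (2 * x) ≤ D * Φ x := by
  have hpos := orlicz_pos hΦ hMO h1 hpq
  have hq1 : 1 < qΦ := lt_of_lt_of_le h1 hpq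
  have hev1 : ∀ᶠ t in atTop, (1:ℝ) < Real.log (orliczM Φ t) / Real.log t :=
    hMO.2.eventually_const_lt hq1
  have hev2 : ∀ᶠ t in atTop, Real.log (orliczM Φ t) / Real.log t < qΦ + 1 :=
    hMO.2.eventually_lt_const (by linarith)
  obtain ⟨T, hT⟩ := (hev1.and (hev2.and (eventually_ge_atTop (2:ℝ)))).exists_forall_of_atTop
  set t := max T 2 with htdef
  have ht2 : (2:ℝ) ≤ t := le_max_right _ _
  obtain ⟨hr1, hr2, -⟩ := hT t (le_max_left _ _)
  have ht1 : (1:ℝ) < t := by linarith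
  have hlogt : 0 < Real.log t := Real.log_pos ht1
  have hbdd : BddAbove {r : ℝ | ∃ s : ℝ, 0 < s ∧ r = Φ (t * s) / Φ s} := by
    by_contra hnb
    rw [orliczM, Real.sSup_of_not_bddAbove hnb] at hr1
    simp [Real.log_zero] at hr1
    linarith
  have hM0 : 0 < orliczM Φ t := M_pos hΦ hpos (by linarith) hbdd
  have hMle : orliczM Φ t ≤ t ^ (qΦ + 1) := by
    have hlog : Real.log (orliczM Φ t) < (qΦ + 1) * Real.log t := by
      rw [div_lt_iff₀ hlogt] at hr2; linarith
    have h2 : Real.log (t ^ (qΦ + 1)) = (qΦ + 1) * Real.log t := Real.log_rpow (by linarith) _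
    exact le_of_lt ((Real.log_lt_log_iff hM0 (Real.rpow_pos_of_pos (by linarith) _)).1
      (hlog.trans_eq h2.symm))
  refine ⟨t ^ (qΦ + 1), ?_, ?_⟩
  · calc (1:ℝ) = t ^ (0:ℝ) := by rw [Real.rpow_zero]
      _ ≤ t ^ (qΦ + 1) := Real.rpow_le_rpow_of_exponent_le (by linarith) (by linarith)
  · intro x hx
    rcases eq_or_lt_of_le hx with h | h
    · rw [← h, mul_zero, hΦ.map_zero, mul_zero]
    · have s1 : Φ (2 * x) ≤ Φ (t * x) :=
        hΦ.monotoneOn (mem_Ici.2 (by positivity)) (mem_Ici.2 (by positivity)) (by nlinarith)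
      have s2 : Φ (t * x) ≤ orliczM Φ t * Φ x := scale_of_M hΦ hpos (by linarith) hbdd x h
      have s3 : orliczM Φ t * Φ x ≤ t ^ (qΦ + 1) * Φ x :=
        mul_le_mul_of_nonneg_right hMle (hΦ.nonneg_s14 (le_of_lt h))
      linarith

/-- Real-valued average. -/
noncomputable def avgR (g : ℝ → ℝ) (t : ℝ) : ℝ :=
  (∫⁻ s in Set.Ioc (0:ℝ) t, ENNReal.ofReal (g s)).toReal / t

lemma avgR_nonneg (g : ℝ → ℝ) {t : ℝ} (ht : 0 < t) : 0 ≤ avgR g t :=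
  div_nonneg ENNReal.toReal_nonneg (le_of_lt ht)

lemma hardyAvg_toReal {g : ℝ → ℝ} {t : ℝ} (ht : 0 < t)
    (hfin : (∫⁻ s in Set.Ioc (0:ℝ) t, ENNReal.ofReal (g s)) ≠ ⊤) :
    hardyAvg g t ≠ ⊤ ∧ (hardyAvg g t).toReal = avgR g t := by
  have h0 : ENNReal.ofReal t ≠ 0 := by
    simp [ENNReal.ofReal_eq_zero]; linarith
  have hinv : (ENNReal.ofReal t)⁻¹ ≠ ⊤ := by simp [h0]
  constructor
  · exact ENNReal.mul_ne_top hinv hfin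
  · rw [hardyAvg, ENNReal.toReal_mul, avgR, ENNReal.toReal_inv, ENNReal.toReal_ofReal
      (le_of_lt ht), div_eq_inv_mul]

lemma orliczExt_hardyAvg_eq (Φ : ℝ → ℝ) {g : ℝ → ℝ} {t : ℝ} (ht : 0 < t)
    (hfin : (∫⁻ s in Set.Ioc (0:ℝ) t, ENNReal.ofReal (g s)) ≠ ⊤) :
    orliczExt Φ (hardyAvg g t) = ENNReal.ofReal (Φ (avgR g t)) := by
  obtain ⟨hne, htr⟩ := hardyAvg_toReal ht hfin
  rw [orliczExt, if_neg hne, htr]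

lemma orliczExt_mono (hΦ : IsOrliczFunction Φ) : Monotone (orliczExt Φ) := by
  intro x y hxy
  rcases eq_or_ne y ⊤ with hy | hy
  · simp [orliczExt, hy]
  · have hx : x ≠ ⊤ := fun h => hy (top_le_iff.1 (h ▸ hxy))
    rw [orliczExt, orliczExt, if_neg hx, if_neg hy]
    exact ENNReal.ofReal_le_ofReal (hΦ.monotoneOn (mem_Ici.2 ENNReal.toReal_nonneg)
      (mem_Ici.2 ENNReal.toReal_nonneg) (ENNReal.toReal_mono hy hxy))

/-- The integral `∫₀^t g` dominates `t ⬝ g t` for antitone `g`. -/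
lemma const_le_lintegral {g : ℝ → ℝ} (hg : AntitoneOn g (Set.Ioi 0)) {t : ℝ} (ht : 0 < t) :
    ENNReal.ofReal (g t) * ENNReal.ofReal t ≤ ∫⁻ s in Set.Ioc (0:ℝ) t, ENNReal.ofReal (g s) := by
  have h : ∫⁻ _ in Set.Ioc (0:ℝ) t, ENNReal.ofReal (g t) = ENNReal.ofReal (g t) * ENNReal.ofReal t := by
    rw [setLIntegral_const, Real.volume_Ioc, sub_zero]
  rw [← h]
  apply lintegral_mono_ae
  filter_upwards [ae_restrict_mem measurableSet_Ioc] with s hs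
  exact ENNReal.ofReal_le_ofReal (hg (mem_Ioi.2 hs.1) (mem_Ioi.2 (lt_of_lt_of_le hs.1 hs.2)) hs.2)

/-- `g t ≤ avgR g t` for antitone nonneg `g`. -/
lemma le_avgR {g : ℝ → ℝ} (hg0 : ∀ s ∈ Set.Ioi (0:ℝ), 0 ≤ g s)
    (hg : AntitoneOn g (Set.Ioi 0)) {t : ℝ} (ht : 0 < t)
    (hfin : (∫⁻ s in Set.Ioc (0:ℝ) t, ENNReal.ofReal (g s)) ≠ ⊤) :
    g t ≤ avgR g t := by
  have h := const_le_lintegral hg ht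
  have h2 : g t * t ≤ (∫⁻ s in Set.Ioc (0:ℝ) t, ENNReal.ofReal (g s)).toReal := by
    have := ENNReal.toReal_mono hfin h
    rwa [ENNReal.toReal_mul, ENNReal.toReal_ofReal (hg0 t (mem_Ioi.2 ht)),
      ENNReal.toReal_ofReal (le_of_lt ht)] at this
  rw [avgR, le_div_iff₀ ht]
  exact h2

/-- Substitution `t ↦ r t` in a lintegral over `Ioc 0 R`. -/
lemma lintegral_scale_Ioc (F : ℝ → ℝ≥0∞) {r : ℝ} (hr : 0 < r) (R : ℝ) :
    ∫⁻ t in Set.Ioc (0:ℝ) R, F (r * t) = ENNReal.ofReal r⁻¹ * ∫⁻ u in Set.Ioc (0:ℝ) (r * R), F u := by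
  set e : ℝ ≃ᵐ ℝ := (Homeomorph.mulLeft₀ r hr.ne').toMeasurableEquiv with he
  have hecoe : ∀ x : ℝ, e x = r * x := fun x => rfl
  have hind : ∀ t : ℝ, (Set.Ioc (0:ℝ) R).indicator (fun t => F (r * t)) t
      = (Set.Ioc (0:ℝ) (r * R)).indicator F (r * t) := by
    intro t
    by_cases h : t ∈ Set.Ioc (0:ℝ) R
    · rw [Set.indicator_of_mem h, Set.indicator_of_mem]
      exact ⟨mul_pos hr h.1, mul_le_mul_of_nonneg_left h.2 hr.le⟩
    · rw [Set.indicator_of_notMem h, Set.indicator_of_notMem]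
      intro hc
      refine h ⟨?_, ?_⟩
      · nlinarith [hc.1]
      · nlinarith [hc.2]
  have hmap : Measure.map (fun x : ℝ => r * x) volume = ENNReal.ofReal |r⁻¹| • volume :=
    Real.map_volume_mul_left hr.ne'
  calc ∫⁻ t in Set.Ioc (0:ℝ) R, F (r * t)
      = ∫⁻ t, (Set.Ioc (0:ℝ) R).indicator (fun t => F (r * t)) t := by
        rw [lintegral_indicator measurableSet_Ioc]
    _ = ∫⁻ t, (Set.Ioc (0:ℝ) (r * R)).indicator F (e t) := by
        apply lintegral_congr; intro t; rw [hind t, hecoe]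
    _ = ∫⁻ x, (Set.Ioc (0:ℝ) (r * R)).indicator F x ∂(Measure.map e volume) :=
        (lintegral_map_equiv _ e).symm
    _ = ENNReal.ofReal r⁻¹ * ∫⁻ u in Set.Ioc (0:ℝ) (r * R), F u := by
        have : Measure.map e volume = ENNReal.ofReal |r⁻¹| • volume := by
          rw [← hmap]; rfl
        rw [this, lintegral_smul_measure, smul_eq_mul, lintegral_indicator measurableSet_Ioc,
          abs_of_pos (inv_pos.2 hr)]

lemma L_split (f : ℝ → ℝ≥0∞) {a b : ℝ} (h0 : 0 ≤ a) (hab : a ≤ b) :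
    ∫⁻ s in Set.Ioc (0:ℝ) b, f s
      = (∫⁻ s in Set.Ioc (0:ℝ) a, f s) + ∫⁻ s in Set.Ioc a b, f s := by
  rw [← lintegral_union measurableSet_Ioc (Set.Ioc_disjoint_Ioc_of_le le_rfl),
    Set.Ioc_union_Ioc_eq_Ioc h0 hab]

lemma tail_le {g : ℝ → ℝ} (hg : AntitoneOn g (Set.Ioi 0)) {a b : ℝ} (ha : 0 < a) (hab : a ≤ b) :
    ∫⁻ s in Set.Ioc a b, ENNReal.ofReal (g s) ≤ ENNReal.ofReal (g a) * ENNReal.ofReal (b - a) := by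
  have h : ∫⁻ _ in Set.Ioc a b, ENNReal.ofReal (g a)
      = ENNReal.ofReal (g a) * ENNReal.ofReal (b - a) := by
    rw [setLIntegral_const, Real.volume_Ioc]
  rw [← h]
  apply lintegral_mono_ae
  filter_upwards [ae_restrict_mem measurableSet_Ioc] with s hs
  exact ENNReal.ofReal_le_ofReal (hg (mem_Ioi.2 ha) (mem_Ioi.2 (lt_trans ha hs.1)) hs.1.le)

lemma L_le_of_bounded {g : ℝ → ℝ} {n : ℝ} (hn : ∀ s ∈ Set.Ioi (0:ℝ), g s ≤ n) {t : ℝ} :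
    ∫⁻ s in Set.Ioc (0:ℝ) t, ENNReal.ofReal (g s) ≤ ENNReal.ofReal n * ENNReal.ofReal t := by
  rcases le_or_gt t 0 with h | h
  · rw [Set.Ioc_eq_empty (by linarith)]
    simp
  · have hc : ∫⁻ _ in Set.Ioc (0:ℝ) t, ENNReal.ofReal n
        = ENNReal.ofReal n * ENNReal.ofReal t := by
      rw [setLIntegral_const, Real.volume_Ioc, sub_zero]
    rw [← hc]
    apply lintegral_mono_ae
    filter_upwards [ae_restrict_mem measurableSet_Ioc] with s hs
    exact ENNReal.ofReal_le_ofReal (hn s (mem_Ioi.2 hs.1))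

lemma avgR_antitoneOn {g : ℝ → ℝ} (hg0 : ∀ s ∈ Set.Ioi (0:ℝ), 0 ≤ g s)
    (hg : AntitoneOn g (Set.Ioi 0))
    (hfin : ∀ t : ℝ, 0 < t → (∫⁻ s in Set.Ioc (0:ℝ) t, ENNReal.ofReal (g s)) ≠ ⊤) :
    AntitoneOn (avgR g) (Set.Ioi 0) := by
  intro t₁ ht₁ t₂ ht₂ h12
  rw [mem_Ioi] at ht₁ ht₂
  have hsplit := L_split (fun s => ENNReal.ofReal (g s)) ht₁.le h12
  have htail := tail_le hg ht₁ h12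
  have hfin1 := hfin t₁ ht₁
  have hfin2 := hfin t₂ ht₂
  set I₁ := (∫⁻ s in Set.Ioc (0:ℝ) t₁, ENNReal.ofReal (g s)).toReal with hI₁
  set I₂ := (∫⁻ s in Set.Ioc (0:ℝ) t₂, ENNReal.ofReal (g s)).toReal with hI₂
  have hIle : I₂ ≤ I₁ + g t₁ * (t₂ - t₁) := by
    have hle : (∫⁻ s in Set.Ioc (0:ℝ) t₂, ENNReal.ofReal (g s))
        ≤ (∫⁻ s in Set.Ioc (0:ℝ) t₁, ENNReal.ofReal (g s))
          + ENNReal.ofReal (g t₁) * ENNReal.ofReal (t₂ - t₁) := by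
      rw [hsplit]; exact add_le_add_right htail _
    have hfinR : (∫⁻ s in Set.Ioc (0:ℝ) t₁, ENNReal.ofReal (g s))
        + ENNReal.ofReal (g t₁) * ENNReal.ofReal (t₂ - t₁) ≠ ⊤ :=
      ENNReal.add_ne_top.2 ⟨hfin1, ENNReal.mul_ne_top ENNReal.ofReal_ne_top ENNReal.ofReal_ne_top⟩
    have := ENNReal.toReal_mono hfinR hle
    rwa [ENNReal.toReal_add hfin1 (ENNReal.mul_ne_top ENNReal.ofReal_ne_top ENNReal.ofReal_ne_top),
      ENNReal.toReal_mul, ENNReal.toReal_ofReal (hg0 t₁ (mem_Ioi.2 ht₁)),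
      ENNReal.toReal_ofReal (by linarith)] at this
  have hg1 : g t₁ ≤ I₁ / t₁ := le_avgR hg0 hg ht₁ hfin1
  have hI₁0 : 0 ≤ I₁ := ENNReal.toReal_nonneg
  have hgt1 : 0 ≤ g t₁ := hg0 t₁ (mem_Ioi.2 ht₁)
  have hmul : g t₁ * t₁ ≤ I₁ := (le_div_iff₀ ht₁).1 hg1
  rw [avgR, avgR, ← hI₁, ← hI₂, div_le_div_iff₀ ht₂ ht₁]
  nlinarith [mul_le_mul_of_nonneg_right hmul (sub_nonneg.2 h12)]

lemma toReal_L_le {g : ℝ → ℝ} (hg0 : ∀ s ∈ Set.Ioi (0:ℝ), 0 ≤ g s)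
    (hg : AntitoneOn g (Set.Ioi 0)) {a b : ℝ} (ha : 0 < a) (hab : a ≤ b)
    (hfina : (∫⁻ s in Set.Ioc (0:ℝ) a, ENNReal.ofReal (g s)) ≠ ⊤) :
    (∫⁻ s in Set.Ioc (0:ℝ) b, ENNReal.ofReal (g s)).toReal
      ≤ (∫⁻ s in Set.Ioc (0:ℝ) a, ENNReal.ofReal (g s)).toReal + g a * (b - a) := by
  have hsplit := L_split (fun s => ENNReal.ofReal (g s)) ha.le hab
  have htail := tail_le hg ha hab
  have hle : (∫⁻ s in Set.Ioc (0:ℝ) b, ENNReal.ofReal (g s))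
      ≤ (∫⁻ s in Set.Ioc (0:ℝ) a, ENNReal.ofReal (g s))
        + ENNReal.ofReal (g a) * ENNReal.ofReal (b - a) := by
    rw [hsplit]; exact add_le_add_right htail _
  have hfinR : (∫⁻ s in Set.Ioc (0:ℝ) a, ENNReal.ofReal (g s))
      + ENNReal.ofReal (g a) * ENNReal.ofReal (b - a) ≠ ⊤ :=
    ENNReal.add_ne_top.2 ⟨hfina, ENNReal.mul_ne_top ENNReal.ofReal_ne_top ENNReal.ofReal_ne_top⟩
  have := ENNReal.toReal_mono hfinR hle
  rwa [ENNReal.toReal_add hfina (ENNReal.mul_ne_top ENNReal.ofReal_ne_top ENNReal.ofReal_ne_top),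
    ENNReal.toReal_mul, ENNReal.toReal_ofReal (hg0 a (mem_Ioi.2 ha)),
    ENNReal.toReal_ofReal (by linarith)] at this

lemma avgR_le_bound {g : ℝ → ℝ} {n : ℝ} (hn0 : 0 ≤ n) (hn : ∀ s ∈ Set.Ioi (0:ℝ), g s ≤ n)
    {t : ℝ} (ht : 0 < t) : avgR g t ≤ n := by
  have h := L_le_of_bounded hn (t := t)
  have hfinR : ENNReal.ofReal n * ENNReal.ofReal t ≠ ⊤ :=
    ENNReal.mul_ne_top ENNReal.ofReal_ne_top ENNReal.ofReal_ne_top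
  have h2 := ENNReal.toReal_mono hfinR h
  rw [ENNReal.toReal_mul, ENNReal.toReal_ofReal hn0, ENNReal.toReal_ofReal ht.le] at h2
  rw [avgR, div_le_iff₀ ht]
  linarith

/-- The key integral recursion bound, for bounded `g`. -/
lemma key_bound (hΦ : IsOrliczFunction Φ) {p ε D r : ℝ}
    (hscale : ∀ l : ℝ, 0 < l → l ≤ ε → ∀ x : ℝ, 0 ≤ x → Φ (l * x) ≤ l ^ p * Φ x)
    (hD1 : 1 ≤ D) (hD : ∀ x : ℝ, 0 ≤ x → Φ (2 * x) ≤ D * Φ x)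
    (hr0 : 0 < r) (hr1 : r < 1) (h2rε : 2 * r ≤ ε) (hrp : (2 * r) ^ p ≤ r)
    {g : ℝ → ℝ} (hg0 : ∀ s ∈ Set.Ioi (0:ℝ), 0 ≤ g s) (hg : AntitoneOn g (Set.Ioi 0))
    {n : ℝ} (hn0 : 0 ≤ n) (hn : ∀ s ∈ Set.Ioi (0:ℝ), g s ≤ n)
    {R : ℝ} (hR : 0 < R) :
    ∫⁻ t in Set.Ioc (0:ℝ) R, ENNReal.ofReal (Φ (avgR g t))
      ≤ ENNReal.ofReal (D / r) * ∫⁻ t in Set.Ioi (0:ℝ), ENNReal.ofReal (Φ (g t)) := by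
  have hfin : ∀ t : ℝ, 0 < t → (∫⁻ s in Set.Ioc (0:ℝ) t, ENNReal.ofReal (g s)) ≠ ⊤ :=
    fun t ht => ne_top_of_le_ne_top
      (ENNReal.mul_ne_top ENNReal.ofReal_ne_top ENNReal.ofReal_ne_top) (L_le_of_bounded hn)
  have h2r0 : 0 < 2 * r := by linarith
  -- pointwise estimate
  have h_point : ∀ t : ℝ, 0 < t →
      Φ (avgR g t) ≤ (2*r)^p/2 * Φ (avgR g (r*t)) + D/2 * Φ (g (r*t)) := by
    intro t ht
    have hrt : 0 < r * t := mul_pos hr0 ht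
    have hrtt : r * t ≤ t := by nlinarith
    set Art := avgR g (r*t) with hArt
    set grt := g (r*t) with hgrt
    have hArt0 : 0 ≤ Art := avgR_nonneg g hrt
    have hgrt0 : 0 ≤ grt := hg0 _ (mem_Ioi.2 hrt)
    have hIle := toReal_L_le hg0 hg hrt hrtt (hfin _ hrt)
    have hIrt : (∫⁻ s in Set.Ioc (0:ℝ) (r*t), ENNReal.ofReal (g s)).toReal = (r*t) * Art := by
      have hne : r * t ≠ 0 := ne_of_gt hrt
      rw [hArt, avgR]
      field_simp
    have hd : avgR g t ≤ r * Art + (1-r) * grt := by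
      rw [avgR, div_le_iff₀ ht]
      rw [hIrt] at hIle
      nlinarith
    have hd0 : 0 ≤ r * Art + (1-r) * grt := by nlinarith
    have hmono : Φ (avgR g t) ≤ Φ (r * Art + (1-r) * grt) :=
      hΦ.monotoneOn (mem_Ici.2 (avgR_nonneg g ht)) (mem_Ici.2 hd0) hd
    have hrw : r * Art + (1-r) * grt = (1/2) * (2*r*Art) + (1/2) * (2*(1-r)*grt) := by ring
    have hconv : Φ ((1/2) * (2*r*Art) + (1/2) * (2*(1-r)*grt))
        ≤ (1/2) * Φ (2*r*Art) + (1/2) * Φ (2*(1-r)*grt) := by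
      have := hΦ.convexOn.2 (mem_Ici.2 (by positivity : (0:ℝ) ≤ 2*r*Art))
        (mem_Ici.2 (by nlinarith : (0:ℝ) ≤ 2*(1-r)*grt))
        (by norm_num : (0:ℝ) ≤ 1/2) (by norm_num : (0:ℝ) ≤ 1/2) (by norm_num)
      simpa [smul_eq_mul] using this
    have hsc : Φ (2*r*Art) ≤ (2*r)^p * Φ Art := by
      exact hscale (2*r) h2r0 h2rε Art hArt0
    have hDb : Φ (2*(1-r)*grt) ≤ D * Φ grt := by
      have h1 : Φ (2*(1-r)*grt) ≤ Φ (2*grt) :=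
        hΦ.monotoneOn (mem_Ici.2 (by nlinarith)) (mem_Ici.2 (by linarith)) (by nlinarith)
      linarith [hD grt hgrt0]
    calc Φ (avgR g t) ≤ Φ (r * Art + (1-r) * grt) := hmono
      _ = Φ ((1/2) * (2*r*Art) + (1/2) * (2*(1-r)*grt)) := by rw [hrw]
      _ ≤ (1/2) * Φ (2*r*Art) + (1/2) * Φ (2*(1-r)*grt) := hconv
      _ ≤ (1/2) * ((2*r)^p * Φ Art) + (1/2) * (D * Φ grt) := by
          apply add_le_add
          · apply mul_le_mul_of_nonneg_left hsc; norm_num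
          · apply mul_le_mul_of_nonneg_left hDb; norm_num
      _ = (2*r)^p/2 * Φ Art + D/2 * Φ grt := by ring
  set S := ∫⁻ t in Set.Ioi (0:ℝ), ENNReal.ofReal (Φ (g t)) with hS
  set J := ∫⁻ t in Set.Ioc (0:ℝ) R, ENNReal.ofReal (Φ (avgR g t)) with hJdef
  have hΦn0 : 0 ≤ Φ n := hΦ.nonneg_s14 hn0
  have hJfin : J ≠ ⊤ := by
    have hc : ∫⁻ _ in Set.Ioc (0:ℝ) R, ENNReal.ofReal (Φ n)
        = ENNReal.ofReal (Φ n) * ENNReal.ofReal R := by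
      rw [setLIntegral_const, Real.volume_Ioc, sub_zero]
    have hb : J ≤ ENNReal.ofReal (Φ n) * ENNReal.ofReal R := by
      rw [hJdef, ← hc]
      apply lintegral_mono_ae
      filter_upwards [ae_restrict_mem measurableSet_Ioc] with t htm
      exact ENNReal.ofReal_le_ofReal (hΦ.monotoneOn (mem_Ici.2 (avgR_nonneg g htm.1))
        (mem_Ici.2 hn0) (avgR_le_bound hn0 hn htm.1))
    exact ne_top_of_le_ne_top (ENNReal.mul_ne_top ENNReal.ofReal_ne_top ENNReal.ofReal_ne_top) hb
  have hmeas1 : AEMeasurable (fun t => ENNReal.ofReal (Φ (avgR g (r * t))))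
      (volume.restrict (Set.Ioc (0:ℝ) R)) := by
    have hanti : AntitoneOn (fun t => ENNReal.ofReal (Φ (avgR g (r * t)))) (Set.Ioi (0:ℝ)) := by
      intro t₁ h1 t₂ h2 h12
      rw [mem_Ioi] at h1 h2
      apply ENNReal.ofReal_le_ofReal
      have ha := avgR_antitoneOn hg0 hg hfin (mem_Ioi.2 (mul_pos hr0 h1))
        (mem_Ioi.2 (mul_pos hr0 h2)) (by nlinarith)
      exact hΦ.monotoneOn (mem_Ici.2 (avgR_nonneg g (mul_pos hr0 h2)))
        (mem_Ici.2 (avgR_nonneg g (mul_pos hr0 h1))) ha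
    exact (aemeasurable_restrict_of_antitoneOn measurableSet_Ioi hanti).mono_measure
      (Measure.restrict_mono Set.Ioc_subset_Ioi_self le_rfl)
  have hstep : J ≤ ENNReal.ofReal ((2*r)^p/2)
        * (∫⁻ t in Set.Ioc (0:ℝ) R, ENNReal.ofReal (Φ (avgR g (r*t))))
      + ENNReal.ofReal (D/2) * ∫⁻ t in Set.Ioc (0:ℝ) R, ENNReal.ofReal (Φ (g (r*t))) := by
    have hmono : J ≤ ∫⁻ t in Set.Ioc (0:ℝ) R,
        (ENNReal.ofReal ((2*r)^p/2) * ENNReal.ofReal (Φ (avgR g (r*t)))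
          + ENNReal.ofReal (D/2) * ENNReal.ofReal (Φ (g (r*t)))) := by
      apply lintegral_mono_ae
      filter_upwards [ae_restrict_mem measurableSet_Ioc] with t htm
      have hrt : 0 < r * t := mul_pos hr0 htm.1
      have hn1 : 0 ≤ (2*r)^p/2 * Φ (avgR g (r*t)) := by
        have := hΦ.nonneg_s14 (avgR_nonneg g hrt)
        have h2 : (0:ℝ) ≤ (2*r)^p := Real.rpow_nonneg (by linarith) p
        positivity
      have hn2 : 0 ≤ D/2 * Φ (g (r*t)) := by
        have := hΦ.nonneg_s14 (hg0 _ (mem_Ioi.2 hrt))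
        positivity
      calc ENNReal.ofReal (Φ (avgR g t))
          ≤ ENNReal.ofReal ((2*r)^p/2 * Φ (avgR g (r*t)) + D/2 * Φ (g (r*t))) :=
            ENNReal.ofReal_le_ofReal (h_point t htm.1)
        _ = _ := by
            have hq : (0:ℝ) ≤ (2*r)^p := Real.rpow_nonneg (by linarith) p
            rw [ENNReal.ofReal_add hn1 hn2,
              ENNReal.ofReal_mul (div_nonneg hq (by norm_num))]
            rw [ENNReal.ofReal_mul (by positivity)]
    refine le_trans hmono (le_of_eq ?_)
    rw [lintegral_add_left' (hmeas1.const_mul _),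
      lintegral_const_mul' _ _ ENNReal.ofReal_ne_top,
      lintegral_const_mul' _ _ ENNReal.ofReal_ne_top]
  have hsub1 : (∫⁻ t in Set.Ioc (0:ℝ) R, ENNReal.ofReal (Φ (avgR g (r*t))))
      = ENNReal.ofReal r⁻¹ * ∫⁻ u in Set.Ioc (0:ℝ) (r*R), ENNReal.ofReal (Φ (avgR g u)) :=
    lintegral_scale_Ioc (fun u => ENNReal.ofReal (Φ (avgR g u))) hr0 R
  have hsub2 : (∫⁻ t in Set.Ioc (0:ℝ) R, ENNReal.ofReal (Φ (g (r*t))))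
      = ENNReal.ofReal r⁻¹ * ∫⁻ u in Set.Ioc (0:ℝ) (r*R), ENNReal.ofReal (Φ (g u)) :=
    lintegral_scale_Ioc (fun u => ENNReal.ofReal (Φ (g u))) hr0 R
  have hle1 : (∫⁻ u in Set.Ioc (0:ℝ) (r*R), ENNReal.ofReal (Φ (avgR g u))) ≤ J :=
    lintegral_mono_set (Set.Ioc_subset_Ioc_right (by nlinarith))
  have hle2 : (∫⁻ u in Set.Ioc (0:ℝ) (r*R), ENNReal.ofReal (Φ (g u))) ≤ S :=
    lintegral_mono_set Set.Ioc_subset_Ioi_self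
  have hc1 : ENNReal.ofReal ((2*r)^p/2) * ENNReal.ofReal r⁻¹ ≤ 2⁻¹ := by
    rw [← ENNReal.ofReal_mul (div_nonneg (Real.rpow_nonneg (by linarith) p) (by norm_num))]
    have hX : (2*r)^p/2 * r⁻¹ ≤ 1/2 := by
      have h := mul_le_mul_of_nonneg_right hrp (inv_nonneg.2 hr0.le)
      rw [mul_inv_cancel₀ hr0.ne'] at h
      have he : (2*r)^p/2 * r⁻¹ = ((2*r)^p * r⁻¹)/2 := by ring
      rw [he]; linarith
    calc ENNReal.ofReal ((2*r)^p/2 * r⁻¹) ≤ ENNReal.ofReal (1/2) :=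
          ENNReal.ofReal_le_ofReal hX
      _ = 2⁻¹ := by
          rw [one_div, ENNReal.ofReal_inv_of_pos two_pos, ENNReal.ofReal_ofNat]
  have hc2 : ENNReal.ofReal (D/2) * ENNReal.ofReal r⁻¹ = ENNReal.ofReal (D/(2*r)) := by
    rw [← ENNReal.ofReal_mul (by positivity)]
    congr 1
    field_simp
  have hJ2 : J ≤ 2⁻¹ * J + ENNReal.ofReal (D/(2*r)) * S := by
    refine le_trans hstep ?_
    rw [hsub1, hsub2]
    calc ENNReal.ofReal ((2*r)^p/2)
          * (ENNReal.ofReal r⁻¹ * ∫⁻ u in Set.Ioc (0:ℝ) (r*R), ENNReal.ofReal (Φ (avgR g u)))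
        + ENNReal.ofReal (D/2)
          * (ENNReal.ofReal r⁻¹ * ∫⁻ u in Set.Ioc (0:ℝ) (r*R), ENNReal.ofReal (Φ (g u)))
        = (ENNReal.ofReal ((2*r)^p/2) * ENNReal.ofReal r⁻¹)
            * (∫⁻ u in Set.Ioc (0:ℝ) (r*R), ENNReal.ofReal (Φ (avgR g u)))
          + (ENNReal.ofReal (D/2) * ENNReal.ofReal r⁻¹)
            * ∫⁻ u in Set.Ioc (0:ℝ) (r*R), ENNReal.ofReal (Φ (g u)) := by ring
      _ ≤ 2⁻¹ * J + ENNReal.ofReal (D/(2*r)) * S := by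
          apply add_le_add
          · exact mul_le_mul' hc1 hle1
          · rw [hc2]; exact mul_le_mul' le_rfl hle2
  have hhalf : J / 2 ≤ ENNReal.ofReal (D/(2*r)) * S := by
    rw [← ENNReal.sub_half hJfin, tsub_le_iff_right]
    calc J ≤ 2⁻¹ * J + ENNReal.ofReal (D/(2*r)) * S := hJ2
      _ = ENNReal.ofReal (D/(2*r)) * S + J / 2 := by
          rw [ENNReal.div_eq_inv_mul]; ring
  calc J = 2 * (J / 2) := (ENNReal.mul_div_cancel two_ne_zero ENNReal.ofNat_ne_top).symm
    _ ≤ 2 * (ENNReal.ofReal (D/(2*r)) * S) := mul_le_mul_right hhalf 2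
    _ = ENNReal.ofReal (D/r) * S := by
        have hre : (2:ℝ) * (D/(2*r)) = D / r := by
          field_simp
        rw [← mul_assoc, show (2:ℝ≥0∞) = ENNReal.ofReal 2 from (ENNReal.ofReal_ofNat 2).symm,
          ← ENNReal.ofReal_mul (by norm_num), hre]

lemma left_ineq (hΦ : IsOrliczFunction Φ) {g : ℝ → ℝ}
    (hg0 : ∀ t ∈ Set.Ioi (0:ℝ), 0 ≤ g t) (hg : AntitoneOn g (Set.Ioi 0)) :
    (∫⁻ t in Set.Ioi (0:ℝ), ENNReal.ofReal (Φ (g t)))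
      ≤ ∫⁻ t in Set.Ioi (0:ℝ), orliczExt Φ (hardyAvg g t) := by
  apply lintegral_mono_ae
  filter_upwards [ae_restrict_mem measurableSet_Ioi] with t ht
  rw [mem_Ioi] at ht
  rcases eq_or_ne (∫⁻ s in Set.Ioc (0:ℝ) t, ENNReal.ofReal (g s)) ⊤ with hfin | hfin
  · have h : hardyAvg g t = ⊤ := by
      rw [hardyAvg, hfin, ENNReal.mul_top (ENNReal.inv_ne_zero.2 ENNReal.ofReal_ne_top)]
    rw [h, orliczExt, if_pos rfl]
    exact le_top
  · rw [orliczExt_hardyAvg_eq Φ ht hfin]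
    have hle := le_avgR hg0 hg ht hfin
    exact ENNReal.ofReal_le_ofReal (hΦ.monotoneOn (mem_Ici.2 (hg0 t (mem_Ioi.2 ht)))
      (mem_Ici.2 ((hg0 t (mem_Ioi.2 ht)).trans hle)) hle)


/-- the Φ-moment Hardy inequality for nonincreasing nonnegative
functions when `1 < p_Φ ≤ q_Φ < ∞`:
`∫ Φ(g) ≤ ∫ Φ(t⁻¹∫₀^t g) ≤ C ∫ Φ(g)`, the inequalities holding in `[0,∞]`. -/
theorem statement14 (Φ : ℝ → ℝ) (hΦ : IsOrliczFunction Φ) (pΦ qΦ : ℝ)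
    (hMO : HasMatuzewskaOrliczIndices Φ pΦ qΦ) (h1 : 1 < pΦ) (hpΦqΦ : pΦ ≤ qΦ) :
    ∃ C : ℝ, 0 < C ∧ ∀ g : ℝ → ℝ,
      (∀ t ∈ Set.Ioi (0:ℝ), 0 ≤ g t) → AntitoneOn g (Set.Ioi 0) →
      (∫⁻ t in Set.Ioi (0:ℝ), ENNReal.ofReal (Φ (g t))) ≤
        (∫⁻ t in Set.Ioi (0:ℝ), orliczExt Φ (hardyAvg g t)) ∧
      (∫⁻ t in Set.Ioi (0:ℝ), orliczExt Φ (hardyAvg g t)) ≤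
        ENNReal.ofReal C * ∫⁻ t in Set.Ioi (0:ℝ), ENNReal.ofReal (Φ (g t)) := by
  have hpos := orlicz_pos hΦ hMO h1 hpΦqΦ
  obtain ⟨p, hp1, ε, hε0, hε12, hscale⟩ := exists_p hΦ hMO h1 hpΦqΦ
  obtain ⟨D, hD1, hD⟩ := exists_D hΦ hMO h1 hpΦqΦ
  -- choose the contraction ratio r
  set r : ℝ := min (ε/2) ((2:ℝ) ^ (-(p/(p-1)))) with hrdef
  have hp0 : 0 < p - 1 := by linarith
  have hr0 : 0 < r := lt_min (by linarith) (Real.rpow_pos_of_pos two_pos _)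
  have hrε : r ≤ ε/2 := min_le_left _ _
  have hr1 : r < 1 := lt_of_le_of_lt hrε (by linarith)
  have h2rε : 2 * r ≤ ε := by linarith
  have hrp : (2 * r) ^ p ≤ r := by
    have hr2 : r ≤ (2:ℝ) ^ (-(p/(p-1))) := min_le_right _ _
    have h1' : r ^ (p-1) ≤ ((2:ℝ) ^ (-(p/(p-1)))) ^ (p-1) :=
      Real.rpow_le_rpow hr0.le hr2 hp0.le
    have h2' : ((2:ℝ) ^ (-(p/(p-1)))) ^ (p-1) = (2:ℝ) ^ (-p) := by
      rw [← Real.rpow_mul (by norm_num : (0:ℝ) ≤ 2)]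
      congr 1
      field_simp
    have h3' : (2*r) ^ p = 2 ^ p * (r ^ (p-1) * r) := by
      rw [Real.mul_rpow (by norm_num) hr0.le]
      rw [show r ^ (p-1) * r = r ^ (p-1) * r ^ (1:ℝ) by rw [Real.rpow_one],
        ← Real.rpow_add hr0]
      norm_num
    calc (2*r) ^ p = 2 ^ p * (r ^ (p-1) * r) := h3'
      _ ≤ 2 ^ p * ((2:ℝ) ^ (-p) * r) := by
          apply mul_le_mul_of_nonneg_left _ (Real.rpow_nonneg (by norm_num) p)
          exact mul_le_mul_of_nonneg_right (h1'.trans_eq h2') hr0.le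
      _ = r := by
          rw [← mul_assoc, ← Real.rpow_add two_pos]
          simp
  refine ⟨D / r, div_pos (by linarith) hr0, ?_⟩
  intro g hg0 hg
  refine ⟨left_ineq hΦ hg0 hg, ?_⟩
  set S := ∫⁻ t in Set.Ioi (0:ℝ), ENNReal.ofReal (Φ (g t)) with hSdef
  rcases eq_or_ne S ⊤ with hStop | hSfin
  · rw [hStop, ENNReal.mul_top (by simp [ENNReal.ofReal_eq_zero]; positivity)]
    exact le_top
  -- Finite case.
  have hΦ1 : 0 < Φ 1 := hpos 1 one_pos
  -- local integrability of g
  have hloc : ∀ t : ℝ, 0 < t → (∫⁻ s in Set.Ioc (0:ℝ) t, ENNReal.ofReal (g s)) ≠ ⊤ := by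
    intro t ht
    have hpt : ∀ s ∈ Set.Ioc (0:ℝ) t, ENNReal.ofReal (g s)
        ≤ 1 + ENNReal.ofReal (Φ (g s)) * (ENNReal.ofReal (Φ 1))⁻¹ := by
      intro s hs
      rcases le_or_gt (g s) 1 with hgs | hgs
      · refine le_trans ?_ (self_le_add_right _ _)
        simpa using ENNReal.ofReal_le_ofReal hgs
      · have hgs0 : 0 < g s := by linarith
        have hsc := hΦ.scale_le (l := 1 / g s) (x := g s) (by positivity)
          (by rw [div_le_one hgs0]; linarith) hgs0.le
        rw [one_div, inv_mul_cancel₀ hgs0.ne'] at hsc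
        have hgsle : g s ≤ Φ (g s) / Φ 1 := by
          rw [le_div_iff₀ hΦ1]
          have h2 := mul_le_mul_of_nonneg_left hsc hgs0.le
          rw [← mul_assoc, mul_inv_cancel₀ hgs0.ne', one_mul] at h2
          linarith
        calc ENNReal.ofReal (g s) ≤ ENNReal.ofReal (Φ (g s) / Φ 1) :=
            ENNReal.ofReal_le_ofReal hgsle
          _ = ENNReal.ofReal (Φ (g s)) * (ENNReal.ofReal (Φ 1))⁻¹ := by
            rw [ENNReal.ofReal_div_of_pos hΦ1, div_eq_mul_inv]
          _ ≤ _ := le_add_self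
    have hb : (∫⁻ s in Set.Ioc (0:ℝ) t, ENNReal.ofReal (g s))
        ≤ ENNReal.ofReal t + (∫⁻ s in Set.Ioi (0:ℝ), ENNReal.ofReal (Φ (g s)))
            * (ENNReal.ofReal (Φ 1))⁻¹ := by
      calc (∫⁻ s in Set.Ioc (0:ℝ) t, ENNReal.ofReal (g s))
          ≤ ∫⁻ s in Set.Ioc (0:ℝ) t,
              (1 + ENNReal.ofReal (Φ (g s)) * (ENNReal.ofReal (Φ 1))⁻¹) := by
            apply lintegral_mono_ae
            filter_upwards [ae_restrict_mem measurableSet_Ioc] with s hs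
            exact hpt s hs
        _ = (∫⁻ _ in Set.Ioc (0:ℝ) t, (1:ℝ≥0∞))
            + ∫⁻ s in Set.Ioc (0:ℝ) t, ENNReal.ofReal (Φ (g s)) * (ENNReal.ofReal (Φ 1))⁻¹ :=
            lintegral_add_left measurable_const _
        _ ≤ ENNReal.ofReal t + (∫⁻ s in Set.Ioi (0:ℝ), ENNReal.ofReal (Φ (g s)))
            * (ENNReal.ofReal (Φ 1))⁻¹ := by
            apply add_le_add
            · rw [setLIntegral_const, one_mul, Real.volume_Ioc, sub_zero]
            · rw [lintegral_mul_const' _ _ (by simpa using hΦ1 : (ENNReal.ofReal (Φ 1))⁻¹ ≠ ⊤)]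
              exact mul_le_mul' (lintegral_mono_set Set.Ioc_subset_Ioi_self) le_rfl
    refine ne_top_of_le_ne_top ?_ hb
    exact ENNReal.add_ne_top.2 ⟨ENNReal.ofReal_ne_top,
      ENNReal.mul_ne_top hSfin (by simpa using hΦ1)⟩
  -- truncations
  set gtr : ℕ → ℝ → ℝ := fun n s => min (g s) n with hgtr
  have hgtr0 : ∀ n : ℕ, ∀ s ∈ Set.Ioi (0:ℝ), 0 ≤ gtr n s :=
    fun n s hs => le_min (hg0 s hs) (Nat.cast_nonneg n)
  have hgtranti : ∀ n : ℕ, AntitoneOn (gtr n) (Set.Ioi 0) :=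
    fun n s hs t ht hst => min_le_min (hg hs ht hst) le_rfl
  have hgtrbd : ∀ n : ℕ, ∀ s ∈ Set.Ioi (0:ℝ), gtr n s ≤ (n:ℝ) :=
    fun n s _ => min_le_right _ _
  have hgtrfin : ∀ n : ℕ, ∀ t : ℝ, 0 < t →
      (∫⁻ s in Set.Ioc (0:ℝ) t, ENNReal.ofReal (gtr n s)) ≠ ⊤ :=
    fun n t ht => ne_top_of_le_ne_top
      (ENNReal.mul_ne_top ENNReal.ofReal_ne_top ENNReal.ofReal_ne_top)
      (L_le_of_bounded (hgtrbd n))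
  -- the truncated Φ-integral is dominated by S
  have htrS : ∀ n : ℕ, (∫⁻ t in Set.Ioi (0:ℝ), ENNReal.ofReal (Φ (gtr n t))) ≤ S := by
    intro n
    rw [hSdef]
    apply lintegral_mono_ae
    filter_upwards [ae_restrict_mem measurableSet_Ioi] with t ht
    exact ENNReal.ofReal_le_ofReal (hΦ.monotoneOn (mem_Ici.2 (hgtr0 n t ht))
      (mem_Ici.2 (hg0 t ht)) (min_le_left _ _))
  -- supremum of truncated integrals over Ioc 0 t
  have hsupL : ∀ t : ℝ, 0 < t →
      (⨆ n : ℕ, ∫⁻ s in Set.Ioc (0:ℝ) t, ENNReal.ofReal (gtr n s))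
        = ∫⁻ s in Set.Ioc (0:ℝ) t, ENNReal.ofReal (g s) := by
    intro t ht
    rw [← lintegral_iSup']
    · apply lintegral_congr
      intro s
      apply le_antisymm
      · exact iSup_le fun n => ENNReal.ofReal_le_ofReal (min_le_left _ _)
      · have hmin : min (g s) ((⌈g s⌉₊ : ℕ) : ℝ) = g s := min_eq_left (Nat.le_ceil _)
        calc ENNReal.ofReal (g s) = ENNReal.ofReal (gtr ⌈g s⌉₊ s) := by rw [hgtr]; simp [hmin]
          _ ≤ ⨆ n : ℕ, ENNReal.ofReal (gtr n s) := le_iSup (fun n => ENNReal.ofReal (gtr n s)) _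
    · intro n
      have hanti : AntitoneOn (fun s => ENNReal.ofReal (gtr n s)) (Set.Ioi 0) :=
        fun s hs u hu hsu => ENNReal.ofReal_le_ofReal (hgtranti n hs hu hsu)
      exact (aemeasurable_restrict_of_antitoneOn measurableSet_Ioi hanti).mono_measure
        (Measure.restrict_mono Set.Ioc_subset_Ioi_self le_rfl)
    · apply Eventually.of_forall
      intro s m k hmk
      exact ENNReal.ofReal_le_ofReal (min_le_min le_rfl (Nat.cast_le.2 hmk))
  -- pointwise convergence of the extended averages
  have hsup_point : ∀ t : ℝ, 0 < t →
      (⨆ n : ℕ, orliczExt Φ (hardyAvg (gtr n) t)) = orliczExt Φ (hardyAvg g t) := by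
    intro t ht
    have hmono_n : Monotone (fun n : ℕ => hardyAvg (gtr n) t) := by
      intro m k hmk
      exact mul_le_mul' le_rfl (lintegral_mono fun s =>
        ENNReal.ofReal_le_ofReal (min_le_min le_rfl (Nat.cast_le.2 hmk)))
    have hsupH : (⨆ n : ℕ, hardyAvg (gtr n) t) = hardyAvg g t := by
      simp only [hardyAvg]
      rw [← ENNReal.mul_iSup, hsupL t ht]
    have hfin' : hardyAvg g t ≠ ⊤ :=
      ENNReal.mul_ne_top (ENNReal.inv_ne_top.2 fun h0 => absurd (ENNReal.ofReal_eq_zero.1 h0) (not_le.2 ht)) (hloc t ht)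
    have hfinn : ∀ n : ℕ, hardyAvg (gtr n) t ≠ ⊤ :=
      fun n => ne_top_of_le_ne_top hfin' (hsupH ▸ le_iSup (fun n => hardyAvg (gtr n) t) n)
    have htend : Tendsto (fun n : ℕ => hardyAvg (gtr n) t) atTop (nhds (hardyAvg g t)) :=
      hsupH ▸ tendsto_atTop_iSup hmono_n
    have htoReal : Tendsto (fun n : ℕ => (hardyAvg (gtr n) t).toReal) atTop
        (nhds ((hardyAvg g t).toReal)) := (ENNReal.tendsto_toReal hfin').comp htend
    have hΦt : Tendsto (fun n : ℕ => Φ ((hardyAvg (gtr n) t).toReal)) atTop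
        (nhds (Φ ((hardyAvg g t).toReal))) :=
      ((hΦ.continuousOn _ (mem_Ici.2 ENNReal.toReal_nonneg)).tendsto).comp
        (tendsto_nhdsWithin_of_tendsto_nhds_of_eventually_within _ htoReal
          (Eventually.of_forall fun n => mem_Ici.2 ENNReal.toReal_nonneg))
    have htendo : Tendsto (fun n : ℕ => orliczExt Φ (hardyAvg (gtr n) t)) atTop
        (nhds (orliczExt Φ (hardyAvg g t))) := by
      have hrw : ∀ n : ℕ, orliczExt Φ (hardyAvg (gtr n) t)
          = ENNReal.ofReal (Φ ((hardyAvg (gtr n) t).toReal)) :=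
        fun n => by rw [orliczExt, if_neg (hfinn n)]
      rw [orliczExt, if_neg hfin']
      exact ((ENNReal.continuous_ofReal.tendsto _).comp hΦt).congr fun n => (hrw n).symm
    exact iSup_eq_of_tendsto (fun m k hmk => orliczExt_mono hΦ (hmono_n hmk)) htendo
  -- integral over each Ioc 0 k
  have hIoc : ∀ k : ℕ, (∫⁻ t in Set.Ioc (0:ℝ) (k:ℝ), orliczExt Φ (hardyAvg g t))
      ≤ ENNReal.ofReal (D / r) * S := by
    intro k
    rcases Nat.eq_zero_or_pos k with hk0 | hkpos
    · simp [hk0]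
    have hkR : (0:ℝ) < k := by exact_mod_cast hkpos
    -- a.e.-measurability of the truncated integrands on Ioc 0 k
    have hmeasn : ∀ n : ℕ, AEMeasurable (fun t => orliczExt Φ (hardyAvg (gtr n) t))
        (volume.restrict (Set.Ioc (0:ℝ) (k:ℝ))) := by
      intro n
      have hanti : AntitoneOn (fun t => ENNReal.ofReal (Φ (avgR (gtr n) t))) (Set.Ioi 0) := by
        intro t₁ h1 t₂ h2 h12
        apply ENNReal.ofReal_le_ofReal
        have ha := avgR_antitoneOn (hgtr0 n) (hgtranti n) (hgtrfin n) h1 h2 h12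
        exact hΦ.monotoneOn (mem_Ici.2 (avgR_nonneg _ (mem_Ioi.1 h2)))
          (mem_Ici.2 (avgR_nonneg _ (mem_Ioi.1 h1))) ha
      have hm : AEMeasurable (fun t => ENNReal.ofReal (Φ (avgR (gtr n) t)))
          (volume.restrict (Set.Ioc (0:ℝ) (k:ℝ))) :=
        (aemeasurable_restrict_of_antitoneOn measurableSet_Ioi hanti).mono_measure
          (Measure.restrict_mono Set.Ioc_subset_Ioi_self le_rfl)
      apply hm.congr
      filter_upwards [ae_restrict_mem measurableSet_Ioc] with t htm
      exact (orliczExt_hardyAvg_eq Φ htm.1 (hgtrfin n t htm.1)).symm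
    have hsupae : ∀ᵐ t ∂(volume.restrict (Set.Ioc (0:ℝ) (k:ℝ))),
        orliczExt Φ (hardyAvg g t) = ⨆ n : ℕ, orliczExt Φ (hardyAvg (gtr n) t) := by
      filter_upwards [ae_restrict_mem measurableSet_Ioc] with t htm
      exact (hsup_point t htm.1).symm
    have hmonoae : ∀ᵐ t ∂(volume.restrict (Set.Ioc (0:ℝ) (k:ℝ))),
        Monotone fun n : ℕ => orliczExt Φ (hardyAvg (gtr n) t) := by
      apply Eventually.of_forall
      intro t m j hmj
      exact orliczExt_mono hΦ (mul_le_mul' le_rfl (lintegral_mono fun s =>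
        ENNReal.ofReal_le_ofReal (min_le_min le_rfl (Nat.cast_le.2 hmj))))
    calc (∫⁻ t in Set.Ioc (0:ℝ) (k:ℝ), orliczExt Φ (hardyAvg g t))
        = ∫⁻ t in Set.Ioc (0:ℝ) (k:ℝ), ⨆ n : ℕ, orliczExt Φ (hardyAvg (gtr n) t) :=
          lintegral_congr_ae hsupae
      _ = ⨆ n : ℕ, ∫⁻ t in Set.Ioc (0:ℝ) (k:ℝ), orliczExt Φ (hardyAvg (gtr n) t) :=
          lintegral_iSup' hmeasn hmonoae
      _ ≤ ENNReal.ofReal (D / r) * S := by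
          apply iSup_le
          intro n
          have heq : (∫⁻ t in Set.Ioc (0:ℝ) (k:ℝ), orliczExt Φ (hardyAvg (gtr n) t))
              = ∫⁻ t in Set.Ioc (0:ℝ) (k:ℝ), ENNReal.ofReal (Φ (avgR (gtr n) t)) := by
            apply lintegral_congr_ae
            filter_upwards [ae_restrict_mem measurableSet_Ioc] with t htm
            exact orliczExt_hardyAvg_eq Φ htm.1 (hgtrfin n t htm.1)
          rw [heq]
          calc (∫⁻ t in Set.Ioc (0:ℝ) (k:ℝ), ENNReal.ofReal (Φ (avgR (gtr n) t)))
              ≤ ENNReal.ofReal (D / r)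
                  * ∫⁻ t in Set.Ioi (0:ℝ), ENNReal.ofReal (Φ (gtr n t)) :=
                key_bound hΦ hscale hD1 hD hr0 hr1 h2rε hrp (hgtr0 n) (hgtranti n)
                  (Nat.cast_nonneg n) (hgtrbd n) hkR
            _ ≤ ENNReal.ofReal (D / r) * S := mul_le_mul' le_rfl (htrS n)
  -- pass to the limit k → ∞
  have hmeasf : AEMeasurable (fun t => orliczExt Φ (hardyAvg g t))
      (volume.restrict (Set.Ioi (0:ℝ))) := by
    have hanti : AntitoneOn (fun t => ENNReal.ofReal (Φ (avgR g t))) (Set.Ioi 0) := by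
      intro t₁ h1 t₂ h2 h12
      apply ENNReal.ofReal_le_ofReal
      have ha := avgR_antitoneOn hg0 hg hloc h1 h2 h12
      exact hΦ.monotoneOn (mem_Ici.2 (avgR_nonneg _ (mem_Ioi.1 h2)))
        (mem_Ici.2 (avgR_nonneg _ (mem_Ioi.1 h1))) ha
    apply (aemeasurable_restrict_of_antitoneOn measurableSet_Ioi hanti).congr
    filter_upwards [ae_restrict_mem measurableSet_Ioi] with t htm
    exact (orliczExt_hardyAvg_eq Φ (mem_Ioi.1 htm) (hloc t (mem_Ioi.1 htm))).symm
  have hcut : (∫⁻ t in Set.Ioi (0:ℝ), orliczExt Φ (hardyAvg g t))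
      = ⨆ k : ℕ, ∫⁻ t in Set.Ioc (0:ℝ) (k:ℝ), orliczExt Φ (hardyAvg g t) := by
    have hind : ∀ k : ℕ, (∫⁻ t in Set.Ioi (0:ℝ),
        (Set.Ioc (0:ℝ) (k:ℝ)).indicator (fun t => orliczExt Φ (hardyAvg g t)) t)
        = ∫⁻ t in Set.Ioc (0:ℝ) (k:ℝ), orliczExt Φ (hardyAvg g t) := by
      intro k
      rw [lintegral_indicator measurableSet_Ioc, Measure.restrict_restrict measurableSet_Ioc,
        Set.inter_eq_left.2 Set.Ioc_subset_Ioi_self]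
    have hptsup : ∀ t ∈ Set.Ioi (0:ℝ),
        (⨆ k : ℕ, (Set.Ioc (0:ℝ) (k:ℝ)).indicator (fun t => orliczExt Φ (hardyAvg g t)) t)
          = orliczExt Φ (hardyAvg g t) := by
      intro t ht
      rw [mem_Ioi] at ht
      apply le_antisymm
      · exact iSup_le fun k => Set.indicator_le_self _ _ t
      · have hmem : t ∈ Set.Ioc (0:ℝ) ((⌈t⌉₊ : ℕ) : ℝ) := ⟨ht, Nat.le_ceil t⟩
        calc orliczExt Φ (hardyAvg g t)
            = (Set.Ioc (0:ℝ) ((⌈t⌉₊ : ℕ) : ℝ)).indicator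
                (fun t => orliczExt Φ (hardyAvg g t)) t :=
                (Set.indicator_of_mem hmem (fun t => orliczExt Φ (hardyAvg g t))).symm
          _ ≤ _ := le_iSup (fun k : ℕ => (Set.Ioc (0:ℝ) (k:ℝ)).indicator
                (fun t => orliczExt Φ (hardyAvg g t)) t) ⌈t⌉₊
    calc (∫⁻ t in Set.Ioi (0:ℝ), orliczExt Φ (hardyAvg g t))
        = ∫⁻ t in Set.Ioi (0:ℝ), ⨆ k : ℕ,
            (Set.Ioc (0:ℝ) (k:ℝ)).indicator (fun t => orliczExt Φ (hardyAvg g t)) t := by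
          apply lintegral_congr_ae
          filter_upwards [ae_restrict_mem measurableSet_Ioi] with t htm
          exact (hptsup t htm).symm
      _ = ⨆ k : ℕ, ∫⁻ t in Set.Ioi (0:ℝ),
            (Set.Ioc (0:ℝ) (k:ℝ)).indicator (fun t => orliczExt Φ (hardyAvg g t)) t := by
          apply lintegral_iSup' (fun k => hmeasf.indicator measurableSet_Ioc)
          apply Eventually.of_forall
          intro t m j hmj
          exact Pi.le_def.1 (Set.indicator_le_indicator_of_subset
            (Set.Ioc_subset_Ioc_right (by exact_mod_cast hmj)) (fun a => zero_le)) t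
      _ = ⨆ k : ℕ, ∫⁻ t in Set.Ioc (0:ℝ) (k:ℝ), orliczExt Φ (hardyAvg g t) := by
          exact iSup_congr hind
  rw [hcut]
  exact iSup_le hIoc
end
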